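/- arXiv:1703.03203 — 7 statements merged into one kernel-verified Lean document; each statement's English description precedes it below -/
import Mathlib

section
/- Let N ∈ ℕ and let F₁ : [0, 1] → ℝ be a function that can be represented as F₁(x) = c₁(1-x)^{1/2} + c₂(1-x)^{3/2} + F̃₁(x), where c₁, c₂ ∈ ℝ and F̃₁ is twice continuously differentiable on [0, 1]. Then there exists a constant L₁ > 0 (depending on F₁ and N) such that for all n ≥ N, |Rₙ| ≤ L₁ / n^{3/2}. -/
open MeasureTheory Set

section RiemannAux
open intervalIntegral

-- Trapezoid error via second derivative bound
lemma trap_err (f f' f'' : ℝ → ℝ) (a b M : ℝ) (hab : a ≤ b)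
    (hf : ∀ x ∈ Icc a b, HasDerivWithinAt f (f' x) (Icc a b) x)
    (hf' : ∀ x ∈ Icc a b, HasDerivWithinAt f' (f'' x) (Icc a b) x)
    (hM : ∀ x ∈ Icc a b, |f'' x| ≤ M) :
    |(∫ x in a..b, f x) - ((b-a)/2)*(f a + f b)| ≤ M * (b-a)^3 / 12 := by
  set m := (a+b)/2 with hm
  have hmmem : m ∈ Icc a b := by constructor <;> (rw [hm]; linarith)
  have hcf : ContinuousOn f (Icc a b) := fun x hx => (hf x hx).continuousWithinAt
  have hcf' : ContinuousOn f' (Icc a b) := fun x hx => (hf' x hx).continuousWithinAt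
  have hMnn : 0 ≤ M := le_trans (abs_nonneg _) (hM m hmmem)
  have hcms : ContinuousOn (fun s : ℝ => m - s) (Icc a b) :=
    continuousOn_const.sub continuousOn_id
  have hint1 : IntervalIntegrable (fun s => f' s * (m - s)) volume a b :=
    (hcf'.mul hcms).intervalIntegrable_of_Icc hab
  have hint2 : IntervalIntegrable f volume a b := hcf.intervalIntegrable_of_Icc hab
  have hint3 : IntervalIntegrable (fun s : ℝ => f' m * (m - s)) volume a b :=
    (continuousOn_const.mul hcms).intervalIntegrable_of_Icc hab
  have key : (∫ s in a..b, (f' s * (m - s) - f s)) = f b * (m - b) - f a * (m - a) := by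
    apply integral_eq_sub_of_hasDeriv_right_of_le hab
    · exact hcf.mul hcms
    · intro x hx
      have hx' : x ∈ Icc a b := Ioo_subset_Icc_self hx
      have h1 : HasDerivAt f (f' x) x :=
        (hf x hx').hasDerivAt (Icc_mem_nhds hx.1 hx.2)
      have hlin : HasDerivAt (fun s : ℝ => m - s) (-1) x := by
        simpa using (hasDerivAt_id x).const_sub m
      have h2 := h1.mul hlin
      have : HasDerivAt (fun s => f s * (m - s)) (f' x * (m - x) - f x) x := by
        exact h2.congr_deriv (by ring)
      exact this.hasDerivWithinAt
    · exact hint1.sub hint2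
  have split : (∫ s in a..b, f' s * (m - s)) - (∫ s in a..b, f s)
      = f b * (m - b) - f a * (m - a) := by
    rw [← integral_sub hint1 hint2]; exact key
  have E_eq : (∫ x in a..b, f x) - ((b-a)/2)*(f a + f b)
      = ∫ s in a..b, f' s * (m - s) := by
    have : f b * (m - b) - f a * (m - a) = -((b-a)/2)*(f a + f b) := by
      rw [hm]; ring
    linarith [split, this]
  have hzero : (∫ s in a..b, (f' m * (m - s))) = 0 := by
    rw [intervalIntegral.integral_const_mul]
    have : (∫ s in a..b, (m - s)) = 0 := by
      rw [intervalIntegral.integral_sub intervalIntegrable_const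
        intervalIntegral.intervalIntegrable_id]
      simp [integral_id, hm]
      ring
    rw [this]; ring
  have E_eq2 : (∫ x in a..b, f x) - ((b-a)/2)*(f a + f b)
      = ∫ s in a..b, (f' s - f' m) * (m - s) := by
    rw [E_eq, intervalIntegral.integral_congr
      (g := fun s => f' s * (m - s) - f' m * (m - s)) (fun s _ => (sub_mul _ _ _)),
      integral_sub hint1 hint3, hzero, sub_zero]
  -- pointwise bound: |(f' s - f' m)(m - s)| ≤ M * (s - m)^2
  have lip : ∀ s ∈ Icc a b, |f' s - f' m| ≤ M * |s - m| := by
    intro s hs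
    have := Convex.norm_image_sub_le_of_norm_hasDerivWithin_le
      (f := f') (f' := f'') (C := M) (fun x hx => hf' x hx)
      (fun x hx => by simpa [Real.norm_eq_abs] using hM x hx)
      (convex_Icc a b) hmmem hs
    simpa [Real.norm_eq_abs] using this
  rw [E_eq2]
  have hcg : ContinuousOn (fun s => (f' s - f' m) * (m - s)) (Icc a b) :=
    ((hcf'.sub continuousOn_const).mul hcms)
  have hintg : IntervalIntegrable (fun s => (f' s - f' m) * (m - s)) volume a b :=
    hcg.intervalIntegrable_of_Icc hab
  have hintq : IntervalIntegrable (fun s : ℝ => M * (s - m)^2) volume a b :=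
    (Continuous.intervalIntegrable (by continuity) a b)
  have hb1 : |∫ s in a..b, (f' s - f' m) * (m - s)|
      ≤ ∫ s in a..b, M * (s - m)^2 := by
    refine le_trans (intervalIntegral.abs_integral_le_integral_abs hab) ?_
    apply intervalIntegral.integral_mono_on hab
      (hintg.abs) hintq
    intro s hs
    rw [abs_mul]
    have h1 := lip s hs
    have h2 : |m - s| = |s - m| := abs_sub_comm m s
    calc |f' s - f' m| * |m - s| ≤ (M * |s - m|) * |s - m| := by
          rw [h2]; exact mul_le_mul_of_nonneg_right h1 (abs_nonneg _)
      _ = M * (s - m)^2 := by rw [mul_assoc, ← abs_mul, ← sq, abs_sq]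
  have hb2 : (∫ s in a..b, M * (s - m)^2) = M * (b-a)^3 / 12 := by
    rw [intervalIntegral.integral_const_mul]
    have : (∫ s in a..b, (s - m)^2) = ((b-m)^3 - (a-m)^3)/3 := by
      rw [intervalIntegral.integral_comp_sub_right (fun x => x^2) m]
      simp [integral_pow]
      ring
    rw [this, hm]; ring
  calc |∫ s in a..b, (f' s - f' m) * (m - s)| ≤ ∫ s in a..b, M * (s - m)^2 := hb1
    _ = M * (b-a)^3/12 := hb2

lemma trap_err_anti (f : ℝ → ℝ) (a b : ℝ) (hab : a ≤ b)
    (hf : AntitoneOn f (Icc a b)) :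
    |(∫ x in a..b, f x) - ((b-a)/2)*(f a + f b)| ≤ (b-a) * (f a - f b) := by
  have hmema : a ∈ Icc a b := ⟨le_refl a, hab⟩
  have hmemb : b ∈ Icc a b := ⟨hab, le_refl b⟩
  have hba : f b ≤ f a := hf hmema hmemb hab
  have hint : IntervalIntegrable f volume a b := by
    apply AntitoneOn.intervalIntegrable
    rwa [uIcc_of_le hab]
  have h1 : (∫ x in a..b, f x) ≤ (b - a) * f a := by
    have := intervalIntegral.integral_mono_on hab hint intervalIntegrable_const
      (fun x hx => hf hmema hx hx.1)
    simpa using this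
  have h2 : (b - a) * f b ≤ ∫ x in a..b, f x := by
    have := intervalIntegral.integral_mono_on hab intervalIntegrable_const hint
      (fun x hx => hf hx hmemb hx.2)
    simpa using this
  rw [abs_le]
  constructor <;> nlinarith [sub_nonneg.2 hab]

lemma sum_inv32 : ∀ n : ℕ, ∑ j ∈ Finset.Icc 1 n, (Real.sqrt j ^ 3)⁻¹ ≤ 3 - 2 * (Real.sqrt n)⁻¹
  | 0 => by simp
  | 1 => by norm_num
  | (n+2) => by
    have ih := sum_inv32 (n+1)
    rw [Finset.sum_Icc_succ_top (by omega)]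
    have hstep : (Real.sqrt (n+2) ^ 3)⁻¹ ≤ 2 * (Real.sqrt (n+1))⁻¹ - 2 * (Real.sqrt (n+2))⁻¹ := by
      set x := Real.sqrt (n+1) with hx
      set y := Real.sqrt (n+2) with hy
      have hx2 : x^2 = (n:ℝ)+1 := by
        rw [hx]; exact Real.sq_sqrt (by positivity)
      have hy2 : y^2 = (n:ℝ)+2 := by
        rw [hy]; exact Real.sq_sqrt (by positivity)
      have hxpos : 0 < x := by rw [hx]; positivity
      have hypos : 0 < y := by rw [hy]; positivity
      have hxy : x ≤ y := by rw [hx, hy]; exact Real.sqrt_le_sqrt (by norm_num)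
      have key : 2*x⁻¹ - 2*y⁻¹ - (y^3)⁻¹ = (2*y^3 - 2*x*y^2 - x)/(x*y^3) := by
        field_simp
      have hnum : 0 ≤ 2*y^3 - 2*x*y^2 - x := by nlinarith [sq_nonneg (y - x), sq_nonneg (x*y - 1)]
      have : 0 ≤ 2*x⁻¹ - 2*y⁻¹ - (y^3)⁻¹ := by rw [key]; positivity
      linarith
    push_cast at *
    have e : ((n:ℝ) + 1 + 1) = (n:ℝ) + 2 := by ring
    rw [e] at *
    linarith
-- rpow to sqrt conversions
lemma rpow_three_half (t : ℝ) (ht : 0 ≤ t) : t ^ ((3:ℝ)/2) = Real.sqrt t ^ 3 := by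
  rw [Real.sqrt_eq_rpow, ← Real.rpow_natCast (t ^ ((1:ℝ)/2)) 3, ← Real.rpow_mul ht]
  norm_num

lemma hasDerivAt_omp (p : ℝ) (x : ℝ) (hx : x < 1) :
    HasDerivAt (fun y : ℝ => (1 - y) ^ p) (-(p * (1-x)^(p-1))) x := by
  have h1 : HasDerivAt (fun y : ℝ => 1 - y) (-1) x := by
    simpa using (hasDerivAt_id x).const_sub 1
  have h2 := (Real.hasDerivAt_rpow_const (x := 1 - x) (p := p)
    (Or.inl (by linarith))).comp x h1
  exact h2.congr_deriv (by ring)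

lemma anti_omp (p : ℝ) (hp : 0 ≤ p) : AntitoneOn (fun y : ℝ => (1 - y) ^ p) (Icc 0 1) :=
  fun x hx y hy hxy => Real.rpow_le_rpow (by linarith [hy.2]) (by linarith) hp

lemma sum_inv32_range (m : ℕ) : ∑ k ∈ Finset.range m, (Real.sqrt (k+1) ^ 3)⁻¹ ≤ 3 := by
  have h := sum_inv32 m
  have e : ∑ j ∈ Finset.Icc 1 m, (Real.sqrt j ^ 3)⁻¹
      = ∑ k ∈ Finset.range m, (Real.sqrt (k+1) ^ 3)⁻¹ := by
    rw [← Finset.Ico_add_one_right_eq_Icc, Finset.sum_Ico_eq_sum_range]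
    simp [add_comm]
  rw [e] at h
  have : 0 ≤ 2 * (Real.sqrt m)⁻¹ := by positivity
  linarith

-- Per-interval bound, non-last intervals, for g_p
lemma omp_interval_bound (p : ℝ) (hp1 : 1/2 ≤ p) (hp2 : p ≤ 3/2)
    (n k : ℕ) (hk : k + 1 < n) :
    |(∫ x in ((k:ℝ)/n)..(((k:ℝ)+1)/n), (1-x)^p) -
      ((((k:ℝ)+1)/n - (k:ℝ)/n)/2) * ((1-(k:ℝ)/n)^p + (1-((k:ℝ)+1)/n)^p)| ≤
    (3/4) * ((1 - ((k:ℝ)+1)/n) ^ (p-2)) * (((k:ℝ)+1)/n - (k:ℝ)/n)^3 / 12 := by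
  have hn0 : 0 < n := by omega
  have hn : 0 < (n:ℝ) := by exact_mod_cast hn0
  have hab : (k:ℝ)/n ≤ ((k:ℝ)+1)/n := by gcongr; linarith
  set a := (k:ℝ)/n with ha
  set b := ((k:ℝ)+1)/n with hb
  have hb1 : b < 1 := by
    rw [hb, div_lt_one hn]
    have : ((k:ℝ)+1) < n := by exact_mod_cast hk
    linarith
  have hsub : Icc a b ⊆ Icc 0 1 := by
    apply Icc_subset_Icc
    · rw [ha]; positivity
    · linarith
  have hlt1 : ∀ x ∈ Icc a b, x < 1 := fun x hx => lt_of_le_of_lt hx.2 hb1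
  have homb : 0 < 1 - b := by linarith
  -- apply trap_err
  have H := trap_err (fun y => (1-y)^p) (fun y => -(p * (1-y)^(p-1)))
    (fun y => p*(p-1) * (1-y)^(p-2)) a b ((3/4) * ((1-b) ^ (p-2))) hab
    ?_ ?_ ?_
  · exact H
  · intro x hx
    exact ((hasDerivAt_omp p x (hlt1 x hx)).hasDerivWithinAt)
  · intro x hx
    have h1 : HasDerivAt (fun y : ℝ => (1 - y) ^ (p-1)) (-((p-1) * (1-x)^(p-1-1))) x :=
      hasDerivAt_omp (p-1) x (hlt1 x hx)
    have h2 := h1.const_mul p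
    have h3 := h2.neg
    have : HasDerivAt (fun y : ℝ => -(p * (1-y)^(p-1))) (p*(p-1) * (1-x)^(p-2)) x := by
      refine h3.congr_deriv ?_
      ring_nf
    exact this.hasDerivWithinAt
  · intro x hx
    have hx1 : 0 < 1 - x := by linarith [hlt1 x hx]
    rw [abs_mul, abs_of_nonneg (Real.rpow_nonneg (le_of_lt hx1) _)]
    have e1 : |p * (p-1)| ≤ 3/4 := by
      rw [abs_le]; constructor <;> nlinarith
    have e2 : (1-x)^(p-2) ≤ (1-b)^(p-2) := by
      apply Real.rpow_le_rpow_of_nonpos homb (by linarith [hx.2]) (by linarith)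
    calc |p*(p-1)| * (1-x)^(p-2) ≤ (3/4) * (1-b)^(p-2) := by
          apply mul_le_mul e1 e2 (Real.rpow_nonneg (le_of_lt hx1) _) (by norm_num)
      _ = (3/4) * ((1-b)^(p-2)) := rfl

lemma sqrt_cube_pos {n : ℕ} (hn : 1 ≤ n) : 0 < Real.sqrt n ^ 3 := by
  have : (0:ℝ) < n := by exact_mod_cast hn
  positivity

lemma omp_sum_bound (p : ℝ) (hp1 : 1/2 ≤ p) (hp2 : p ≤ 3/2) (n : ℕ) (hn : 1 ≤ n) :
    ∑ k ∈ Finset.range n, |(∫ x in ((k:ℝ)/n)..(((k:ℝ)+1)/n), (1-x)^p) -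
      ((((k:ℝ)+1)/n - (k:ℝ)/n)/2) * ((1-(k:ℝ)/n)^p + (1-((k:ℝ)+1)/n)^p)| ≤
    2 / Real.sqrt n ^ 3 := by
  obtain ⟨m, rfl⟩ : ∃ m, n = m + 1 := ⟨n - 1, by omega⟩
  set n := m + 1 with hnm
  have hnR : (0:ℝ) < n := by positivity
  have hsq : Real.sqrt n ^ 2 = (n:ℝ) := Real.sq_sqrt (by positivity)
  have hsqpos : 0 < Real.sqrt n := Real.sqrt_pos.2 hnR
  rw [Finset.sum_range_succ]
  -- last interval
  have hlast : |(∫ x in ((m:ℝ)/n)..(((m:ℝ)+1)/n), (1-x)^p) -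
      ((((m:ℝ)+1)/n - (m:ℝ)/n)/2) * ((1-(m:ℝ)/n)^p + (1-((m:ℝ)+1)/n)^p)| ≤
      (Real.sqrt n ^ 3)⁻¹ := by
    have hb : ((m:ℝ)+1)/n = 1 := by
      rw [hnm]; push_cast; exact div_self (by positivity)
    have hab : (m:ℝ)/n ≤ ((m:ℝ)+1)/n := by gcongr; linarith
    have hsub : Icc ((m:ℝ)/n) (((m:ℝ)+1)/n) ⊆ Icc 0 1 := by
      apply Icc_subset_Icc (by positivity) (by rw [hb])
    have H := trap_err_anti (fun y => (1-y)^p) _ _ hab ((anti_omp p (by linarith)).mono hsub)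
    refine le_trans H ?_
    have e1 : 1 - ((m:ℝ)+1)/n = 0 := by rw [hb]; ring
    have e2 : 1 - (m:ℝ)/n = 1/n := by
      rw [hnm]; push_cast; field_simp; ring
    have e3 : ((m:ℝ)+1)/n - (m:ℝ)/n = 1/n := by
      rw [div_sub_div_same]; ring_nf
    simp only [e1, e2, e3]
    rw [Real.zero_rpow (by linarith)]
    have e4 : (1:ℝ)/n * ((1/n)^p - 0) = (1/n)^(1+p) := by
      rw [sub_zero, Real.rpow_add (by positivity), Real.rpow_one]
    rw [e4]
    have e5 : ((1:ℝ)/n)^(1+p) ≤ (1/n)^((3:ℝ)/2) :=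
      Real.rpow_le_rpow_of_exponent_ge (by positivity)
        (by rw [div_le_one hnR]; exact_mod_cast hn) (by linarith)
    refine le_trans e5 ?_
    rw [rpow_three_half _ (by positivity), one_div, Real.sqrt_inv, inv_pow]
  -- non-last intervals
  have hmain : ∑ k ∈ Finset.range m, |(∫ x in ((k:ℝ)/n)..(((k:ℝ)+1)/n), (1-x)^p) -
      ((((k:ℝ)+1)/n - (k:ℝ)/n)/2) * ((1-(k:ℝ)/n)^p + (1-((k:ℝ)+1)/n)^p)| ≤
      (3/16) * (Real.sqrt n ^ 3)⁻¹ := by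
    have step : ∀ k ∈ Finset.range m,
        |(∫ x in ((k:ℝ)/n)..(((k:ℝ)+1)/n), (1-x)^p) -
          ((((k:ℝ)+1)/n - (k:ℝ)/n)/2) * ((1-(k:ℝ)/n)^p + (1-((k:ℝ)+1)/n)^p)| ≤
        (1/16) * (Real.sqrt n ^ 3)⁻¹ * (Real.sqrt ((m:ℝ) - k) ^ 3)⁻¹ := by
      intro k hk
      rw [Finset.mem_range] at hk
      have hkR : (k:ℝ) < m := by exact_mod_cast hk
      have H := omp_interval_bound p hp1 hp2 n k (by omega)
      refine le_trans H ?_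
      have e3 : ((k:ℝ)+1)/n - (k:ℝ)/n = 1/n := by rw [div_sub_div_same]; ring_nf
      have e6 : 1 - ((k:ℝ)+1)/n = ((m:ℝ) - k)/n := by
        rw [hnm]; push_cast; field_simp; ring
      have hmk : (0:ℝ) < (m:ℝ) - k := by linarith
      have hmk1 : ((m:ℝ) - k)/n ≤ 1 := by
        rw [div_le_one hnR, hnm]; push_cast; linarith
      have e7 : (((m:ℝ) - k)/n) ^ (p-2) ≤ (((m:ℝ) - k)/n) ^ (-(3:ℝ)/2) :=
        Real.rpow_le_rpow_of_exponent_ge (by positivity) hmk1 (by linarith)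
      have e8 : (((m:ℝ) - k)/n) ^ (-(3:ℝ)/2) = Real.sqrt n ^ 3 * (Real.sqrt ((m:ℝ)-k) ^ 3)⁻¹ := by
        have h32 : (-(3:ℝ)/2) = -((3:ℝ)/2) := by norm_num
        rw [h32, Real.rpow_neg (by positivity), rpow_three_half _ (by positivity),
          Real.sqrt_div hmk.le, div_pow, inv_div, div_eq_mul_inv]
      have hfact : Real.sqrt n ^ 3 * ((1:ℝ)/n)^3 = (Real.sqrt n ^ 3)⁻¹ := by
        have hne : Real.sqrt n ≠ 0 := ne_of_gt hsqpos
        have hn0' : (n:ℝ) ≠ 0 := ne_of_gt hnR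
        have e : Real.sqrt n / (n:ℝ) = (Real.sqrt n)⁻¹ := by
          field_simp; exact hsq
        rw [← mul_pow, mul_one_div, e, inv_pow]
      rw [e3, e6]
      calc (3:ℝ)/4 * (((m:ℝ)-k)/n)^(p-2) * (1/(n:ℝ))^3/12
          ≤ (3:ℝ)/4 * (((m:ℝ)-k)/n)^(-(3:ℝ)/2) * (1/(n:ℝ))^3/12 := by
            have hnn : (0:ℝ) ≤ (1/(n:ℝ))^3 := by positivity
            have := mul_le_mul_of_nonneg_right
              (mul_le_mul_of_nonneg_left e7 (by norm_num : (0:ℝ) ≤ 3/4)) hnn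
            linarith
        _ = (3:ℝ)/4/12 * (Real.sqrt n ^ 3 * (1/(n:ℝ))^3) * (Real.sqrt ((m:ℝ)-k) ^ 3)⁻¹ := by
            rw [e8]; ring
        _ = (1/16) * (Real.sqrt n ^ 3)⁻¹ * (Real.sqrt ((m:ℝ)-k) ^ 3)⁻¹ := by
            rw [hfact]; ring
    refine le_trans (Finset.sum_le_sum step) ?_
    rw [← Finset.mul_sum]
    have reflect : ∑ k ∈ Finset.range m, (Real.sqrt ((m:ℝ) - k) ^ 3)⁻¹
        = ∑ k ∈ Finset.range m, (Real.sqrt ((k:ℝ)+1) ^ 3)⁻¹ := by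
      have := Finset.sum_range_reflect (fun j => (Real.sqrt ((j:ℝ)+1) ^ 3)⁻¹) m
      rw [← this]
      apply Finset.sum_congr rfl
      intro k hk
      rw [Finset.mem_range] at hk
      congr 2
      have : (m - 1 - k : ℕ) = (m - (k+1) : ℕ) := by omega
      rw [this]
      push_cast [Nat.cast_sub (by omega : k + 1 ≤ m)]
      ring
    rw [reflect]
    have := sum_inv32_range m
    calc (1/16) * (Real.sqrt n ^ 3)⁻¹ * ∑ k ∈ Finset.range m, (Real.sqrt ((k:ℝ)+1) ^ 3)⁻¹
        ≤ (1/16) * (Real.sqrt n ^ 3)⁻¹ * 3 := by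
          apply mul_le_mul_of_nonneg_left this (by positivity)
      _ = (3/16) * (Real.sqrt n ^ 3)⁻¹ := by ring
  have : (2:ℝ) / Real.sqrt n ^ 3 = 2 * (Real.sqrt n ^ 3)⁻¹ := by rw [div_eq_mul_inv]
  rw [this]
  have hpos : (0:ℝ) ≤ (Real.sqrt (n:ℝ) ^ 3)⁻¹ := by positivity
  linarith

lemma smooth_sum_bound (f f' f'' : ℝ → ℝ) (M : ℝ)
    (hf : ∀ x ∈ Icc (0:ℝ) 1, HasDerivWithinAt f (f' x) (Icc 0 1) x)
    (hf' : ∀ x ∈ Icc (0:ℝ) 1, HasDerivWithinAt f' (f'' x) (Icc 0 1) x)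
    (hM : ∀ x ∈ Icc (0:ℝ) 1, |f'' x| ≤ M)
    (n : ℕ) (hn : 1 ≤ n) :
    ∑ k ∈ Finset.range n, |(∫ x in ((k:ℝ)/n)..(((k:ℝ)+1)/n), f x) -
      ((((k:ℝ)+1)/n - (k:ℝ)/n)/2) * (f ((k:ℝ)/n) + f (((k:ℝ)+1)/n))| ≤
    (M/12) / Real.sqrt n ^ 3 := by
  have hnR : (0:ℝ) < n := by exact_mod_cast hn
  have hM0 : 0 ≤ M := le_trans (abs_nonneg _) (hM 0 (by norm_num))
  have step : ∀ k ∈ Finset.range n, |(∫ x in ((k:ℝ)/n)..(((k:ℝ)+1)/n), f x) -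
      ((((k:ℝ)+1)/n - (k:ℝ)/n)/2) * (f ((k:ℝ)/n) + f (((k:ℝ)+1)/n))| ≤
      M * (1/(n:ℝ))^3 / 12 := by
    intro k hk
    rw [Finset.mem_range] at hk
    have hk1 : ((k:ℝ)+1) ≤ n := by exact_mod_cast hk
    have hab : (k:ℝ)/n ≤ ((k:ℝ)+1)/n := by gcongr; linarith
    have hsub : Icc ((k:ℝ)/n) (((k:ℝ)+1)/n) ⊆ Icc 0 1 := by
      apply Icc_subset_Icc (by positivity) (by rw [div_le_one hnR]; linarith)
    have H := trap_err f f' f'' ((k:ℝ)/n) (((k:ℝ)+1)/n) M hab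
      (fun x hx => (hf x (hsub hx)).mono hsub)
      (fun x hx => (hf' x (hsub hx)).mono hsub)
      (fun x hx => hM x (hsub hx))
    refine le_trans H ?_
    rw [div_sub_div_same, show ((k:ℝ)+1-k) = 1 by ring]
  refine le_trans (Finset.sum_le_sum step) ?_
  rw [Finset.sum_const, Finset.card_range, nsmul_eq_mul]
  have hn1 : (1:ℝ) ≤ n := by exact_mod_cast hn
  have hsp : 0 < Real.sqrt n := Real.sqrt_pos.2 hnR
  have hs1 : (1:ℝ) ≤ Real.sqrt n := by
    rw [show (1:ℝ) = Real.sqrt 1 from (Real.sqrt_one).symm]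
    exact Real.sqrt_le_sqrt hn1
  have hs : Real.sqrt n ^ 3 ≤ (n:ℝ)^2 := by
    nlinarith [Real.sq_sqrt hnR.le]
  have e : (n:ℝ) * (M * (1/(n:ℝ))^3 / 12) = (M/12) / (n:ℝ)^2 := by
    field_simp
  rw [e]
  gcongr

lemma trap_sum_eq (F : ℝ → ℝ) (n : ℕ) (hn : 1 ≤ n) :
    (1/(2*(n:ℝ))) * F 0 + (1/(2*(n:ℝ))) * F 1 +
      ∑ k ∈ Finset.Icc 1 (n - 1), (1/(n:ℝ)) * F ((k:ℝ)/(n:ℝ))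
    = ∑ k ∈ Finset.range n, ((((k:ℝ)+1)/n - (k:ℝ)/n)/2) * (F ((k:ℝ)/n) + F (((k:ℝ)+1)/n)) := by
  obtain ⟨m, rfl⟩ : ∃ m, n = m + 1 := ⟨n - 1, by omega⟩
  set n := m + 1 with hnm
  have hnR : (0:ℝ) < n := by positivity
  have e3 : ∀ k : ℕ, ((k:ℝ)+1)/n - (k:ℝ)/n = 1/n := fun k => by
    rw [div_sub_div_same]; ring_nf
  have ecoef : ∑ k ∈ Finset.range n, ((((k:ℝ)+1)/n - (k:ℝ)/n)/2) * (F ((k:ℝ)/n) + F (((k:ℝ)+1)/n))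
      = ∑ k ∈ Finset.range n, (1:ℝ)/n/2 * (F ((k:ℝ)/n) + F (((k:ℝ)+1)/n)) :=
    Finset.sum_congr rfl (fun k _ => by rw [e3 k])
  rw [ecoef]
  have expand : ∑ k ∈ Finset.range n, (1:ℝ)/n/2 * (F ((k:ℝ)/n) + F (((k:ℝ)+1)/n))
      = (1/n/2) * (∑ k ∈ Finset.range n, F ((k:ℝ)/n))
        + (1/n/2) * (∑ k ∈ Finset.range n, F (((k:ℝ)+1)/n)) := by
    rw [Finset.mul_sum, Finset.mul_sum, ← Finset.sum_add_distrib]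
    exact Finset.sum_congr rfl (fun k _ => by ring)
  rw [expand]
  set S := ∑ k ∈ Finset.range m, F (((k:ℝ)+1)/n) with hS
  have h1 : ∑ k ∈ Finset.range n, F ((k:ℝ)/n) = F 0 + S := by
    rw [hnm, Finset.sum_range_succ']
    simp only [Nat.cast_zero, zero_div]
    rw [add_comm]
    congr 1
    apply Finset.sum_congr rfl
    intro k _
    congr 1
    push_cast [hnm]
    ring
  have h2 : ∑ k ∈ Finset.range n, F (((k:ℝ)+1)/n) = S + F 1 := by
    rw [hnm, Finset.sum_range_succ, hS]
    congr 1
    rw [show ((m:ℝ)+1)/(n:ℝ) = 1 by rw [hnm]; push_cast; exact div_self (by positivity)]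
  have h3 : ∑ k ∈ Finset.Icc 1 (n - 1), (1/(n:ℝ)) * F ((k:ℝ)/(n:ℝ)) = (1/(n:ℝ)) * S := by
    rw [show n - 1 = m from rfl, ← Finset.Ico_add_one_right_eq_Icc, Finset.sum_Ico_eq_sum_range, hS,
      Finset.mul_sum]
    apply Finset.sum_congr (by congr 1)
    intro k _
    congr 2
    push_cast
    ring
  rw [h1, h2, h3]
  field_simp
  ring

end RiemannAux

/-- Proposition 1, item 1, for z₀ = 0: if F₁(x) = c₁(1-x)^{1/2} + c₂(1-x)^{3/2} + Ft(x)
on [0,1] with Ft ∈ C²[0,1], then the trapezoid-type Riemann sum error Rₙ satisfies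
|Rₙ| ≤ L₁ / n^{3/2} for all n ≥ N. -/
theorem riemann_error_sqrt_trapezoid_zero
    (N : ℕ) (hN : 0 < N) (F₁ Ft : ℝ → ℝ) (c₁ c₂ : ℝ)
    (hFt : ContDiffOn ℝ 2 Ft (Set.Icc (0 : ℝ) 1))
    (hrep : ∀ x ∈ Set.Icc (0 : ℝ) 1,
      F₁ x = c₁ * (1 - x) ^ ((1 : ℝ)/2) + c₂ * (1 - x) ^ ((3 : ℝ)/2) + Ft x) :
    ∃ L₁ > (0 : ℝ), ∀ n : ℕ, N ≤ n →
      |(∫ x in (0 : ℝ)..1, F₁ x) -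
        ((1/(2*(n : ℝ))) * F₁ 0 + (1/(2*(n : ℝ))) * F₁ 1 +
          ∑ k ∈ Finset.Icc 1 (n - 1), (1/(n : ℝ)) * F₁ ((k : ℝ)/(n : ℝ)))|
        ≤ L₁ / (n : ℝ) ^ ((3 : ℝ)/2) := by
  have hu : UniqueDiffOn ℝ (Icc (0:ℝ) 1) := uniqueDiffOn_Icc zero_lt_one
  set f' := derivWithin Ft (Icc (0:ℝ) 1) with hf'def
  set f'' := derivWithin f' (Icc (0:ℝ) 1) with hf''def
  have hFt1 : DifferentiableOn ℝ Ft (Icc 0 1) := hFt.differentiableOn (by norm_num)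
  have hd1 : ∀ x ∈ Icc (0:ℝ) 1, HasDerivWithinAt Ft (f' x) (Icc 0 1) x :=
    fun x hx => (hFt1 x hx).hasDerivWithinAt
  have hf'c : ContDiffOn ℝ 1 f' (Icc 0 1) := hFt.derivWithin hu (by norm_num)
  have hd2 : ∀ x ∈ Icc (0:ℝ) 1, HasDerivWithinAt f' (f'' x) (Icc 0 1) x :=
    fun x hx => ((hf'c.differentiableOn (by norm_num)) x hx).hasDerivWithinAt
  have hf''cd : ContDiffOn ℝ 0 f'' (Icc (0:ℝ) 1) := hf'c.derivWithin hu (by norm_num)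
  have hf''c : ContinuousOn f'' (Icc (0:ℝ) 1) := hf''cd.continuousOn
  obtain ⟨M, hM⟩ := isCompact_Icc.exists_bound_of_continuousOn hf''c
  have hMabs : ∀ x ∈ Icc (0:ℝ) 1, |f'' x| ≤ M := fun x hx => by
    simpa [Real.norm_eq_abs] using hM x hx
  have hM0 : 0 ≤ M := le_trans (abs_nonneg _) (hMabs 0 (by norm_num))
  refine ⟨|c₁| * 2 + |c₂| * 2 + M/12 + 1, by positivity, ?_⟩
  intro n hn
  have hn1 : 1 ≤ n := le_trans hN hn
  have hnR : (0:ℝ) < n := by exact_mod_cast hn1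
  have hnR1 : (1:ℝ) ≤ n := by exact_mod_cast hn1
  have hspos : 0 < Real.sqrt n ^ 3 := sqrt_cube_pos hn1
  have hg1c : Continuous (fun x : ℝ => (1 - x) ^ ((1:ℝ)/2)) := by
    apply Continuous.rpow_const (continuous_const.sub continuous_id)
    intro x; right; norm_num
  have hg2c : Continuous (fun x : ℝ => (1 - x) ^ ((3:ℝ)/2)) := by
    apply Continuous.rpow_const (continuous_const.sub continuous_id)
    intro x; right; norm_num
  have hFtc : ContinuousOn Ft (Icc (0:ℝ) 1) := hFt.continuousOn
  have hcombo : ContinuousOn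
      (fun x => c₁ * (1-x)^((1:ℝ)/2) + c₂*(1-x)^((3:ℝ)/2) + Ft x) (Icc (0:ℝ) 1) :=
    ((continuousOn_const.mul hg1c.continuousOn).add
      (continuousOn_const.mul hg2c.continuousOn)).add hFtc
  have hF1c : ContinuousOn F₁ (Icc (0:ℝ) 1) := hcombo.congr hrep
  have hsubk : ∀ k : ℕ, k < n → Icc ((k:ℝ)/n) (((k:ℝ)+1)/n) ⊆ Icc (0:ℝ) 1 := by
    intro k hk
    have : ((k:ℝ)+1) ≤ n := by exact_mod_cast hk
    apply Icc_subset_Icc (by positivity) (by rw [div_le_one hnR]; linarith)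
  have habk : ∀ k : ℕ, (k:ℝ)/n ≤ ((k:ℝ)+1)/n := fun k => by gcongr; linarith
  -- split the integral
  have hsplit : (∫ x in (0:ℝ)..1, F₁ x)
      = ∑ k ∈ Finset.range n, ∫ x in ((k:ℝ)/n)..(((k:ℝ)+1)/n), F₁ x := by
    have hadj := intervalIntegral.sum_integral_adjacent_intervals
      (a := fun k : ℕ => (k:ℝ)/n) (μ := volume) (f := F₁) (n := n) ?_
    · have e0 : ((0:ℕ):ℝ)/(n:ℝ) = 0 := by norm_num
      have e1 : ((n:ℕ):ℝ)/(n:ℝ) = 1 := div_self (ne_of_gt hnR)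
      rw [e0, e1] at hadj
      rw [← hadj]
      apply Finset.sum_congr rfl
      intro k _
      congr 1
      push_cast
      ring
    · intro k hk
      have goal_eq : ((k+1:ℕ):ℝ)/(n:ℝ) = ((k:ℝ)+1)/(n:ℝ) := by push_cast; ring
      show IntervalIntegrable F₁ volume ((k:ℝ)/(n:ℝ)) (((k+1:ℕ):ℝ)/(n:ℝ))
      rw [goal_eq]
      exact (hF1c.mono (hsubk k hk)).intervalIntegrable_of_Icc (habk k)
  rw [trap_sum_eq F₁ n hn1, hsplit, ← Finset.sum_sub_distrib]
  refine le_trans (Finset.abs_sum_le_sum_abs _ _) ?_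
  -- per-term decomposition
  have tri : ∀ k ∈ Finset.range n,
      |(∫ x in ((k:ℝ)/n)..(((k:ℝ)+1)/n), F₁ x) -
        ((((k:ℝ)+1)/n - (k:ℝ)/n)/2) * (F₁ ((k:ℝ)/n) + F₁ (((k:ℝ)+1)/n))| ≤
      |c₁| * |(∫ x in ((k:ℝ)/n)..(((k:ℝ)+1)/n), (1-x)^((1:ℝ)/2)) -
        ((((k:ℝ)+1)/n - (k:ℝ)/n)/2) * ((1-(k:ℝ)/n)^((1:ℝ)/2) + (1-((k:ℝ)+1)/n)^((1:ℝ)/2))|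
      + |c₂| * |(∫ x in ((k:ℝ)/n)..(((k:ℝ)+1)/n), (1-x)^((3:ℝ)/2)) -
        ((((k:ℝ)+1)/n - (k:ℝ)/n)/2) * ((1-(k:ℝ)/n)^((3:ℝ)/2) + (1-((k:ℝ)+1)/n)^((3:ℝ)/2))|
      + |(∫ x in ((k:ℝ)/n)..(((k:ℝ)+1)/n), Ft x) -
        ((((k:ℝ)+1)/n - (k:ℝ)/n)/2) * (Ft ((k:ℝ)/n) + Ft (((k:ℝ)+1)/n))| := by
    intro k hk
    rw [Finset.mem_range] at hk
    have hs := hsubk k hk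
    have hab := habk k
    have huIcc : uIcc ((k:ℝ)/n) (((k:ℝ)+1)/n) = Icc ((k:ℝ)/n) (((k:ℝ)+1)/n) :=
      uIcc_of_le hab
    have hi1 : IntervalIntegrable (fun x => (1-x)^((1:ℝ)/2)) volume ((k:ℝ)/n) (((k:ℝ)+1)/n) :=
      hg1c.intervalIntegrable _ _
    have hi2 : IntervalIntegrable (fun x => (1-x)^((3:ℝ)/2)) volume ((k:ℝ)/n) (((k:ℝ)+1)/n) :=
      hg2c.intervalIntegrable _ _
    have hi3 : IntervalIntegrable Ft volume ((k:ℝ)/n) (((k:ℝ)+1)/n) :=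
      (hFtc.mono hs).intervalIntegrable_of_Icc hab
    have hIeq : (∫ x in ((k:ℝ)/n)..(((k:ℝ)+1)/n), F₁ x)
        = c₁ * (∫ x in ((k:ℝ)/n)..(((k:ℝ)+1)/n), (1-x)^((1:ℝ)/2))
          + c₂ * (∫ x in ((k:ℝ)/n)..(((k:ℝ)+1)/n), (1-x)^((3:ℝ)/2))
          + (∫ x in ((k:ℝ)/n)..(((k:ℝ)+1)/n), Ft x) := by
      rw [intervalIntegral.integral_congr
        (g := fun x => c₁ * (1-x)^((1:ℝ)/2) + c₂*(1-x)^((3:ℝ)/2) + Ft x)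
        (fun x hx => hrep x (hs (huIcc ▸ hx)))]
      rw [intervalIntegral.integral_add ((hi1.const_mul c₁).add (hi2.const_mul c₂)) hi3,
        intervalIntegral.integral_add (hi1.const_mul c₁) (hi2.const_mul c₂),
        intervalIntegral.integral_const_mul, intervalIntegral.integral_const_mul]
    have hva := hrep ((k:ℝ)/n) (hs ⟨le_refl _, hab⟩)
    have hvb := hrep (((k:ℝ)+1)/n) (hs ⟨hab, le_refl _⟩)
    have hdec : (∫ x in ((k:ℝ)/n)..(((k:ℝ)+1)/n), F₁ x) -
        ((((k:ℝ)+1)/n - (k:ℝ)/n)/2) * (F₁ ((k:ℝ)/n) + F₁ (((k:ℝ)+1)/n))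
        = c₁ * ((∫ x in ((k:ℝ)/n)..(((k:ℝ)+1)/n), (1-x)^((1:ℝ)/2)) -
            ((((k:ℝ)+1)/n - (k:ℝ)/n)/2) * ((1-(k:ℝ)/n)^((1:ℝ)/2) + (1-((k:ℝ)+1)/n)^((1:ℝ)/2)))
          + c₂ * ((∫ x in ((k:ℝ)/n)..(((k:ℝ)+1)/n), (1-x)^((3:ℝ)/2)) -
            ((((k:ℝ)+1)/n - (k:ℝ)/n)/2) * ((1-(k:ℝ)/n)^((3:ℝ)/2) + (1-((k:ℝ)+1)/n)^((3:ℝ)/2)))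
          + ((∫ x in ((k:ℝ)/n)..(((k:ℝ)+1)/n), Ft x) -
            ((((k:ℝ)+1)/n - (k:ℝ)/n)/2) * (Ft ((k:ℝ)/n) + Ft (((k:ℝ)+1)/n))) := by
      rw [hIeq, hva, hvb]; ring
    rw [hdec]
    refine le_trans (abs_add_le _ _) ?_
    have := abs_add_le (c₁ * ((∫ x in ((k:ℝ)/n)..(((k:ℝ)+1)/n), (1-x)^((1:ℝ)/2)) -
            ((((k:ℝ)+1)/n - (k:ℝ)/n)/2) * ((1-(k:ℝ)/n)^((1:ℝ)/2) + (1-((k:ℝ)+1)/n)^((1:ℝ)/2))))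
      (c₂ * ((∫ x in ((k:ℝ)/n)..(((k:ℝ)+1)/n), (1-x)^((3:ℝ)/2)) -
            ((((k:ℝ)+1)/n - (k:ℝ)/n)/2) * ((1-(k:ℝ)/n)^((3:ℝ)/2) + (1-((k:ℝ)+1)/n)^((3:ℝ)/2))))
    rw [abs_mul, abs_mul] at *
    linarith
  refine le_trans (Finset.sum_le_sum tri) ?_
  rw [Finset.sum_add_distrib, Finset.sum_add_distrib, ← Finset.mul_sum, ← Finset.mul_sum]
  have b1 := omp_sum_bound ((1:ℝ)/2) (le_refl _) (by norm_num) n hn1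
  have b2 := omp_sum_bound ((3:ℝ)/2) (by norm_num) (le_refl _) n hn1
  have b3 := smooth_sum_bound Ft f' f'' M hd1 hd2 hMabs n hn1
  have hfin : |c₁| * (2 / Real.sqrt n ^ 3) + |c₂| * (2 / Real.sqrt n ^ 3)
      + (M/12) / Real.sqrt n ^ 3
      ≤ (|c₁| * 2 + |c₂| * 2 + M/12 + 1) / (n:ℝ) ^ ((3:ℝ)/2) := by
    rw [rpow_three_half _ hnR.le]
    have e : |c₁| * (2 / Real.sqrt n ^ 3) + |c₂| * (2 / Real.sqrt n ^ 3)
        + (M/12) / Real.sqrt n ^ 3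
        = (|c₁| * 2 + |c₂| * 2 + M/12) / Real.sqrt n ^ 3 := by ring
    rw [e, div_eq_mul_inv, div_eq_mul_inv]
    apply mul_le_mul_of_nonneg_right (by linarith) (by positivity)
  refine le_trans ?_ hfin
  gcongr
end

section
/- Let N ∈ ℕ and let F₁ : [0, 1] → ℝ be a function that can be represented as F₁(x) = c₁(1-x)^{1/2} + c₂(1-x)^{3/2} + c₃(1-x)^{5/2} + c₄(1-x)^{7/2} + F̄₁(x), where c₁, c₂, c₃, c₄ ∈ ℝ and F̄₁ is four times continuously differentiable on [0, 1]. Then there exists a constant L̄₁ > 0 (depending on F₁ and N) such that for all n ≥ N, |(n+1)² R_{n+1} − n² Rₙ| ≤ L̄₁ / n^{1/2}. -/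
open MeasureTheory Set

namespace RiemannAux
open Filter Topology intervalIntegral


lemma trapezoid_em {a b : ℝ} (hab : a < b) (f f' f'' f''' : ℝ → ℝ) (M : ℝ)
    (h0 : ∀ x ∈ Icc a b, HasDerivWithinAt f (f' x) (Icc a b) x)
    (h1 : ∀ x ∈ Icc a b, HasDerivWithinAt f' (f'' x) (Icc a b) x)
    (h2 : ∀ x ∈ Icc a b, HasDerivWithinAt f'' (f''' x) (Icc a b) x)
    (hc3 : ContinuousOn f''' (Icc a b))
    (hM : ∀ x ∈ Icc a b, |f''' x| ≤ M) :
    |(b-a)/2 * (f a + f b) - (∫ x in a..b, f x) - (b-a)^2/12 * (f' b - f' a)|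
      ≤ (b-a)^4 * M / 12 := by
  set h : ℝ := b - a with hh
  have hhpos : 0 < h := by simp [hh, hab]
  set w : ℝ → ℝ := fun t => (t - a) * (b - t) / 2 with hw
  set w1 : ℝ → ℝ := fun t => (a + b - 2*t) / 2 with hw1
  set W : ℝ → ℝ := fun t => -(2*(t-a)^3 - 3*h*(t-a)^2 + h^2*(t-a)) / 12 with hWdef
  -- derivatives
  have hWd : ∀ t : ℝ, HasDerivAt W (w t - h^2/12) t := by
    intro t
    have hs : HasDerivAt (fun t : ℝ => t - a) 1 t := (hasDerivAt_id t).sub_const a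
    have h3 : HasDerivAt (fun t : ℝ => (t-a)^3) (3*(t-a)^2) t := by
      simpa using hs.fun_pow 3
    have h2' : HasDerivAt (fun t : ℝ => (t-a)^2) (2*(t-a)) t := by
      simpa using hs.fun_pow 2
    have := (((h3.const_mul 2).sub (h2'.const_mul (3*h))).add (hs.const_mul (h^2))).neg.div_const 12
    refine this.congr_deriv ?_
    simp only [hw, hh]; ring
  have hwd : ∀ t : ℝ, HasDerivAt w (w1 t) t := by
    intro t
    have hs : HasDerivAt (fun t : ℝ => t - a) 1 t := (hasDerivAt_id t).sub_const a
    have hs2 : HasDerivAt (fun t : ℝ => b - t) (-1) t := by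
      simpa using (hasDerivAt_id t).const_sub b
    have := (hs.mul hs2).div_const 2
    refine this.congr_deriv ?_
    simp only [hw1]; ring
  have hw1d : ∀ t : ℝ, HasDerivAt w1 (-1) t := by
    intro t
    have hs : HasDerivAt (fun t : ℝ => a + b - 2*t) (-2) t := by
      simpa using ((hasDerivAt_id t).const_mul 2).const_sub (a+b)
    have := hs.div_const 2
    refine this.congr_deriv ?_
    norm_num
  -- continuity
  have hcW : Continuous W := by
    simp only [hWdef]; fun_prop
  have hcw : Continuous w := by simp only [hw]; fun_prop
  have hcw1 : Continuous w1 := by simp only [hw1]; fun_prop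
  have hc0 : ContinuousOn f (Icc a b) := fun x hx => (h0 x hx).continuousWithinAt
  have hc1 : ContinuousOn f' (Icc a b) := fun x hx => (h1 x hx).continuousWithinAt
  have hc2 : ContinuousOn f'' (Icc a b) := fun x hx => (h2 x hx).continuousWithinAt
  have huIcc : uIcc a b = Icc a b := uIcc_of_le hab.le
  -- integrability
  have hif : IntervalIntegrable f volume a b := (huIcc ▸ hc0).intervalIntegrable
  have hif1 : IntervalIntegrable f' volume a b := (huIcc ▸ hc1).intervalIntegrable
  have hif2 : IntervalIntegrable f'' volume a b := (huIcc ▸ hc2).intervalIntegrable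
  have hif3 : IntervalIntegrable f''' volume a b := (huIcc ▸ hc3).intervalIntegrable
  have hiwf2 : IntervalIntegrable (fun t => w t * f'' t) volume a b :=
    ((hcw.continuousOn).mul (huIcc ▸ hc2)).intervalIntegrable
  have hiw1f1 : IntervalIntegrable (fun t => w1 t * f' t) volume a b :=
    ((hcw1.continuousOn).mul (huIcc ▸ hc1)).intervalIntegrable
  have hiWf3 : IntervalIntegrable (fun t => W t * f''' t) volume a b :=
    ((hcW.continuousOn).mul (huIcc ▸ hc3)).intervalIntegrable
  -- helper to upgrade within-derivatives at interior points
  have interior_deriv : ∀ (g g' : ℝ → ℝ), (∀ x ∈ Icc a b, HasDerivWithinAt g (g' x) (Icc a b) x) →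
      ∀ x ∈ Ioo a b, HasDerivAt g (g' x) x := by
    intro g g' hg x hx
    exact (hg x (Ioo_subset_Icc_self hx)).hasDerivAt (Icc_mem_nhds hx.1 hx.2)
  -- FTC (i): ∫ (w - c) f'' + W f''' = 0
  have ftc1 : (∫ t in a..b, ((w t - h^2/12) * f'' t + W t * f''' t)) = W b * f'' b - W a * f'' a := by
    apply integral_eq_sub_of_hasDeriv_right_of_le hab.le
    · exact (hcW.continuousOn).mul hc2
    · intro x hx
      exact (((hWd x).mul ((interior_deriv f'' f''' h2 x hx)))).hasDerivWithinAt
    · apply IntervalIntegrable.add _ hiWf3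
      exact (((hcw.sub continuous_const).continuousOn).mul (huIcc ▸ hc2)).intervalIntegrable
  have hWa : W a = 0 := by simp [hWdef]
  have hWb : W b = 0 := by simp [hWdef, hh]; ring
  -- FTC (ii): ∫ w1 f' + w f'' = 0
  have ftc2 : (∫ t in a..b, (w1 t * f' t + w t * f'' t)) = w b * f' b - w a * f' a := by
    apply integral_eq_sub_of_hasDeriv_right_of_le hab.le
    · exact (hcw.continuousOn).mul hc1
    · intro x hx
      exact ((hwd x).mul (interior_deriv f' f'' h1 x hx)).hasDerivWithinAt
    · exact hiw1f1.add hiwf2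
  have hwa : w a = 0 := by simp [hw]
  have hwb : w b = 0 := by simp [hw]
  -- FTC (iii): ∫ (-f) + w1 f' = w1 b * f b - w1 a * f a
  have ftc3 : (∫ t in a..b, ((-1) * f t + w1 t * f' t)) = w1 b * f b - w1 a * f a := by
    apply integral_eq_sub_of_hasDeriv_right_of_le hab.le
    · exact (hcw1.continuousOn).mul hc0
    · intro x hx
      exact ((hw1d x).mul (interior_deriv f f' h0 x hx)).hasDerivWithinAt
    · exact (hif.const_mul (-1)).add hiw1f1
  -- FTC (iv): ∫ f'' = f' b - f' a
  have ftc4 : (∫ t in a..b, f'' t) = f' b - f' a := by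
    apply integral_eq_sub_of_hasDeriv_right_of_le hab.le hc1 _ hif2
    intro x hx
    exact (interior_deriv f' f'' h1 x hx).hasDerivWithinAt
  -- combine
  have e3 : (∫ t in a..b, w1 t * f' t) = (∫ t in a..b, f t) - (w1 a * f a - w1 b * f b) := by
    have := ftc3
    rw [integral_add (hif.const_mul (-1)) hiw1f1] at this
    simp only [neg_one_mul, intervalIntegral.integral_neg] at this
    linarith
  have e2 : (∫ t in a..b, w t * f'' t) = - (∫ t in a..b, w1 t * f' t) := by
    have := ftc2
    rw [integral_add hiw1f1 hiwf2, hwa, hwb] at this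
    linarith
  have e1 : (∫ t in a..b, W t * f''' t)
      = - ((∫ t in a..b, w t * f'' t) - h^2/12 * (f' b - f' a)) := by
    have := ftc1
    rw [integral_add _ hiWf3, hWa, hWb] at this
    · have hsub : (∫ t in a..b, (w t - h^2/12) * f'' t)
          = (∫ t in a..b, w t * f'' t) - h^2/12 * (∫ t in a..b, f'' t) := by
        rw [← intervalIntegral.integral_const_mul, ← integral_sub hiwf2 (hif2.const_mul _)]
        congr 1; ext t; ring
      rw [hsub, ftc4] at this
      linarith
    · exact (((hcw.sub continuous_const).continuousOn).mul (huIcc ▸ hc2)).intervalIntegrable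
  have hw1a : w1 a = h/2 := by simp [hw1, hh]; ring
  have hw1b : w1 b = -(h/2) := by simp [hw1, hh]; ring
  -- target equals -∫ W f'''
  have target : (b-a)/2 * (f a + f b) - (∫ x in a..b, f x) - (b-a)^2/12 * (f' b - f' a)
      = - (∫ t in a..b, W t * f''' t) := by
    rw [e1, e2, e3, hw1a, hw1b]
    push_cast [← hh]
    ring
  rw [target, abs_neg]
  have hWbd : ∀ t ∈ Icc a b, |W t| ≤ h^3/12 := by
    intro t ht
    have h1' : |t - a| ≤ h := by
      rw [abs_le]; constructor <;> [linarith [ht.1]; linarith [ht.2]]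
    have hq : |2*(t-a)^3 - 3*h*(t-a)^2 + h^2*(t-a)| ≤ h^3 := by
      have : 2*(t-a)^3 - 3*h*(t-a)^2 + h^2*(t-a) = (t-a) * (2*(t-a) - h) * ((t-a) - h) := by ring
      rw [this, abs_mul, abs_mul]
      have h2' : |2*(t-a) - h| ≤ h := by
        rw [abs_le]; constructor <;> [linarith [ht.1]; linarith [ht.2]]
      have h3' : |(t-a) - h| ≤ h := by
        rw [abs_le]; constructor <;> [linarith [ht.1, hhpos]; linarith [ht.2, ht.1]]
      calc |t-a| * |2*(t-a)-h| * |(t-a)-h| ≤ h * h * h := by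
              apply mul_le_mul (mul_le_mul h1' h2' (abs_nonneg _) hhpos.le) h3' (abs_nonneg _)
              positivity
        _ = h^3 := by ring
    have hWt : |W t| = |2*(t-a)^3 - 3*h*(t-a)^2 + h^2*(t-a)| / 12 := by
      simp only [hWdef]
      rw [abs_div, abs_neg]
      norm_num
    rw [hWt]
    gcongr
  have hM0 : 0 ≤ M := le_trans (abs_nonneg _) (hM a (by constructor <;> linarith))
  have hbound : |∫ t in a..b, W t * f''' t| ≤ (h^3/12 * M) * |b - a| := by
    rw [← Real.norm_eq_abs]
    apply intervalIntegral.norm_integral_le_of_norm_le_const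
    intro x hx
    have hx' : x ∈ Icc a b := by
      rw [uIoc_of_le hab.le] at hx
      exact ⟨hx.1.le, hx.2⟩
    rw [Real.norm_eq_abs, abs_mul]
    exact mul_le_mul (hWbd x hx') (hM x hx') (abs_nonneg _) (by positivity)
  calc |∫ t in a..b, W t * f''' t| ≤ (h^3/12 * M) * |b - a| := hbound
    _ = (b-a)^4 * M / 12 := by
        rw [abs_of_pos hhpos]
        simp only [hh]; ring



lemma integrable_rpow_on {a b : ℝ} (β : ℝ) (ha : 0 < a) (hb : 0 < b) :
    IntervalIntegrable (fun t : ℝ => t ^ β) volume a b := by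
  apply ContinuousOn.intervalIntegrable
  intro t ht
  have htpos : 0 < t := lt_of_lt_of_le (lt_min ha hb) ht.1
  exact (Real.continuousAt_rpow_const t β (Or.inl htpos.ne')).continuousWithinAt

lemma rpow_step_le_dec (β : ℝ) (hβ : β ≤ 0) (c : ℝ) (hc : 1 ≤ c) :
    (c+1) ^ β ≤ ∫ t in c..(c+1), t ^ β := by
  have h0 : (0:ℝ) < c := lt_of_lt_of_le one_pos hc
  have := intervalIntegral.integral_mono_on (μ := volume)
      (f := fun _ : ℝ => (c+1) ^ β) (g := fun t : ℝ => t ^ β)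
      (by linarith : c ≤ c + 1)
      intervalIntegrable_const (integrable_rpow_on β h0 (by linarith))
      (fun t ht => Real.rpow_le_rpow_of_nonpos (by linarith [ht.1]) ht.2 hβ)
  simpa using this

lemma rpow_step_le_inc (β : ℝ) (hβ : 0 ≤ β) (c : ℝ) (hc : 1 ≤ c) :
    c ^ β ≤ ∫ t in c..(c+1), t ^ β := by
  have h0 : (0:ℝ) < c := lt_of_lt_of_le one_pos hc
  have := intervalIntegral.integral_mono_on (μ := volume)
      (f := fun _ : ℝ => c ^ β) (g := fun t : ℝ => t ^ β)
      (by linarith : c ≤ c + 1)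
      intervalIntegrable_const (integrable_rpow_on β h0 (by linarith))
      (fun t ht => Real.rpow_le_rpow (by linarith) ht.1 hβ)
  simpa using this

lemma sum_rpow_le_integral_dec (β : ℝ) (hβ : β ≤ 0) (n : ℕ) (hn : 1 ≤ n) :
    ∀ m : ℕ, n ≤ m →
      (∑ j ∈ Finset.Icc (n+1) m, ((j:ℝ)) ^ β) ≤ ∫ t in (n:ℝ)..(m:ℝ), t ^ β := by
  intro m hm
  induction m, hm using Nat.le_induction with
  | base => simp [Finset.Icc_eq_empty (by omega : ¬ n + 1 ≤ n)]
  | succ m hm ih =>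
      have hn0 : (0:ℝ) < (n:ℝ) := by exact_mod_cast hn
      have hm0 : (1:ℝ) ≤ (m:ℝ) := by exact_mod_cast le_trans hn hm
      have hsplit : (∫ t in (n:ℝ)..((m:ℝ)+1), t ^ β)
          = (∫ t in (n:ℝ)..(m:ℝ), t ^ β) + ∫ t in (m:ℝ)..((m:ℝ)+1), t ^ β :=
        (intervalIntegral.integral_add_adjacent_intervals
          (integrable_rpow_on β hn0 (by linarith))
          (integrable_rpow_on β (by linarith) (by linarith))).symm
      rw [Finset.sum_Icc_succ_top (by omega : n + 1 ≤ m + 1)]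
      push_cast
      rw [hsplit]
      exact add_le_add ih (rpow_step_le_dec β hβ _ hm0)

lemma sum_rpow_le_integral_inc (β : ℝ) (hβ : 0 ≤ β) :
    ∀ n : ℕ, 1 ≤ n →
      (∑ j ∈ Finset.Icc 1 n, ((j:ℝ)) ^ β) ≤ ∫ t in (1:ℝ)..((n:ℝ)+1), t ^ β := by
  intro n hn
  induction n, hn using Nat.le_induction with
  | base =>
      simpa using rpow_step_le_inc β hβ 1 le_rfl
  | succ m hm ih =>
      have hm0 : (1:ℝ) ≤ (m:ℝ) := by exact_mod_cast hm
      have hsplit : (∫ t in (1:ℝ)..((m:ℝ)+1+1), t ^ β)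
          = (∫ t in (1:ℝ)..((m:ℝ)+1), t ^ β) + ∫ t in ((m:ℝ)+1)..((m:ℝ)+1+1), t ^ β :=
        (intervalIntegral.integral_add_adjacent_intervals
          (integrable_rpow_on β one_pos (by linarith))
          (integrable_rpow_on β (by linarith) (by linarith))).symm
      rw [Finset.sum_Icc_succ_top (by omega : 1 ≤ m + 1)]
      push_cast
      rw [hsplit]
      exact add_le_add ih (by simpa using rpow_step_le_inc β hβ ((m:ℝ)+1) (by linarith))

/-- tail bound for exponents < -1 -/
lemma sum_rpow_tail (β : ℝ) (hβ : β < -1) :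
    ∃ C : ℝ, 0 ≤ C ∧ ∀ n m : ℕ, 1 ≤ n →
      (∑ j ∈ Finset.Icc n m, (j:ℝ) ^ β) ≤ C * (n:ℝ)^(β+1) := by
  have hd : 0 < -(β+1) := by linarith
  refine ⟨1 + 1/(-(β+1)), by positivity, ?_⟩
  intro n m hn
  have hn0 : (0:ℝ) < (n:ℝ) := by exact_mod_cast hn
  have hn1 : (1:ℝ) ≤ (n:ℝ) := by exact_mod_cast hn
  have hp : (0:ℝ) ≤ (n:ℝ)^(β+1) := Real.rpow_nonneg hn0.le _
  rcases lt_or_ge m n with hlt | hle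
  · rw [Finset.Icc_eq_empty (by omega : ¬ n ≤ m)]
    simp only [Finset.sum_empty]
    positivity
  · have hm0 : (0:ℝ) < (m:ℝ) := by
      have : (1:ℝ) ≤ (m:ℝ) := by exact_mod_cast le_trans hn hle
      linarith
    have hint : (∫ t in (n:ℝ)..(m:ℝ), t ^ β) ≤ (n:ℝ)^(β+1) * (1/(-(β+1))) := by
      rw [integral_rpow (Or.inr ⟨by linarith, by
        intro hmem
        rw [Set.uIcc_of_le (by exact_mod_cast hle : (n:ℝ) ≤ (m:ℝ))] at hmem
        linarith [hmem.1]⟩)]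
      have h1 : ((m:ℝ)^(β+1) - (n:ℝ)^(β+1)) / (β+1)
          = ((n:ℝ)^(β+1) - (m:ℝ)^(β+1)) / (-(β+1)) := by
        rw [← neg_div_neg_eq]; ring_nf
      rw [h1, div_eq_mul_one_div]
      apply mul_le_mul_of_nonneg_right _ (by positivity)
      have : (0:ℝ) ≤ (m:ℝ)^(β+1) := Real.rpow_nonneg hm0.le _
      linarith
    have hfirst : (n:ℝ)^β ≤ (n:ℝ)^(β+1) :=
      Real.rpow_le_rpow_of_exponent_le hn1 (by linarith)
    have hsum := sum_rpow_le_integral_dec β (by linarith) n hn m hle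
    rw [Finset.Icc_eq_cons_Ioc hle, Finset.sum_cons, ← Finset.Icc_add_one_left_eq_Ioc]
    calc (n:ℝ)^β + ∑ j ∈ Finset.Icc (n+1) m, (j:ℝ)^β
        ≤ (n:ℝ)^(β+1) + (n:ℝ)^(β+1) * (1/(-(β+1))) :=
          add_le_add hfirst (le_trans hsum hint)
      _ = (1 + 1/(-(β+1))) * (n:ℝ)^(β+1) := by ring

/-- head bound for exponents > -1 -/
lemma sum_rpow_head (β : ℝ) (hβ : -1 < β) :
    ∃ C : ℝ, 0 ≤ C ∧ ∀ n : ℕ, 1 ≤ n →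
      (∑ j ∈ Finset.Icc 1 n, (j:ℝ) ^ β) ≤ C * (n:ℝ)^(β+1) := by
  have hd : 0 < β + 1 := by linarith
  rcases le_or_gt β 0 with hneg | hpos
  · refine ⟨1 + 1/(β+1), by positivity, ?_⟩
    intro n hn
    have hn1 : (1:ℝ) ≤ (n:ℝ) := by exact_mod_cast hn
    have hone : (1:ℝ) ≤ (n:ℝ)^(β+1) := Real.one_le_rpow hn1 (by linarith)
    have hint : (∫ t in (1:ℝ)..(n:ℝ), t ^ β) ≤ (n:ℝ)^(β+1) * (1/(β+1)) := by
      rw [integral_rpow (Or.inl (by linarith))]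
      rw [div_eq_mul_one_div]
      apply mul_le_mul_of_nonneg_right _ (by positivity)
      simp [Real.one_rpow]
    have hsum := sum_rpow_le_integral_dec β hneg 1 le_rfl n hn
    rw [Finset.Icc_eq_cons_Ioc hn, Finset.sum_cons, ← Finset.Icc_add_one_left_eq_Ioc]
    have h1 : ((1:ℕ):ℝ)^β = 1 := by norm_num
    calc ((1:ℕ):ℝ)^β + ∑ j ∈ Finset.Icc 2 n, (j:ℝ)^β
        ≤ 1 + (n:ℝ)^(β+1) * (1/(β+1)) := by
          rw [h1]
          have : (∑ j ∈ Finset.Icc 2 n, (j:ℝ)^β) ≤ (n:ℝ)^(β+1) * (1/(β+1)) := by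
            have hcast : ((1:ℕ):ℝ) = (1:ℝ) := by norm_num
            calc (∑ j ∈ Finset.Icc 2 n, (j:ℝ)^β) = ∑ j ∈ Finset.Icc (1+1) n, (j:ℝ)^β := by norm_num
              _ ≤ ∫ t in ((1:ℕ):ℝ)..(n:ℝ), t ^ β := hsum
              _ ≤ (n:ℝ)^(β+1) * (1/(β+1)) := by rw [hcast] at *; exact hint
          linarith
      _ ≤ (1 + 1/(β+1)) * (n:ℝ)^(β+1) := by nlinarith [hone]
  · refine ⟨(2:ℝ)^(β+1) * (1/(β+1)), by positivity, ?_⟩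
    intro n hn
    have hn1 : (1:ℝ) ≤ (n:ℝ) := by exact_mod_cast hn
    have hsum := sum_rpow_le_integral_inc β hpos.le n hn
    have hint : (∫ t in (1:ℝ)..((n:ℝ)+1), t ^ β) ≤ ((n:ℝ)+1)^(β+1) * (1/(β+1)) := by
      rw [integral_rpow (Or.inl (by linarith))]
      rw [div_eq_mul_one_div]
      apply mul_le_mul_of_nonneg_right _ (by positivity)
      simp [Real.one_rpow]
    have h2 : ((n:ℝ)+1)^(β+1) ≤ (2*(n:ℝ))^(β+1) :=
      Real.rpow_le_rpow (by linarith) (by linarith) (by linarith)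
    have h3 : (2*(n:ℝ))^(β+1) = (2:ℝ)^(β+1) * (n:ℝ)^(β+1) :=
      Real.mul_rpow (by norm_num) (by linarith)
    calc (∑ j ∈ Finset.Icc 1 n, (j:ℝ)^β) ≤ ((n:ℝ)+1)^(β+1) * (1/(β+1)) :=
          le_trans hsum hint
      _ ≤ (2:ℝ)^(β+1) * (n:ℝ)^(β+1) * (1/(β+1)) := by
          apply mul_le_mul_of_nonneg_right _ (by positivity)
          rw [← h3]; exact h2
      _ = (2:ℝ)^(β+1) * (1/(β+1)) * (n:ℝ)^(β+1) := by ring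



lemma telescope (a e : ℕ → ℝ) (ha : ∀ n : ℕ, a (n+1) = a n + e n) :
    ∀ n m : ℕ, n ≤ m → a m - a n = ∑ j ∈ Finset.Ico n m, e j := by
  intro n m hm
  induction m, hm using Nat.le_induction with
  | base => simp
  | succ m hm ih =>
      rw [Finset.sum_Ico_succ_top hm, ha m, ← ih]; ring

lemma abs_sum_e_le (e : ℕ → ℝ) (K β : ℝ) (hK : 0 ≤ K)
    (he : ∀ n : ℕ, 1 ≤ n → |e n| ≤ K * (n:ℝ)^β)
    (n m : ℕ) (hn : 1 ≤ n) :
    |∑ j ∈ Finset.Ico n m, e j| ≤ K * ∑ j ∈ Finset.Icc n m, (j:ℝ)^β := by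
  calc |∑ j ∈ Finset.Ico n m, e j| ≤ ∑ j ∈ Finset.Ico n m, |e j| :=
        Finset.abs_sum_le_sum_abs _ _
    _ ≤ ∑ j ∈ Finset.Ico n m, K * (j:ℝ)^β := by
        apply Finset.sum_le_sum
        intro j hj
        exact he j (le_trans hn (Finset.mem_Ico.mp hj).1)
    _ ≤ ∑ j ∈ Finset.Icc n m, K * (j:ℝ)^β := by
        apply Finset.sum_le_sum_of_subset_of_nonneg
        · intro j hj
          rw [Finset.mem_Icc]
          have := Finset.mem_Ico.mp hj
          omega
        · intro j _ _
          have : (0:ℝ) ≤ (j:ℝ)^β := Real.rpow_nonneg (Nat.cast_nonneg j) β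
          positivity
    _ = K * ∑ j ∈ Finset.Icc n m, (j:ℝ)^β := by rw [Finset.mul_sum]

lemma seq_approx_conv (a e : ℕ → ℝ) (K β : ℝ) (hβ : β < -1) (hK : 0 ≤ K)
    (ha : ∀ n : ℕ, a (n+1) = a n + e n)
    (he : ∀ n : ℕ, 1 ≤ n → |e n| ≤ K * (n:ℝ)^β) :
    ∃ Z C, 0 ≤ C ∧ ∀ n : ℕ, 1 ≤ n → |a n - Z| ≤ C * (n:ℝ)^(β+1) := by
  obtain ⟨C₀, hC₀, hsum⟩ := sum_rpow_tail β hβ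
  have hdiff : ∀ n m : ℕ, 1 ≤ n → n ≤ m → |a m - a n| ≤ K * C₀ * (n:ℝ)^(β+1) := by
    intro n m hn hm
    rw [telescope a e ha n m hm]
    calc |∑ j ∈ Finset.Ico n m, e j| ≤ K * ∑ j ∈ Finset.Icc n m, (j:ℝ)^β :=
          abs_sum_e_le e K β hK he n m hn
      _ ≤ K * (C₀ * (n:ℝ)^(β+1)) := mul_le_mul_of_nonneg_left (hsum n m hn) hK
      _ = K * C₀ * (n:ℝ)^(β+1) := by ring
  have hKC : 0 ≤ K * C₀ := by positivity
  set B0 : ℝ := 2*(|a 1 - a 0| + K*C₀) with hB0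
  have hone : ((1:ℕ):ℝ)^(β+1) = 1 := by norm_num
  have hbN : ∀ (p : ℕ), 1 ≤ p → dist (a p) (a 1) ≤ |a 1 - a 0| + K*C₀ := by
    intro p hp
    have := hdiff 1 p le_rfl hp
    rw [hone, mul_one] at this
    rw [Real.dist_eq]
    calc |a p - a 1| ≤ K * C₀ := this
      _ ≤ |a 1 - a 0| + K*C₀ := by linarith [abs_nonneg (a 1 - a 0)]
  have hd0 : ∀ (p : ℕ), dist (a p) (a 1) ≤ |a 1 - a 0| + K*C₀ := by
    intro p
    rcases Nat.eq_zero_or_pos p with rfl | hp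
    · rw [Real.dist_eq, abs_sub_comm]
      have := abs_nonneg (a 1 - a 0)
      linarith [mul_nonneg hK hC₀]
    · exact hbN p hp
  have hcauchy : CauchySeq a := by
    apply cauchySeq_of_le_tendsto_0
      (fun N : ℕ => if N = 0 then B0 else 2*(K*C₀)*(N:ℝ)^(β+1))
    · intro n m N hn hm
      rcases Nat.eq_zero_or_pos N with rfl | hN
      · simp only [if_pos rfl, hB0]
        calc dist (a n) (a m) ≤ dist (a n) (a 1) + dist (a 1) (a m) := dist_triangle _ _ _
          _ ≤ (|a 1 - a 0| + K*C₀) + (|a 1 - a 0| + K*C₀) := by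
              have h2 := hd0 m
              rw [dist_comm (a 1) (a m)]
              linarith [hd0 n]
          _ = 2*(|a 1 - a 0| + K*C₀) := by ring
      · rw [if_neg (by omega)]
        have h1 := hdiff N n hN hn
        have h2 := hdiff N m hN hm
        rw [Real.dist_eq]
        have : a n - a m = (a n - a N) - (a m - a N) := by ring
        rw [this]
        calc |(a n - a N) - (a m - a N)| ≤ |a n - a N| + |a m - a N| := abs_sub _ _
          _ ≤ 2*(K*C₀)*(N:ℝ)^(β+1) := by linarith
    · have h1 : Tendsto (fun N : ℕ => 2*(K*C₀)*(N:ℝ)^(β+1)) atTop (𝓝 0) := by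
        have h2 := (tendsto_rpow_neg_atTop (by linarith : (0:ℝ) < -(β+1))).comp
          (tendsto_natCast_atTop_atTop (R := ℝ))
        have h3 := h2.const_mul (2*(K*C₀))
        simp only [Function.comp, neg_neg, mul_zero] at h3
        simpa using h3
      apply h1.congr'
      filter_upwards [eventually_ge_atTop 1] with N hN
      rw [if_neg (by omega)]
  obtain ⟨Z, hZ⟩ := cauchySeq_tendsto_of_complete hcauchy
  refine ⟨Z, K*C₀, hKC, ?_⟩
  intro n hn
  have htend : Tendsto (fun m => |a m - a n|) atTop (𝓝 |Z - a n|) :=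
    ((hZ.sub_const (a n)).abs)
  have hle : ∀ᶠ m in atTop, |a m - a n| ≤ K * C₀ * (n:ℝ)^(β+1) := by
    filter_upwards [eventually_ge_atTop n] with m hm
    exact hdiff n m hn hm
  have := le_of_tendsto htend hle
  rwa [abs_sub_comm] at this

lemma seq_approx_bdd (a e : ℕ → ℝ) (K β : ℝ) (hβ : -1 < β) (hK : 0 ≤ K)
    (ha : ∀ n : ℕ, a (n+1) = a n + e n)
    (he : ∀ n : ℕ, 1 ≤ n → |e n| ≤ K * (n:ℝ)^β) :
    ∃ C, 0 ≤ C ∧ ∀ n : ℕ, 1 ≤ n → |a n| ≤ C * (n:ℝ)^(β+1) := by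
  obtain ⟨C₀, hC₀, hsum⟩ := sum_rpow_head β hβ
  refine ⟨|a 1| + K*C₀, by positivity, ?_⟩
  intro n hn
  have hn1 : (1:ℝ) ≤ (n:ℝ) := by exact_mod_cast hn
  have hone : (1:ℝ) ≤ (n:ℝ)^(β+1) := Real.one_le_rpow hn1 (by linarith)
  have htel := telescope a e ha 1 n hn
  have hb : |a n - a 1| ≤ K * (C₀ * (n:ℝ)^(β+1)) := by
    rw [htel]
    calc |∑ j ∈ Finset.Ico 1 n, e j| ≤ K * ∑ j ∈ Finset.Icc 1 n, (j:ℝ)^β :=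
          abs_sum_e_le e K β hK he 1 n le_rfl
      _ ≤ K * (C₀ * (n:ℝ)^(β+1)) := mul_le_mul_of_nonneg_left (hsum n hn) hK
  have h1 : |a n| ≤ |a 1| + K * (C₀ * (n:ℝ)^(β+1)) := by
    calc |a n| = |a 1 + (a n - a 1)| := by ring_nf
      _ ≤ |a 1| + |a n - a 1| := abs_add_le _ _
      _ ≤ |a 1| + K * (C₀ * (n:ℝ)^(β+1)) := by linarith
  have h2 : |a 1| * 1 ≤ |a 1| * (n:ℝ)^(β+1) :=
    mul_le_mul_of_nonneg_left hone (abs_nonneg _)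
  calc |a n| ≤ |a 1| + K * (C₀ * (n:ℝ)^(β+1)) := h1
    _ ≤ (|a 1| + K*C₀) * (n:ℝ)^(β+1) := by nlinarith
    



noncomputable def phi (α : ℝ) (x : ℝ) : ℝ := x^(α+1)/(α+1) + x^α/2 + (α/12)*x^(α-1)

noncomputable def T (F : ℝ → ℝ) (n : ℕ) : ℝ :=
  (1/(2*(n:ℝ))) * F 0 + (1/(2*(n:ℝ))) * F 1 +
    ∑ k ∈ Finset.Icc 1 (n - 1), (1/(n:ℝ)) * F ((k:ℝ)/(n:ℝ))

noncomputable def Efn (F : ℝ → ℝ) (n : ℕ) : ℝ :=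
  (n:ℝ)^2 * ((∫ x in (0:ℝ)..1, F x) - T F n)

open MeasureTheory Set Filter Topology intervalIntegral

lemma step_bound (α : ℝ) (hα : 0 < α) :
    ∃ K : ℝ, 0 ≤ K ∧ ∀ n : ℕ, 1 ≤ n →
      |((n:ℝ)+1)^α - (phi α ((n:ℝ)+1) - phi α (n:ℝ))| ≤ K * (n:ℝ)^(α-3) := by
  set c3 : ℝ := |α*(α-1)*(α-2)| * (1 + (2:ℝ)^(α-3)) with hc3def
  have hc3nn : 0 ≤ c3 := by positivity
  refine ⟨c3/12, by positivity, ?_⟩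
  intro n hn
  set a : ℝ := (n:ℝ) with hadef
  have ha1 : (1:ℝ) ≤ a := by rw [hadef]; exact_mod_cast hn
  have ha0 : (0:ℝ) < a := by linarith
  set b : ℝ := a + 1 with hbdef
  have hab : a < b := by simp [hbdef]
  have hxpos : ∀ x ∈ Icc a b, (0:ℝ) < x := fun x hx => lt_of_lt_of_le ha0 hx.1
  set f : ℝ → ℝ := fun t => t^α with hf
  set f1 : ℝ → ℝ := fun t => α * t^(α-1) with hf1
  set f2 : ℝ → ℝ := fun t => α*(α-1) * t^(α-2) with hf2
  set f3 : ℝ → ℝ := fun t => α*(α-1)*(α-2) * t^(α-3) with hf3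
  have h0 : ∀ x ∈ Icc a b, HasDerivWithinAt f (f1 x) (Icc a b) x := by
    intro x hx
    exact (Real.hasDerivAt_rpow_const (Or.inl (hxpos x hx).ne')).hasDerivWithinAt
  have h1 : ∀ x ∈ Icc a b, HasDerivWithinAt f1 (f2 x) (Icc a b) x := by
    intro x hx
    have h := (Real.hasDerivAt_rpow_const (x := x) (p := α-1)
      (Or.inl (hxpos x hx).ne')).const_mul α
    have h' : HasDerivAt f1 (f2 x) x := by
      refine h.congr_deriv ?_
      rw [show α-1-1 = α-2 by ring]
      simp [hf2]; ring
    exact h'.hasDerivWithinAt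
  have h2 : ∀ x ∈ Icc a b, HasDerivWithinAt f2 (f3 x) (Icc a b) x := by
    intro x hx
    have h := (Real.hasDerivAt_rpow_const (x := x) (p := α-2)
      (Or.inl (hxpos x hx).ne')).const_mul (α*(α-1))
    have h' : HasDerivAt f2 (f3 x) x := by
      refine h.congr_deriv ?_
      rw [show α-2-1 = α-3 by ring]
      simp [hf3]; ring
    exact h'.hasDerivWithinAt
  have hcont3 : ContinuousOn f3 (Icc a b) := by
    intro x hx
    exact (continuousAt_const.mul
      (Real.continuousAt_rpow_const x (α-3) (Or.inl (hxpos x hx).ne'))).continuousWithinAt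
  have hM : ∀ x ∈ Icc a b, |f3 x| ≤ c3 * a^(α-3) := by
    intro x hx
    have hx0 := hxpos x hx
    have habs : |f3 x| = |α*(α-1)*(α-2)| * x^(α-3) := by
      rw [hf3, abs_mul, abs_of_nonneg (Real.rpow_nonneg hx0.le _)]
    rw [habs, hc3def]
    have hmain : x^(α-3) ≤ (1 + (2:ℝ)^(α-3)) * a^(α-3) := by
      have hann : (0:ℝ) ≤ a^(α-3) := Real.rpow_nonneg ha0.le _
      rcases le_or_gt α 3 with h3 | h3
      · have : x^(α-3) ≤ a^(α-3) :=
          Real.rpow_le_rpow_of_nonpos ha0 hx.1 (by linarith)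
        nlinarith [Real.rpow_nonneg (show (0:ℝ) ≤ 2 by norm_num) (α-3)]
      · have hx2a : x ≤ 2*a := by
          have := hx.2
          simp only [hbdef] at this
          linarith
        have h1' : x^(α-3) ≤ (2*a)^(α-3) :=
          Real.rpow_le_rpow hx0.le hx2a (by linarith)
        have h2' : (2*a)^(α-3) = (2:ℝ)^(α-3) * a^(α-3) :=
          Real.mul_rpow (by norm_num) ha0.le
        nlinarith [h1', h2' ▸ h1']
    calc |α*(α-1)*(α-2)| * x^(α-3)
        ≤ |α*(α-1)*(α-2)| * ((1 + (2:ℝ)^(α-3)) * a^(α-3)) :=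
          mul_le_mul_of_nonneg_left hmain (abs_nonneg _)
      _ = |α*(α-1)*(α-2)| * (1 + (2:ℝ)^(α-3)) * a^(α-3) := by ring
  have HT := trapezoid_em hab f f1 f2 f3 (c3 * a^(α-3)) h0 h1 h2 hcont3 hM
  have hba : b - a = 1 := by simp [hbdef]
  have hint : (∫ x in a..b, f x) = (b^(α+1) - a^(α+1))/(α+1) := by
    simp only [hf]
    rw [integral_rpow (Or.inl (by linarith : (-1:ℝ) < α))]
  have hkey : ((n:ℝ)+1)^α - (phi α ((n:ℝ)+1) - phi α (n:ℝ))
      = (b-a)/2 * (f a + f b) - (∫ x in a..b, f x) - (b-a)^2/12 * (f1 b - f1 a) := by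
    rw [hint, hba]
    simp only [phi, hf, hf1, ← hadef, ← hbdef]
    ring
  rw [hkey]
  calc _ ≤ (b-a)^4 * (c3 * a^(α-3)) / 12 := HT
    _ = c3/12 * (n:ℝ)^(α-3) := by rw [hba, hadef]; ring

lemma pow_sum_asym (α : ℝ) (hα : 0 < α) (hα2 : α ≠ 2) :
    ∃ Z C : ℝ, 0 ≤ C ∧ ∀ n : ℕ, 1 ≤ n →
      |(∑ j ∈ Finset.Icc 1 n, (j:ℝ)^α) - phi α (n:ℝ) - Z| ≤ C * (n:ℝ)^(α-2) := by
  obtain ⟨K, hK, hKb⟩ := step_bound α hα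
  set A : ℕ → ℝ := fun n => (∑ j ∈ Finset.Icc 1 n, (j:ℝ)^α) - phi α (n:ℝ) with hA
  set e : ℕ → ℝ := fun n => A (n+1) - A n with he
  have ha : ∀ n : ℕ, A (n+1) = A n + e n := fun n => by simp [he]
  have heb : ∀ n : ℕ, 1 ≤ n → |e n| ≤ K * (n:ℝ)^(α-3) := by
    intro n hn
    have hsum : (∑ j ∈ Finset.Icc 1 (n+1), (j:ℝ)^α)
        = (∑ j ∈ Finset.Icc 1 n, (j:ℝ)^α) + ((n:ℝ)+1)^α := by
      rw [Finset.sum_Icc_succ_top (by omega : 1 ≤ n + 1)]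
      push_cast
      ring
    have : e n = ((n:ℝ)+1)^α - (phi α ((n:ℝ)+1) - phi α (n:ℝ)) := by
      simp only [he, hA, hsum]
      push_cast
      ring
    rw [this]
    exact hKb n hn
  rcases lt_or_gt_of_ne hα2 with hlt | hgt
  · obtain ⟨Z, C, hC, hZ⟩ := seq_approx_conv A e K (α-3) (by linarith) hK ha heb
    refine ⟨Z, C, hC, ?_⟩
    intro n hn
    have := hZ n hn
    rwa [show α-3+1 = α-2 by ring] at this
  · obtain ⟨C, hC, hZ⟩ := seq_approx_bdd A e K (α-3) (by linarith) hK ha heb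
    refine ⟨0, C, hC, ?_⟩
    intro n hn
    have := hZ n hn
    rw [show α-3+1 = α-2 by ring] at this
    simpa using this


open MeasureTheory Set Filter Topology intervalIntegral

lemma reflect_sum (α : ℝ) (n : ℕ) :
    (∑ k ∈ Finset.Icc 1 (n-1), ((n-k : ℕ):ℝ)^α) = ∑ j ∈ Finset.Icc 1 (n-1), (j:ℝ)^α := by
  apply Finset.sum_nbij' (i := fun k => n - k) (j := fun k => n - k)
  · intro a ha
    rw [Finset.mem_Icc] at *
    omega
  · intro a ha
    rw [Finset.mem_Icc] at *
    omega
  · intro a ha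
    rw [Finset.mem_Icc] at ha
    omega
  · intro a ha
    rw [Finset.mem_Icc] at ha
    omega
  · intro a ha
    rfl

lemma T_pow (α : ℝ) (hα : 0 < α) (n : ℕ) (hn : 1 ≤ n) :
    T (fun x => (1-x)^α) n
      = 1/(2*(n:ℝ)) + (1/(n:ℝ)) * ((1/(n:ℝ)^α) * ∑ j ∈ Finset.Icc 1 (n-1), (j:ℝ)^α) := by
  have hn0 : (0:ℝ) < (n:ℝ) := by exact_mod_cast hn
  unfold T
  have h0 : ((1:ℝ) - 0)^α = 1 := by rw [sub_zero, Real.one_rpow]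
  have h1 : ((1:ℝ) - 1)^α = 0 := by rw [sub_self, Real.zero_rpow hα.ne']
  beta_reduce
  rw [h0, h1]
  have hterm : ∀ k ∈ Finset.Icc 1 (n-1),
      (1/(n:ℝ)) * (1 - (k:ℝ)/(n:ℝ))^α = (1/(n:ℝ)) * (((n-k:ℕ):ℝ)^α / (n:ℝ)^α) := by
    intro k hk
    rw [Finset.mem_Icc] at hk
    have hkn : k ≤ n := by omega
    have hcast : ((n-k:ℕ):ℝ) = (n:ℝ) - (k:ℝ) := Nat.cast_sub hkn
    have hkle : (k:ℝ) ≤ (n:ℝ) := by exact_mod_cast hkn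
    have heq : 1 - (k:ℝ)/(n:ℝ) = ((n:ℝ) - (k:ℝ))/(n:ℝ) := by field_simp
    rw [heq, ← hcast, Real.div_rpow (by rw [hcast]; linarith) hn0.le]
  rw [Finset.sum_congr rfl hterm]
  have : (∑ k ∈ Finset.Icc 1 (n-1), (1/(n:ℝ)) * (((n-k:ℕ):ℝ)^α / (n:ℝ)^α))
      = (1/(n:ℝ)) * ((1/(n:ℝ)^α) * ∑ k ∈ Finset.Icc 1 (n-1), ((n-k:ℕ):ℝ)^α) := by
    rw [Finset.mul_sum, Finset.mul_sum]
    apply Finset.sum_congr rfl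
    intro k _
    ring
  rw [this, reflect_sum]
  ring

lemma int_pow (α : ℝ) (hα : 0 < α) : (∫ x in (0:ℝ)..1, (1-x)^α) = 1/(α+1) := by
  have h := intervalIntegral.integral_comp_sub_left (a := (0:ℝ)) (b := 1)
    (fun y : ℝ => y^α) 1
  norm_num at h
  rw [h, integral_rpow (Or.inl (by linarith : (-1:ℝ) < α))]
  rw [Real.one_rpow, Real.zero_rpow (by linarith : α + 1 ≠ 0)]
  norm_num

lemma E_pow (α : ℝ) (hα : 0 < α) (hα2 : α ≠ 2) (hcase : α = 1/2 ∨ 3/2 ≤ α) :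
    ∃ A B C : ℝ, 0 ≤ C ∧ ∀ n : ℕ, 1 ≤ n →
      |Efn (fun x => (1-x)^α) n - (A * (n:ℝ)^((1:ℝ)/2) + B)| ≤ C * (n:ℝ)^(-(1:ℝ)/2) := by
  obtain ⟨Z, C, hC, hZ⟩ := pow_sum_asym α hα hα2
  have key : ∀ n : ℕ, 1 ≤ n →
      Efn (fun x => (1-x)^α) n
        = -α/12 - (n:ℝ)^((1:ℝ)-α) * (Z + ((∑ j ∈ Finset.Icc 1 n, (j:ℝ)^α) - phi α (n:ℝ) - Z)) := by
    intro n hn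
    have hn0 : (0:ℝ) < (n:ℝ) := by exact_mod_cast hn
    have hq0 : (0:ℝ) < (n:ℝ)^α := Real.rpow_pos_of_pos hn0 α
    have hSn : (∑ j ∈ Finset.Icc 1 n, (j:ℝ)^α)
        = (∑ j ∈ Finset.Icc 1 (n-1), (j:ℝ)^α) + (n:ℝ)^α := by
      have hrw : n - 1 + 1 = n := by omega
      conv_lhs => rw [← hrw]
      rw [Finset.sum_Icc_succ_top (by omega : 1 ≤ (n-1)+1)]
      rw [hrw]
    unfold Efn
    rw [T_pow α hα n hn, int_pow α hα]
    have hp1 : (n:ℝ)^(α+(1:ℝ)) = (n:ℝ)^α * (n:ℝ) := by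
      rw [Real.rpow_add hn0, Real.rpow_one]
    have hp2 : (n:ℝ)^(α-(1:ℝ)) = (n:ℝ)^α / (n:ℝ) := by
      rw [Real.rpow_sub hn0, Real.rpow_one]
    have hp3 : (n:ℝ)^((1:ℝ)-α) = (n:ℝ) / (n:ℝ)^α := by
      rw [Real.rpow_sub hn0, Real.rpow_one]
    rw [hSn]
    unfold phi
    rw [hp1, hp2, hp3]
    have hα1 : α + 1 ≠ 0 := by linarith
    field_simp
    ring
  rcases hcase with h12 | h32
  · -- α = 1/2 : A = -Z, B = -α/12
    refine ⟨-Z, -α/12, C, hC, ?_⟩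
    intro n hn
    have hn0 : (0:ℝ) < (n:ℝ) := by exact_mod_cast hn
    have hn1 : (1:ℝ) ≤ (n:ℝ) := by exact_mod_cast hn
    rw [key n hn]
    set δ : ℝ := (∑ j ∈ Finset.Icc 1 n, (j:ℝ)^α) - phi α (n:ℝ) - Z with hδ
    have h1α : (1:ℝ) - α = 1/2 := by rw [h12]; norm_num
    have hexpr : -α/12 - (n:ℝ)^((1:ℝ)-α) * (Z + δ) - (-Z * (n:ℝ)^((1:ℝ)/2) + -α/12)
        = -((n:ℝ)^((1:ℝ)/2) * δ) := by
      rw [h1α]; ring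
    rw [hexpr, abs_neg, abs_mul,
      abs_of_nonneg (Real.rpow_nonneg hn0.le _)]
    have hδb : |δ| ≤ C * (n:ℝ)^(α-2) := hZ n hn
    calc (n:ℝ)^((1:ℝ)/2) * |δ| ≤ (n:ℝ)^((1:ℝ)/2) * (C * (n:ℝ)^(α-2)) :=
          mul_le_mul_of_nonneg_left hδb (Real.rpow_nonneg hn0.le _)
      _ = C * (n:ℝ)^((1:ℝ)/2 + (α-2)) := by
          rw [Real.rpow_add hn0]; ring
      _ ≤ C * (n:ℝ)^(-(1:ℝ)/2) := by
          apply mul_le_mul_of_nonneg_left _ hC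
          apply Real.rpow_le_rpow_of_exponent_le hn1
          rw [h12]; norm_num
  · -- 3/2 ≤ α : A = 0, B = -α/12
    refine ⟨0, -α/12, |Z| + C, by positivity, ?_⟩
    intro n hn
    have hn0 : (0:ℝ) < (n:ℝ) := by exact_mod_cast hn
    have hn1 : (1:ℝ) ≤ (n:ℝ) := by exact_mod_cast hn
    rw [key n hn]
    set δ : ℝ := (∑ j ∈ Finset.Icc 1 n, (j:ℝ)^α) - phi α (n:ℝ) - Z with hδ
    have hexpr : -α/12 - (n:ℝ)^((1:ℝ)-α) * (Z + δ) - (0 * (n:ℝ)^((1:ℝ)/2) + -α/12)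
        = -((n:ℝ)^((1:ℝ)-α) * Z + (n:ℝ)^((1:ℝ)-α) * δ) := by ring
    rw [hexpr, abs_neg]
    have hpnn : (0:ℝ) ≤ (n:ℝ)^((1:ℝ)-α) := Real.rpow_nonneg hn0.le _
    have hδb : |δ| ≤ C * (n:ℝ)^(α-2) := hZ n hn
    have hb1 : |(n:ℝ)^((1:ℝ)-α) * Z| ≤ |Z| * (n:ℝ)^(-(1:ℝ)/2) := by
      rw [abs_mul, abs_of_nonneg hpnn, mul_comm]
      apply mul_le_mul_of_nonneg_left _ (abs_nonneg Z)
      apply Real.rpow_le_rpow_of_exponent_le hn1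
      linarith
    have hb2 : |(n:ℝ)^((1:ℝ)-α) * δ| ≤ C * (n:ℝ)^(-(1:ℝ)/2) := by
      rw [abs_mul, abs_of_nonneg hpnn]
      calc (n:ℝ)^((1:ℝ)-α) * |δ| ≤ (n:ℝ)^((1:ℝ)-α) * (C * (n:ℝ)^(α-2)) :=
            mul_le_mul_of_nonneg_left hδb hpnn
        _ = C * (n:ℝ)^((1:ℝ)-α + (α-2)) := by rw [Real.rpow_add hn0]; ring
        _ ≤ C * (n:ℝ)^(-(1:ℝ)/2) := by
            apply mul_le_mul_of_nonneg_left _ hC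
            apply Real.rpow_le_rpow_of_exponent_le hn1
            norm_num
    calc |(n:ℝ)^((1:ℝ)-α) * Z + (n:ℝ)^((1:ℝ)-α) * δ|
        ≤ |(n:ℝ)^((1:ℝ)-α) * Z| + |(n:ℝ)^((1:ℝ)-α) * δ| := abs_add_le _ _
      _ ≤ (|Z| + C) * (n:ℝ)^(-(1:ℝ)/2) := by linarith [hb1, hb2]


open MeasureTheory Set Filter Topology intervalIntegral

lemma trap_sum (a : ℕ → ℝ) (m : ℕ) :
    ∑ k ∈ Finset.range (m+1), (a k + a (k+1))
      = a 0 + a (m+1) + 2 * ∑ k ∈ Finset.Icc 1 m, a k := by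
  induction m with
  | zero => simp
  | succ m ih =>
      rw [Finset.sum_range_succ, ih, Finset.sum_Icc_succ_top (by omega : 1 ≤ m + 1)]
      ring

lemma E_smooth (Fb : ℝ → ℝ) (hFb : ContDiffOn ℝ 4 Fb (Set.Icc (0:ℝ) 1)) :
    ∃ B C : ℝ, 0 ≤ C ∧ ∀ n : ℕ, 1 ≤ n →
      |Efn Fb n - B| ≤ C * (n:ℝ)^(-(1:ℝ)/2) := by
  set s : Set ℝ := Set.Icc (0:ℝ) 1 with hs
  have hu : UniqueDiffOn ℝ s := uniqueDiffOn_Icc one_pos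
  set g1 : ℝ → ℝ := derivWithin Fb s with hg1
  set g2 : ℝ → ℝ := derivWithin g1 s with hg2
  set g3 : ℝ → ℝ := derivWithin g2 s with hg3
  have hFb1 : ContDiffOn ℝ 3 g1 s := hFb.derivWithin hu (by norm_num)
  have hFb2 : ContDiffOn ℝ 2 g2 s := hFb1.derivWithin hu (by norm_num)
  have hFb3 : ContDiffOn ℝ 1 g3 s := hFb2.derivWithin hu (by norm_num)
  have d0 : ∀ x ∈ s, HasDerivWithinAt Fb (g1 x) s x := fun x hx =>
    ((hFb.differentiableOn (by norm_num)) x hx).hasDerivWithinAt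
  have d1 : ∀ x ∈ s, HasDerivWithinAt g1 (g2 x) s x := fun x hx =>
    ((hFb1.differentiableOn (by norm_num)) x hx).hasDerivWithinAt
  have d2 : ∀ x ∈ s, HasDerivWithinAt g2 (g3 x) s x := fun x hx =>
    ((hFb2.differentiableOn (by norm_num)) x hx).hasDerivWithinAt
  have hc3 : ContinuousOn g3 s := hFb3.continuousOn
  obtain ⟨M, hM⟩ := (isCompact_Icc (a := (0:ℝ)) (b := 1)).exists_bound_of_continuousOn hc3
  have hM0 : 0 ≤ M := le_trans (norm_nonneg _) (hM 0 (by constructor <;> norm_num))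
  refine ⟨-(g1 1 - g1 0)/12, M/12, by positivity, ?_⟩
  intro n hn
  have hn0 : (0:ℝ) < (n:ℝ) := by exact_mod_cast hn
  set P : ℕ → ℝ := fun k => (k:ℝ)/(n:ℝ) with hP
  have hP0 : P 0 = 0 := by simp [hP]
  have hPn : P n = 1 := by simp [hP]; omega
  have hPstep : ∀ k : ℕ, P (k+1) - P k = 1/(n:ℝ) := by
    intro k; simp only [hP]; push_cast; field_simp; ring
  have hPlt : ∀ k : ℕ, P k < P (k+1) := by
    intro k
    have := hPstep k
    have : (0:ℝ) < 1/(n:ℝ) := by positivity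
    linarith [hPstep k]
  have hsub : ∀ k : ℕ, k < n → Set.Icc (P k) (P (k+1)) ⊆ s := by
    intro k hk x hx
    constructor
    · have : 0 ≤ P k := by positivity
      linarith [hx.1]
    · have : P (k+1) ≤ 1 := by
        simp only [hP]
        rw [div_le_one hn0]
        push_cast
        exact_mod_cast Nat.succ_le_of_lt hk
      linarith [hx.2]
  -- per-interval errors
  set err : ℕ → ℝ := fun k =>
    (P (k+1) - P k)/2 * (Fb (P k) + Fb (P (k+1))) - (∫ x in P k..P (k+1), Fb x)
      - (P (k+1) - P k)^2/12 * (g1 (P (k+1)) - g1 (P k)) with herr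
  have herrb : ∀ k : ℕ, k < n → |err k| ≤ (1/(n:ℝ))^4 * M / 12 := by
    intro k hk
    have hsubk := hsub k hk
    have h0' : ∀ x ∈ Set.Icc (P k) (P (k+1)), HasDerivWithinAt Fb (g1 x) (Set.Icc (P k) (P (k+1))) x :=
      fun x hx => (d0 x (hsubk hx)).mono hsubk
    have h1' : ∀ x ∈ Set.Icc (P k) (P (k+1)), HasDerivWithinAt g1 (g2 x) (Set.Icc (P k) (P (k+1))) x :=
      fun x hx => (d1 x (hsubk hx)).mono hsubk
    have h2' : ∀ x ∈ Set.Icc (P k) (P (k+1)), HasDerivWithinAt g2 (g3 x) (Set.Icc (P k) (P (k+1))) x :=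
      fun x hx => (d2 x (hsubk hx)).mono hsubk
    have hc3' : ContinuousOn g3 (Set.Icc (P k) (P (k+1))) := hc3.mono hsubk
    have hM' : ∀ x ∈ Set.Icc (P k) (P (k+1)), |g3 x| ≤ M := fun x hx => hM x (hsubk hx)
    have := trapezoid_em (hPlt k) Fb g1 g2 g3 M h0' h1' h2' hc3' hM'
    rw [hPstep k] at this
    simp only [herr]
    rw [hPstep k]
    exact this
  -- the sum of errors
  have hintk : ∀ k : ℕ, k < n → IntervalIntegrable Fb volume (P k) (P (k+1)) := by
    intro k hk
    apply ContinuousOn.intervalIntegrable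
    rw [Set.uIcc_of_le (hPlt k).le]
    exact hFb.continuousOn.mono (hsub k hk)
  have hadj : (∑ k ∈ Finset.range n, ∫ x in P k..P (k+1), Fb x) = ∫ x in (0:ℝ)..1, Fb x := by
    rw [intervalIntegral.sum_integral_adjacent_intervals hintk, hP0, hPn]
  have htel : (∑ k ∈ Finset.range n, (g1 (P (k+1)) - g1 (P k))) = g1 1 - g1 0 := by
    have := Finset.sum_range_sub (fun k => g1 (P k)) n
    rw [this, hP0, hPn]
  have htrap : (∑ k ∈ Finset.range n, (P (k+1) - P k)/2 * (Fb (P k) + Fb (P (k+1))))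
      = T Fb n := by
    have hrw : n = (n-1) + 1 := by omega
    have h1 : (∑ k ∈ Finset.range n, (P (k+1) - P k)/2 * (Fb (P k) + Fb (P (k+1))))
        = (1/(2*(n:ℝ))) * ∑ k ∈ Finset.range n, (Fb (P k) + Fb (P (k+1))) := by
      rw [Finset.mul_sum]
      apply Finset.sum_congr rfl
      intro k _
      rw [hPstep k]
      ring
    rw [h1]
    conv_lhs => rw [hrw]
    rw [trap_sum (fun k => Fb (P k)) (n-1)]
    rw [← hrw, hP0, hPn]
    unfold T
    simp only [hP]
    rw [← Finset.mul_sum]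
    field_simp
  have hsumerr : (∑ k ∈ Finset.range n, err k)
      = T Fb n - (∫ x in (0:ℝ)..1, Fb x) - (1/(n:ℝ))^2/12 * (g1 1 - g1 0) := by
    simp only [herr]
    rw [Finset.sum_sub_distrib, Finset.sum_sub_distrib, hadj, htrap]
    congr 1
    have h3 : ∀ k ∈ Finset.range n, (P (k+1) - P k)^2/12 * (g1 (P (k+1)) - g1 (P k))
        = (1/(n:ℝ))^2/12 * (g1 (P (k+1)) - g1 (P k)) := by
      intro k _
      rw [hPstep k]
    rw [Finset.sum_congr rfl h3, ← Finset.mul_sum, htel]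
  have herrsum : |∑ k ∈ Finset.range n, err k| ≤ (n:ℝ) * ((1/(n:ℝ))^4 * M / 12) := by
    calc |∑ k ∈ Finset.range n, err k| ≤ ∑ k ∈ Finset.range n, |err k| :=
          Finset.abs_sum_le_sum_abs _ _
      _ ≤ ∑ _k ∈ Finset.range n, (1/(n:ℝ))^4 * M / 12 := by
          apply Finset.sum_le_sum
          intro k hk
          exact herrb k (Finset.mem_range.mp hk)
      _ = (n:ℝ) * ((1/(n:ℝ))^4 * M / 12) := by
          rw [Finset.sum_const, Finset.card_range]
          simp [nsmul_eq_mul]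
  -- final
  have hkey : Efn Fb n - (-(g1 1 - g1 0)/12) = -((n:ℝ)^2 * ∑ k ∈ Finset.range n, err k) := by
    unfold Efn
    rw [hsumerr]
    field_simp
    ring
  rw [hkey, abs_neg, abs_mul, abs_of_nonneg (by positivity : (0:ℝ) ≤ (n:ℝ)^2)]
  calc (n:ℝ)^2 * |∑ k ∈ Finset.range n, err k|
      ≤ (n:ℝ)^2 * ((n:ℝ) * ((1/(n:ℝ))^4 * M / 12)) :=
        mul_le_mul_of_nonneg_left herrsum (by positivity)
    _ = M/12 * (1/(n:ℝ)) := by field_simp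
    _ ≤ M/12 * (n:ℝ)^(-(1:ℝ)/2) := by
        apply mul_le_mul_of_nonneg_left _ (by positivity)
        have h1 : (1/(n:ℝ)) = (n:ℝ)^(-(1:ℝ)) := by
          rw [Real.rpow_neg_one]
          rw [inv_eq_one_div]
        rw [h1]
        apply Real.rpow_le_rpow_of_exponent_le (by exact_mod_cast hn)
        norm_num


open MeasureTheory Set Filter Topology intervalIntegral

lemma cont_pow (α : ℝ) (hα : 0 < α) : Continuous (fun x : ℝ => (1-x)^α) := by
  have h1 : Continuous (fun y : ℝ => y^α) :=
    continuous_iff_continuousAt.mpr (fun y => Real.continuousAt_rpow_const y α (Or.inr hα.le))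
  exact h1.comp (continuous_const.sub continuous_id)

lemma abs_add5 (a b c d e : ℝ) : |a+b+c+d+e| ≤ |a|+|b|+|c|+|d|+|e| := by
  calc |a+b+c+d+e| ≤ |a+b+c+d| + |e| := abs_add_le _ _
    _ ≤ (|a+b+c| + |d|) + |e| := by linarith [abs_add_le (a+b+c) d]
    _ ≤ ((|a+b| + |c|) + |d|) + |e| := by linarith [abs_add_le (a+b) c]
    _ ≤ |a|+|b|+|c|+|d|+|e| := by linarith [abs_add_le a b]

lemma sqrt_diff_le (n : ℕ) (hn : 1 ≤ n) :
    ((n:ℝ)+1)^((1:ℝ)/2) - (n:ℝ)^((1:ℝ)/2) ≤ (n:ℝ)^(-(1:ℝ)/2) := by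
  have hn0 : (0:ℝ) < (n:ℝ) := by exact_mod_cast hn
  have hs0 : 0 < Real.sqrt (n:ℝ) := Real.sqrt_pos.mpr hn0
  have hrhs : (n:ℝ)^(-(1:ℝ)/2) = 1/Real.sqrt (n:ℝ) := by
    rw [show (-(1:ℝ)/2) = -(1/2) by norm_num, Real.rpow_neg hn0.le, Real.sqrt_eq_rpow,
      inv_eq_one_div]
  rw [hrhs, ← Real.sqrt_eq_rpow, ← Real.sqrt_eq_rpow]
  have hsq : (Real.sqrt (n:ℝ))^2 = (n:ℝ) := Real.sq_sqrt hn0.le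
  have hmul : Real.sqrt (n:ℝ) * (1/Real.sqrt (n:ℝ)) = 1 := mul_one_div_cancel hs0.ne'
  have hle : (n:ℝ)+1 ≤ (Real.sqrt (n:ℝ) + 1/Real.sqrt (n:ℝ))^2 := by
    nlinarith [sq_nonneg (1/Real.sqrt (n:ℝ))]
  have := Real.sqrt_le_sqrt hle
  rw [Real.sqrt_sq (by positivity)] at this
  linarith

end RiemannAux

open RiemannAux in
set_option maxHeartbeats 1000000 in
/-- Proposition 1, item 2, for z₀ = 0: if
F₁(x) = c₁(1-x)^{1/2} + c₂(1-x)^{3/2} + c₃(1-x)^{5/2} + c₄(1-x)^{7/2} + Fb(x)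
on [0,1] with Fb ∈ C⁴[0,1], then the Riemann sum errors Rₙ satisfy
|(n+1)² R_{n+1} − n² Rₙ| ≤ L̄₁ / n^{1/2} for all n ≥ N. -/
theorem riemann_error_sqrt_second_difference_zero
    (N : ℕ) (hN : 0 < N) (F₁ Fb : ℝ → ℝ) (c₁ c₂ c₃ c₄ : ℝ)
    (hFb : ContDiffOn ℝ 4 Fb (Set.Icc (0 : ℝ) 1))
    (hrep : ∀ x ∈ Set.Icc (0 : ℝ) 1,
      F₁ x = c₁ * (1 - x) ^ ((1 : ℝ)/2) + c₂ * (1 - x) ^ ((3 : ℝ)/2)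
        + c₃ * (1 - x) ^ ((5 : ℝ)/2) + c₄ * (1 - x) ^ ((7 : ℝ)/2) + Fb x) :
    ∃ L₁ > (0 : ℝ), ∀ n : ℕ, N ≤ n →
      |((n : ℝ) + 1)^2 *
          ((∫ x in (0 : ℝ)..1, F₁ x) -
            ((1/(2*((n : ℝ) + 1))) * F₁ 0 + (1/(2*((n : ℝ) + 1))) * F₁ 1 +
              ∑ k ∈ Finset.Icc 1 ((n + 1) - 1),
                (1/((n : ℝ) + 1)) * F₁ ((k : ℝ)/((n : ℝ) + 1))))
        - (n : ℝ)^2 *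
          ((∫ x in (0 : ℝ)..1, F₁ x) -
            ((1/(2*(n : ℝ))) * F₁ 0 + (1/(2*(n : ℝ))) * F₁ 1 +
              ∑ k ∈ Finset.Icc 1 (n - 1),
                (1/(n : ℝ)) * F₁ ((k : ℝ)/(n : ℝ))))|
        ≤ L₁ / (n : ℝ) ^ ((1 : ℝ)/2) := by
  set f1 : ℝ → ℝ := fun x => (1-x)^((1:ℝ)/2) with hf1
  set f2 : ℝ → ℝ := fun x => (1-x)^((3:ℝ)/2) with hf2
  set f3 : ℝ → ℝ := fun x => (1-x)^((5:ℝ)/2) with hf3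
  set f4 : ℝ → ℝ := fun x => (1-x)^((7:ℝ)/2) with hf4
  -- linearity of T and the integral
  have hIcc01 : Set.uIcc (0:ℝ) 1 = Set.Icc 0 1 := Set.uIcc_of_le (by norm_num)
  have hi1 : IntervalIntegrable f1 volume 0 1 := (cont_pow _ (by norm_num)).intervalIntegrable _ _
  have hi2 : IntervalIntegrable f2 volume 0 1 := (cont_pow _ (by norm_num)).intervalIntegrable _ _
  have hi3 : IntervalIntegrable f3 volume 0 1 := (cont_pow _ (by norm_num)).intervalIntegrable _ _
  have hi4 : IntervalIntegrable f4 volume 0 1 := (cont_pow _ (by norm_num)).intervalIntegrable _ _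
  have hi5 : IntervalIntegrable Fb volume 0 1 := by
    apply ContinuousOn.intervalIntegrable
    rw [hIcc01]
    exact hFb.continuousOn
  have hintlin : (∫ x in (0:ℝ)..1, F₁ x)
      = c₁ * (∫ x in (0:ℝ)..1, f1 x) + c₂ * (∫ x in (0:ℝ)..1, f2 x)
        + c₃ * (∫ x in (0:ℝ)..1, f3 x) + c₄ * (∫ x in (0:ℝ)..1, f4 x)
        + (∫ x in (0:ℝ)..1, Fb x) := by
    have hcongr : (∫ x in (0:ℝ)..1, F₁ x)
        = ∫ x in (0:ℝ)..1, (c₁ * f1 x + c₂ * f2 x + c₃ * f3 x + c₄ * f4 x + Fb x) := by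
      apply intervalIntegral.integral_congr
      intro x hx
      rw [hIcc01] at hx
      exact hrep x hx
    rw [hcongr]
    rw [intervalIntegral.integral_add (((((hi1.const_mul c₁).add (hi2.const_mul c₂)).add
        (hi3.const_mul c₃)).add (hi4.const_mul c₄))) hi5]
    rw [intervalIntegral.integral_add ((((hi1.const_mul c₁).add (hi2.const_mul c₂)).add
        (hi3.const_mul c₃))) (hi4.const_mul c₄)]
    rw [intervalIntegral.integral_add (((hi1.const_mul c₁).add (hi2.const_mul c₂))) (hi3.const_mul c₃)]
    rw [intervalIntegral.integral_add ((hi1.const_mul c₁)) (hi2.const_mul c₂)]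
    rw [intervalIntegral.integral_const_mul, intervalIntegral.integral_const_mul, intervalIntegral.integral_const_mul, intervalIntegral.integral_const_mul]
  have hTlin : ∀ n : ℕ, 1 ≤ n → T F₁ n
      = c₁ * T f1 n + c₂ * T f2 n + c₃ * T f3 n + c₄ * T f4 n + T Fb n := by
    intro n hn
    have hn0 : (0:ℝ) < (n:ℝ) := by exact_mod_cast hn
    have h0 : F₁ 0 = c₁ * f1 0 + c₂ * f2 0 + c₃ * f3 0 + c₄ * f4 0 + Fb 0 :=
      hrep 0 (by constructor <;> norm_num)
    have h1 : F₁ 1 = c₁ * f1 1 + c₂ * f2 1 + c₃ * f3 1 + c₄ * f4 1 + Fb 1 :=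
      hrep 1 (by constructor <;> norm_num)
    have hpt : ∀ k ∈ Finset.Icc 1 (n-1),
        (1/(n:ℝ)) * F₁ ((k:ℝ)/(n:ℝ))
          = c₁ * ((1/(n:ℝ)) * f1 ((k:ℝ)/(n:ℝ))) + c₂ * ((1/(n:ℝ)) * f2 ((k:ℝ)/(n:ℝ)))
            + c₃ * ((1/(n:ℝ)) * f3 ((k:ℝ)/(n:ℝ))) + c₄ * ((1/(n:ℝ)) * f4 ((k:ℝ)/(n:ℝ)))
            + (1/(n:ℝ)) * Fb ((k:ℝ)/(n:ℝ)) := by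
      intro k hk
      rw [Finset.mem_Icc] at hk
      have hkn : (k:ℝ) ≤ (n:ℝ) := by exact_mod_cast (by omega : k ≤ n)
      have hmem : (k:ℝ)/(n:ℝ) ∈ Set.Icc (0:ℝ) 1 := by
        constructor
        · positivity
        · rw [div_le_one hn0]; exact hkn
      rw [hrep _ hmem]
      ring
    have hsum : (∑ k ∈ Finset.Icc 1 (n-1), (1/(n:ℝ)) * F₁ ((k:ℝ)/(n:ℝ)))
        = c₁ * (∑ k ∈ Finset.Icc 1 (n-1), (1/(n:ℝ)) * f1 ((k:ℝ)/(n:ℝ)))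
          + c₂ * (∑ k ∈ Finset.Icc 1 (n-1), (1/(n:ℝ)) * f2 ((k:ℝ)/(n:ℝ)))
          + c₃ * (∑ k ∈ Finset.Icc 1 (n-1), (1/(n:ℝ)) * f3 ((k:ℝ)/(n:ℝ)))
          + c₄ * (∑ k ∈ Finset.Icc 1 (n-1), (1/(n:ℝ)) * f4 ((k:ℝ)/(n:ℝ)))
          + (∑ k ∈ Finset.Icc 1 (n-1), (1/(n:ℝ)) * Fb ((k:ℝ)/(n:ℝ))) := by
      rw [Finset.mul_sum, Finset.mul_sum, Finset.mul_sum, Finset.mul_sum,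
        ← Finset.sum_add_distrib, ← Finset.sum_add_distrib, ← Finset.sum_add_distrib,
        ← Finset.sum_add_distrib]
      exact Finset.sum_congr rfl hpt
    unfold T
    rw [h0, h1, hsum]
    ring
  have hElin : ∀ n : ℕ, 1 ≤ n → Efn F₁ n
      = c₁ * Efn f1 n + c₂ * Efn f2 n + c₃ * Efn f3 n + c₄ * Efn f4 n + Efn Fb n := by
    intro n hn
    unfold Efn
    rw [hintlin, hTlin n hn]
    ring
  -- component approximations
  obtain ⟨A₁, B₁, C₁, hC₁, h₁⟩ := E_pow (1/2) (by norm_num) (by norm_num) (Or.inl rfl)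
  obtain ⟨A₂, B₂, C₂, hC₂, h₂⟩ := E_pow (3/2) (by norm_num) (by norm_num) (Or.inr (by norm_num))
  obtain ⟨A₃, B₃, C₃, hC₃, h₃⟩ := E_pow (5/2) (by norm_num) (by norm_num) (Or.inr (by norm_num))
  obtain ⟨A₄, B₄, C₄, hC₄, h₄⟩ := E_pow (7/2) (by norm_num) (by norm_num) (Or.inr (by norm_num))
  obtain ⟨B₅, C₅, hC₅, h₅⟩ := E_smooth Fb hFb
  set A : ℝ := c₁*A₁ + c₂*A₂ + c₃*A₃ + c₄*A₄ with hA
  set B : ℝ := c₁*B₁ + c₂*B₂ + c₃*B₃ + c₄*B₄ + B₅ with hB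
  set C : ℝ := |c₁| * C₁ + |c₂| * C₂ + |c₃| * C₃ + |c₄| * C₄ + C₅ with hC
  have hCnn : 0 ≤ C := by positivity
  have happrox : ∀ n : ℕ, 1 ≤ n →
      |Efn F₁ n - (A * (n:ℝ)^((1:ℝ)/2) + B)| ≤ C * (n:ℝ)^(-(1:ℝ)/2) := by
    intro n hn
    have hn0 : (0:ℝ) < (n:ℝ) := by exact_mod_cast hn
    have hρ : (0:ℝ) ≤ (n:ℝ)^(-(1:ℝ)/2) := Real.rpow_nonneg hn0.le _
    have hkey : Efn F₁ n - (A * (n:ℝ)^((1:ℝ)/2) + B)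
        = c₁ * (Efn f1 n - (A₁ * (n:ℝ)^((1:ℝ)/2) + B₁))
          + c₂ * (Efn f2 n - (A₂ * (n:ℝ)^((1:ℝ)/2) + B₂))
          + c₃ * (Efn f3 n - (A₃ * (n:ℝ)^((1:ℝ)/2) + B₃))
          + c₄ * (Efn f4 n - (A₄ * (n:ℝ)^((1:ℝ)/2) + B₄))
          + (Efn Fb n - B₅) := by
      rw [hElin n hn, hA, hB]
      ring
    rw [hkey]
    have b₁ := h₁ n hn; have b₂ := h₂ n hn; have b₃ := h₃ n hn
    have b₄ := h₄ n hn; have b₅ := h₅ n hn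
    calc _ ≤ |c₁ * (Efn f1 n - (A₁ * (n:ℝ)^((1:ℝ)/2) + B₁))|
          + |c₂ * (Efn f2 n - (A₂ * (n:ℝ)^((1:ℝ)/2) + B₂))|
          + |c₃ * (Efn f3 n - (A₃ * (n:ℝ)^((1:ℝ)/2) + B₃))|
          + |c₄ * (Efn f4 n - (A₄ * (n:ℝ)^((1:ℝ)/2) + B₄))|
          + |Efn Fb n - B₅| := abs_add5 _ _ _ _ _
      _ ≤ |c₁| * (C₁ * (n:ℝ)^(-(1:ℝ)/2)) + |c₂| * (C₂ * (n:ℝ)^(-(1:ℝ)/2))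
          + |c₃| * (C₃ * (n:ℝ)^(-(1:ℝ)/2)) + |c₄| * (C₄ * (n:ℝ)^(-(1:ℝ)/2))
          + C₅ * (n:ℝ)^(-(1:ℝ)/2) := by
          have e₁ : |c₁ * (Efn f1 n - (A₁ * (n:ℝ)^((1:ℝ)/2) + B₁))|
              ≤ |c₁| * (C₁ * (n:ℝ)^(-(1:ℝ)/2)) := by
            rw [abs_mul]; exact mul_le_mul_of_nonneg_left b₁ (abs_nonneg _)
          have e₂ : |c₂ * (Efn f2 n - (A₂ * (n:ℝ)^((1:ℝ)/2) + B₂))|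
              ≤ |c₂| * (C₂ * (n:ℝ)^(-(1:ℝ)/2)) := by
            rw [abs_mul]; exact mul_le_mul_of_nonneg_left b₂ (abs_nonneg _)
          have e₃ : |c₃ * (Efn f3 n - (A₃ * (n:ℝ)^((1:ℝ)/2) + B₃))|
              ≤ |c₃| * (C₃ * (n:ℝ)^(-(1:ℝ)/2)) := by
            rw [abs_mul]; exact mul_le_mul_of_nonneg_left b₃ (abs_nonneg _)
          have e₄ : |c₄ * (Efn f4 n - (A₄ * (n:ℝ)^((1:ℝ)/2) + B₄))|
              ≤ |c₄| * (C₄ * (n:ℝ)^(-(1:ℝ)/2)) := by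
            rw [abs_mul]; exact mul_le_mul_of_nonneg_left b₄ (abs_nonneg _)
          linarith
      _ = C * (n:ℝ)^(-(1:ℝ)/2) := by rw [hC]; ring
  -- final bound
  refine ⟨2*C + |A| + 1, by positivity, ?_⟩
  intro n hn
  have hn1 : 1 ≤ n := le_trans hN hn
  have hn0 : (0:ℝ) < (n:ℝ) := by exact_mod_cast hn1
  have hρ : (0:ℝ) ≤ (n:ℝ)^(-(1:ℝ)/2) := Real.rpow_nonneg hn0.le _
  have hEn1 : ((n : ℝ) + 1)^2 *
          ((∫ x in (0 : ℝ)..1, F₁ x) -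
            ((1/(2*((n : ℝ) + 1))) * F₁ 0 + (1/(2*((n : ℝ) + 1))) * F₁ 1 +
              ∑ k ∈ Finset.Icc 1 ((n + 1) - 1),
                (1/((n : ℝ) + 1)) * F₁ ((k : ℝ)/((n : ℝ) + 1))))
        = Efn F₁ (n+1) := by
    unfold Efn T
    push_cast
    ring
  have hEn : (n : ℝ)^2 *
          ((∫ x in (0 : ℝ)..1, F₁ x) -
            ((1/(2*(n : ℝ))) * F₁ 0 + (1/(2*(n : ℝ))) * F₁ 1 +
              ∑ k ∈ Finset.Icc 1 (n - 1),
                (1/(n : ℝ)) * F₁ ((k : ℝ)/(n : ℝ)))) = Efn F₁ n := by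
    unfold Efn T
    ring
  rw [hEn1, hEn]
  have d1 := happrox (n+1) (by omega)
  have d2 := happrox n hn1
  have hmono : ((n:ℝ)+1)^(-(1:ℝ)/2) ≤ (n:ℝ)^(-(1:ℝ)/2) := by
    have hc : ((n+1:ℕ):ℝ) = (n:ℝ)+1 := by push_cast; ring
    rw [show (-(1:ℝ)/2) = -(1/2) by norm_num, Real.rpow_neg (by linarith) (1/2),
      Real.rpow_neg hn0.le (1/2)]
    apply inv_anti₀ (Real.rpow_pos_of_pos hn0 _)
    exact Real.rpow_le_rpow hn0.le (by linarith) (by norm_num)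
  have hd1' : |Efn F₁ (n+1) - (A * ((n:ℝ)+1)^((1:ℝ)/2) + B)| ≤ C * (n:ℝ)^(-(1:ℝ)/2) := by
    have hc : ((n+1:ℕ):ℝ) = (n:ℝ)+1 := by push_cast; ring
    rw [hc] at d1
    calc |Efn F₁ (n+1) - (A * ((n:ℝ)+1)^((1:ℝ)/2) + B)| ≤ C * ((n:ℝ)+1)^(-(1:ℝ)/2) := d1
      _ ≤ C * (n:ℝ)^(-(1:ℝ)/2) := mul_le_mul_of_nonneg_left hmono hCnn
  have hAd : |A * ((n:ℝ)+1)^((1:ℝ)/2) - A * (n:ℝ)^((1:ℝ)/2)| ≤ |A| * (n:ℝ)^(-(1:ℝ)/2) := by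
    rw [← mul_sub, abs_mul]
    apply mul_le_mul_of_nonneg_left _ (abs_nonneg A)
    rw [abs_of_nonneg]
    · exact sqrt_diff_le n hn1
    · have : (n:ℝ)^((1:ℝ)/2) ≤ ((n:ℝ)+1)^((1:ℝ)/2) :=
        Real.rpow_le_rpow hn0.le (by linarith) (by norm_num)
      linarith
  set e1 : ℝ := Efn F₁ (n+1) - (A * ((n:ℝ)+1)^((1:ℝ)/2) + B) with he1
  set e2 : ℝ := Efn F₁ n - (A * (n:ℝ)^((1:ℝ)/2) + B) with he2
  set e3 : ℝ := A * ((n:ℝ)+1)^((1:ℝ)/2) - A * (n:ℝ)^((1:ℝ)/2) with he3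
  have hsplit : Efn F₁ (n+1) - Efn F₁ n = e1 - e2 + e3 := by
    rw [he1, he2, he3]; ring
  have htotal : |Efn F₁ (n+1) - Efn F₁ n| ≤ (2*C + |A|) * (n:ℝ)^(-(1:ℝ)/2) := by
    rw [hsplit]
    have habs : |e1 - e2 + e3| ≤ |e1| + |e2| + |e3| := by
      calc |e1 - e2 + e3| ≤ |e1 - e2| + |e3| := abs_add_le _ _
        _ ≤ |e1| + |e2| + |e3| := by linarith [abs_sub e1 e2]
    have hb1 : |e1| ≤ C * (n:ℝ)^(-(1:ℝ)/2) := hd1'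
    have hb2 : |e2| ≤ C * (n:ℝ)^(-(1:ℝ)/2) := d2
    have hb3 : |e3| ≤ |A| * (n:ℝ)^(-(1:ℝ)/2) := hAd
    calc |e1 - e2 + e3| ≤ |e1| + |e2| + |e3| := habs
      _ ≤ (2*C + |A|) * (n:ℝ)^(-(1:ℝ)/2) := by linarith
  have hfinal : (n:ℝ)^(-(1:ℝ)/2) = 1 / (n:ℝ)^((1:ℝ)/2) := by
    rw [show (-(1:ℝ)/2) = -(1/2) by norm_num, Real.rpow_neg hn0.le, inv_eq_one_div]
  calc |Efn F₁ (n+1) - Efn F₁ n| ≤ (2*C + |A|) * (n:ℝ)^(-(1:ℝ)/2) := htotal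
    _ ≤ (2*C + |A| + 1) * (n:ℝ)^(-(1:ℝ)/2) := by nlinarith [hρ]
    _ = (2*C + |A| + 1) / (n:ℝ)^((1:ℝ)/2) := by rw [hfinal]; ring
end

section
/- Let N ∈ ℕ and let F₂ : [-1, 1) → ℝ be a function that can be represented as F₂(x) = c₁(1-x)^{-1/2} + c₂(1-x)^{1/2} + F̃₂(x), where c₁ > 0, c₂ ∈ ℝ, and F̃₂ is continuously differentiable on [-1, 1]. Then there exists a constant L₂ > 0 (depending on F₂ and N) such that for all n ≥ N, ∫_{-1}^{1} F₂(x) dx − Σ_{k = -n}^{n-1} (1/n) F₂(k/n) ≤ L₂ / n^{1/2}. -/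
open MeasureTheory Set

private lemma sqrt_sub_sqrt_le' {a b : ℝ} (ha : 0 ≤ a) (hab : a ≤ b) :
    Real.sqrt b - Real.sqrt a ≤ Real.sqrt (b - a) := by
  nlinarith [Real.sq_sqrt ha, Real.sq_sqrt (ha.trans hab), Real.sq_sqrt (sub_nonneg.2 hab),
    Real.sqrt_nonneg a, Real.sqrt_nonneg b, Real.sqrt_nonneg (b - a),
    sq_nonneg (Real.sqrt a + Real.sqrt (b - a) - Real.sqrt b),
    mul_nonneg (Real.sqrt_nonneg a) (Real.sqrt_nonneg (b - a))]

private lemma abs_sqrt_sub_sqrt_le' {a b : ℝ} (ha : 0 ≤ a) (hb : 0 ≤ b) :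
    |Real.sqrt a - Real.sqrt b| ≤ Real.sqrt (|a - b|) := by
  rcases le_total a b with h | h
  · rw [abs_sub_comm, abs_of_nonneg (sub_nonneg.2 (Real.sqrt_le_sqrt h)), abs_sub_comm (a := a),
      abs_of_nonneg (sub_nonneg.2 h)]
    exact sqrt_sub_sqrt_le' ha h
  · rw [abs_of_nonneg (sub_nonneg.2 (Real.sqrt_le_sqrt h)), abs_of_nonneg (sub_nonneg.2 h)]
    exact sqrt_sub_sqrt_le' hb h

/-- Proposition 2, upper bound, for z₀ = -1: if F₂(x) = c₁(1-x)^{-1/2} + c₂(1-x)^{1/2} + Ft(x)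
on [-1,1) with c₁ > 0 and Ft ∈ C¹[-1,1], then the error of the left Riemann sum satisfies
∫_{-1}^1 F₂ − Σ_{k=-n}^{n-1} (1/n) F₂(k/n) ≤ L₂ / √n for all n ≥ N. -/
theorem riemann_error_inv_sqrt_upper_neg_one
    (N : ℕ) (hN : 0 < N) (F₂ Ft : ℝ → ℝ) (c₁ c₂ : ℝ) (hc₁ : 0 < c₁)
    (hFt : ContDiffOn ℝ 1 Ft (Set.Icc (-1 : ℝ) 1))
    (hrep : ∀ x ∈ Set.Ico (-1 : ℝ) 1,
      F₂ x = c₁ * (1 - x) ^ (-(1 : ℝ)/2) + c₂ * (1 - x) ^ ((1 : ℝ)/2) + Ft x) :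
    ∃ L₂ > (0 : ℝ), ∀ n : ℕ, N ≤ n →
      (∫ x in (-1 : ℝ)..1, F₂ x) -
          ∑ k ∈ Finset.Icc (-(n : ℤ)) ((n : ℤ) - 1), (1/(n : ℝ)) * F₂ ((k : ℝ)/(n : ℝ))
        ≤ L₂ / Real.sqrt n := by
  -- Lipschitz constant for Ft on [-1,1]
  have huD : UniqueDiffOn ℝ (Icc (-1:ℝ) 1) := uniqueDiffOn_Icc (by norm_num)
  have hFt' : ContinuousOn (derivWithin Ft (Icc (-1:ℝ) 1)) (Icc (-1:ℝ) 1) :=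
    hFt.continuousOn_derivWithin huD le_rfl
  obtain ⟨L0, hL0⟩ := (isCompact_Icc (a := (-1:ℝ)) (b := 1)).exists_bound_of_continuousOn hFt'
  set L : ℝ := max L0 0 with hLdef
  have hLnn : 0 ≤ L := le_max_right _ _
  have hLip : ∀ x ∈ Icc (-1:ℝ) 1, ∀ y ∈ Icc (-1:ℝ) 1, |Ft x - Ft y| ≤ L * |x - y| := by
    intro x hx y hy
    have := (convex_Icc (-1:ℝ) 1).norm_image_sub_le_of_norm_derivWithin_le (C := L)
      (hFt.differentiableOn one_ne_zero) (fun z hz => (hL0 z hz).trans (le_max_left _ _)) hy hx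
    simpa [Real.norm_eq_abs] using this
  -- the three pieces
  set g₁ : ℝ → ℝ := fun x => (1 - x) ^ (-(1:ℝ)/2) with hg₁def
  set h : ℝ → ℝ := fun x => c₂ * Real.sqrt (1 - x) + Ft x with hhdef
  set G : ℝ → ℝ := fun x => c₁ * g₁ x + h x with hGdef
  have hrepG : ∀ x ∈ Ico (-1:ℝ) 1, F₂ x = G x := by
    intro x hx
    rw [hrep x hx, hGdef, hhdef, hg₁def]
    simp only []
    rw [Real.sqrt_eq_rpow]
    ring
  -- Hölder constant
  set K : ℝ := |c₂| + L * Real.sqrt 2 with hKdef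
  have hK0 : 0 ≤ K := by positivity
  have hHolder : ∀ x ∈ Icc (-1:ℝ) 1, ∀ y ∈ Icc (-1:ℝ) 1,
      |h x - h y| ≤ K * Real.sqrt |x - y| := by
    intro x hx y hy
    have h1 : |Real.sqrt (1-x) - Real.sqrt (1-y)| ≤ Real.sqrt |x - y| := by
      have := abs_sqrt_sub_sqrt_le' (a := 1-x) (b := 1-y)
        (by linarith [hx.2]) (by linarith [hy.2])
      rwa [show (1-x) - (1-y) = -(x-y) by ring, abs_neg] at this
    have h2 : |Ft x - Ft y| ≤ L * |x - y| := hLip x hx y hy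
    have h3 : |x - y| ≤ Real.sqrt 2 * Real.sqrt |x - y| := by
      have hxy2 : |x - y| ≤ 2 := by
        rw [abs_le]; constructor <;> linarith [hx.1, hx.2, hy.1, hy.2]
      calc |x - y| = Real.sqrt |x-y| * Real.sqrt |x-y| :=
            (Real.mul_self_sqrt (abs_nonneg _)).symm
        _ ≤ Real.sqrt 2 * Real.sqrt |x-y| :=
            mul_le_mul_of_nonneg_right (Real.sqrt_le_sqrt hxy2) (Real.sqrt_nonneg _)
    calc |h x - h y| = |c₂ * (Real.sqrt (1-x) - Real.sqrt (1-y)) + (Ft x - Ft y)| := by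
          rw [hhdef]; ring_nf
      _ ≤ |c₂ * (Real.sqrt (1-x) - Real.sqrt (1-y))| + |Ft x - Ft y| := abs_add_le _ _
      _ ≤ |c₂| * Real.sqrt |x-y| + L * (Real.sqrt 2 * Real.sqrt |x-y|) := by
          rw [abs_mul]
          exact add_le_add (mul_le_mul_of_nonneg_left h1 (abs_nonneg _))
            (h2.trans (mul_le_mul_of_nonneg_left h3 hLnn))
      _ = K * Real.sqrt |x-y| := by rw [hKdef]; ring
  -- integrability of g₁
  have hIcc : uIcc (1:ℝ) (-1) = Icc (-1:ℝ) 1 := by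
    rw [uIcc_comm, uIcc_of_le (by norm_num : (-1:ℝ) ≤ 1)]
  have hg₁glob : IntervalIntegrable g₁ volume 1 (-1) := by
    have base : IntervalIntegrable (fun x : ℝ => x ^ (-(1:ℝ)/2)) volume 0 2 :=
      intervalIntegral.intervalIntegrable_rpow' (by norm_num)
    have h2 := base.comp_sub_left 1
    rw [show (1:ℝ)-0 = 1 by norm_num, show (1:ℝ)-2 = -1 by norm_num] at h2
    rw [hg₁def]
    exact h2
  have hg₁int : ∀ s t, s ∈ Icc (-1:ℝ) 1 → t ∈ Icc (-1:ℝ) 1 →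
      IntervalIntegrable g₁ volume s t := by
    intro s t hs ht
    exact hg₁glob.mono_set (by rw [hIcc]; exact uIcc_subset_Icc hs ht)
  have hhcont : ContinuousOn h (Icc (-1:ℝ) 1) := by
    rw [hhdef]
    exact (continuousOn_const.mul
      ((Real.continuous_sqrt.comp (continuous_const.sub continuous_id)).continuousOn)).add
      hFt.continuousOn
  have hhint : ∀ s t, s ∈ Icc (-1:ℝ) 1 → t ∈ Icc (-1:ℝ) 1 →
      IntervalIntegrable h volume s t := by
    intro s t hs ht
    exact (hhcont.mono (uIcc_subset_Icc hs ht)).intervalIntegrable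
  have hGint : ∀ s t, s ∈ Icc (-1:ℝ) 1 → t ∈ Icc (-1:ℝ) 1 →
      IntervalIntegrable G volume s t := by
    intro s t hs ht
    rw [hGdef]
    exact ((hg₁int s t hs ht).const_mul c₁).add (hhint s t hs ht)
  refine ⟨3*c₁ + 2*K + 1, by positivity, ?_⟩
  intro n hn
  have hn0 : 0 < n := lt_of_lt_of_le hN hn
  have hnR : (0:ℝ) < n := by exact_mod_cast hn0
  set δ : ℝ := 1/(n:ℝ) with hδdef
  have hδ0 : 0 < δ := by positivity
  set a : ℕ → ℝ := fun i => ((i:ℝ) - n)/n with hadef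
  have hstep : ∀ i : ℕ, a (i+1) = a i + δ := by
    intro i; rw [hadef, hδdef]; push_cast; field_simp; ring
  have ha_mem : ∀ i, i ≤ 2*n → a i ∈ Icc (-1:ℝ) 1 := by
    intro i hi
    have hi' : (i:ℝ) ≤ 2*n := by exact_mod_cast hi
    constructor
    · rw [hadef, le_div_iff₀ hnR]; push_cast; nlinarith [Nat.cast_nonneg (α := ℝ) i]
    · rw [hadef, div_le_one hnR]; push_cast; linarith
  have ha_lt : ∀ i, i < 2*n → a i < 1 := by
    intro i hi
    have hi' : (i:ℝ) < 2*n := by exact_mod_cast hi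
    rw [hadef, div_lt_one hnR]; push_cast; linarith
  have ha0 : a 0 = -1 := by rw [hadef]; push_cast; field_simp; ring
  have ha2n : a (2*n) = 1 := by rw [hadef]; push_cast; field_simp; ring
  -- transfer integral from F₂ to G
  have hintF : (∫ x in (-1:ℝ)..1, F₂ x) = ∫ x in (-1:ℝ)..1, G x := by
    apply intervalIntegral.integral_congr_ae
    rw [MeasureTheory.ae_iff]
    refine measure_mono_null (fun x hx => ?_) (measure_singleton (1:ℝ))
    simp only [mem_setOf_eq, not_forall] at hx
    obtain ⟨hmem, hne⟩ := hx
    rw [Set.uIoc_of_le (by norm_num : (-1:ℝ) ≤ 1)] at hmem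
    simp only [mem_singleton_iff]
    by_contra hx1
    exact hne (hrepG x ⟨le_of_lt hmem.1, lt_of_le_of_ne hmem.2 hx1⟩)
  -- split the integral
  have hsplit : (∫ x in (-1:ℝ)..1, G x)
      = ∑ i ∈ Finset.range (2*n), ∫ x in a i..a (i+1), G x := by
    rw [intervalIntegral.sum_integral_adjacent_intervals
      (fun k hk => hGint _ _ (ha_mem k (by omega)) (ha_mem (k+1) (by omega))), ha0, ha2n]
  -- reindex the Riemann sum
  have hsum : (∑ k ∈ Finset.Icc (-(n:ℤ)) ((n:ℤ)-1), δ * F₂ ((k:ℝ)/(n:ℝ)))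
      = ∑ i ∈ Finset.range (2*n), δ * G (a i) := by
    have hset : Finset.Icc (-(n:ℤ)) ((n:ℤ)-1)
        = (Finset.range (2*n)).map ⟨fun i : ℕ => (i:ℤ) - n, (show Function.Injective (fun i : ℕ => (i:ℤ) - n) from fun x y hxy => by simp only [] at hxy; omega)⟩ := by
      ext k
      simp only [Finset.mem_Icc, Finset.mem_map, Finset.mem_range, Function.Embedding.coeFn_mk]
      constructor
      · rintro ⟨h1, h2⟩
        exact ⟨(k + n).toNat, by omega, by omega⟩
      · rintro ⟨i, hi, rfl⟩
        omega
    rw [hset, Finset.sum_map]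
    apply Finset.sum_congr rfl
    intro i hi
    rw [Finset.mem_range] at hi
    simp only [Function.Embedding.coeFn_mk]
    have hx : (((i:ℤ) - (n:ℤ) : ℤ) : ℝ)/(n:ℝ) = a i := by rw [hadef]; push_cast; ring
    rw [hx, hrepG (a i) ⟨(ha_mem i (by omega)).1, ha_lt i hi⟩]
  -- per-interval decomposition of the error
  have hterm : ∀ i ∈ Finset.range (2*n),
      (∫ x in a i..a (i+1), G x) - δ * G (a i)
      = c₁ * ((∫ x in a i..a (i+1), g₁ x) - δ * g₁ (a i))
        + ((∫ x in a i..a (i+1), h x) - δ * h (a i)) := by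
    intro i hi
    rw [Finset.mem_range] at hi
    have hs := ha_mem i (by omega)
    have ht := ha_mem (i+1) (by omega)
    have hsplitI : (∫ x in a i..a (i+1), G x)
        = c₁ * (∫ x in a i..a (i+1), g₁ x) + ∫ x in a i..a (i+1), h x := by
      rw [hGdef]
      rw [intervalIntegral.integral_add ((hg₁int _ _ hs ht).const_mul c₁) (hhint _ _ hs ht),
        intervalIntegral.integral_const_mul]
    rw [hsplitI, hGdef]
    ring
  -- bound for the h-part on every interval
  have hQ : ∀ i ∈ Finset.range (2*n),
      (∫ x in a i..a (i+1), h x) - δ * h (a i) ≤ K * (δ * Real.sqrt δ) := by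
    intro i hi
    rw [Finset.mem_range] at hi
    have hs := ha_mem i (by omega)
    have ht := ha_mem (i+1) (by omega)
    have hle : a i ≤ a (i+1) := by rw [hstep]; linarith
    have hconst : (∫ _x in a i..a (i+1), h (a i)) = δ * h (a i) := by
      rw [intervalIntegral.integral_const, smul_eq_mul, hstep]; ring
    rw [← hconst,
      ← intervalIntegral.integral_sub (hhint _ _ hs ht) intervalIntegrable_const]
    have hbound := intervalIntegral.norm_integral_le_of_norm_le_const
        (C := K * Real.sqrt δ) (f := fun x => h x - h (a i)) (a := a i) (b := a (i+1)) ?_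
    · have h1 : |a (i+1) - a i| = δ := by
        rw [hstep, abs_of_nonneg (by linarith : (0:ℝ) ≤ a i + δ - a i)]; ring
      rw [Real.norm_eq_abs, h1] at hbound
      calc (∫ x in a i..a (i+1), (h x - h (a i)))
          ≤ |∫ x in a i..a (i+1), (h x - h (a i))| := le_abs_self _
        _ ≤ K * Real.sqrt δ * δ := hbound
        _ = K * (δ * Real.sqrt δ) := by ring
    · intro x hx
      rw [Set.uIoc_of_le hle] at hx
      have hxm : x ∈ Icc (-1:ℝ) 1 := ⟨hs.1.trans (le_of_lt hx.1), hx.2.trans ht.2⟩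
      rw [Real.norm_eq_abs]
      refine (hHolder x hxm (a i) hs).trans ?_
      have hd : |x - a i| ≤ δ := by
        rw [abs_of_nonneg (by linarith [hx.1])]
        have h2 := hx.2
        rw [hstep] at h2
        linarith
      exact mul_le_mul_of_nonneg_left (Real.sqrt_le_sqrt hd) hK0
  -- monotone bound for g₁ on non-final intervals
  have hP : ∀ i, i + 1 < 2*n →
      (∫ x in a i..a (i+1), g₁ x) - δ * g₁ (a i)
        ≤ δ * g₁ (a (i+1)) - δ * g₁ (a i) := by
    intro i hi
    have hs := ha_mem i (by omega)
    have ht := ha_mem (i+1) (by omega)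
    have hlt := ha_lt (i+1) hi
    have hle : a i ≤ a (i+1) := by rw [hstep]; linarith
    have hmono : (∫ x in a i..a (i+1), g₁ x) ≤ ∫ _x in a i..a (i+1), g₁ (a (i+1)) := by
      apply intervalIntegral.integral_mono_on hle (hg₁int _ _ hs ht) intervalIntegrable_const
      intro x hx
      simp only [hg₁def]
      exact Real.rpow_le_rpow_of_nonpos (by linarith) (by linarith [hx.2]) (by norm_num)
    have hconst : (∫ _x in a i..a (i+1), g₁ (a (i+1))) = δ * g₁ (a (i+1)) := by
      rw [intervalIntegral.integral_const, smul_eq_mul, hstep]; ring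
    rw [hconst] at hmono
    linarith
  -- the final interval
  have hlastidx : 2*n - 1 + 1 = 2*n := by omega
  have ha_last : a (2*n - 1) = 1 - δ := by
    have h2 := hstep (2*n-1)
    rw [hlastidx, ha2n] at h2
    linarith
  have hglast : (∫ x in a (2*n-1)..a (2*n), g₁ x) = 2 * Real.sqrt δ := by
    rw [ha_last, ha2n, hg₁def]
    rw [intervalIntegral.integral_comp_sub_left (fun x => x ^ (-(1:ℝ)/2)) 1]
    rw [show (1:ℝ) - 1 = 0 by ring, show (1:ℝ) - (1-δ) = δ by ring]
    rw [integral_rpow (Or.inl (by norm_num))]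
    rw [Real.zero_rpow (by norm_num), Real.sqrt_eq_rpow]
    rw [show (-(1:ℝ)/2 + 1) = 1/2 by norm_num]
    ring
  have hg₁lastnn : 0 ≤ g₁ (a (2*n-1)) := by
    simp only [hg₁def]
    exact Real.rpow_nonneg (by rw [ha_last]; linarith) _
  have hlastbound : (∫ x in a (2*n-1)..a (2*n), g₁ x) - δ * g₁ (a (2*n-1))
      ≤ 2 * Real.sqrt δ := by
    rw [hglast]
    linarith [mul_nonneg hδ0.le hg₁lastnn]
  have hg₁a0 : 0 ≤ g₁ (a 0) := by
    simp only [hg₁def]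
    exact Real.rpow_nonneg (by rw [ha0]; norm_num) _
  have hval : δ * g₁ (a (2*n-1)) ≤ Real.sqrt δ := by
    simp only [hg₁def, ha_last]
    rw [show (1:ℝ) - (1-δ) = δ by ring]
    have h2 : 0 < Real.sqrt δ := Real.sqrt_pos.2 hδ0
    have h1 : δ ^ (-(1:ℝ)/2) = (Real.sqrt δ)⁻¹ := by
      rw [show (-(1:ℝ)/2) = -(1/2) by ring, Real.rpow_neg hδ0.le, Real.sqrt_eq_rpow]
    rw [h1]
    have h3 : δ * (Real.sqrt δ)⁻¹ = Real.sqrt δ := by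
      rw [eq_comm, eq_comm, ← Real.mul_self_sqrt hδ0.le]
      rw [Real.sqrt_mul_self h2.le]; field_simp
    linarith
  have htel : ∑ i ∈ Finset.range (2*n - 1), (δ * g₁ (a (i+1)) - δ * g₁ (a i))
      = δ * g₁ (a (2*n-1)) - δ * g₁ (a 0) :=
    Finset.sum_range_sub (fun i => δ * g₁ (a i)) (2*n-1)
  -- assemble
  rw [hintF, hsplit, hsum, ← Finset.sum_sub_distrib, Finset.sum_congr rfl hterm,
    Finset.sum_add_distrib]
  have hQsum : ∑ i ∈ Finset.range (2*n), ((∫ x in a i..a (i+1), h x) - δ * h (a i))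
      ≤ (2*(n:ℝ)) * (K * (δ * Real.sqrt δ)) := by
    calc ∑ i ∈ Finset.range (2*n), ((∫ x in a i..a (i+1), h x) - δ * h (a i))
        ≤ ∑ _i ∈ Finset.range (2*n), K * (δ * Real.sqrt δ) := Finset.sum_le_sum hQ
      _ = (2*(n:ℝ)) * (K * (δ * Real.sqrt δ)) := by
          rw [Finset.sum_const, Finset.card_range, nsmul_eq_mul]; push_cast; ring
  have hPsum : ∑ i ∈ Finset.range (2*n),
        c₁ * ((∫ x in a i..a (i+1), g₁ x) - δ * g₁ (a i))
      ≤ c₁ * (3 * Real.sqrt δ) := by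
    have h2n : 2*n = (2*n - 1) + 1 := by omega
    rw [h2n, Finset.sum_range_succ, ← h2n]
    have hA : ∑ i ∈ Finset.range (2*n-1), c₁ * ((∫ x in a i..a (i+1), g₁ x) - δ * g₁ (a i))
        ≤ ∑ i ∈ Finset.range (2*n-1), c₁ * (δ * g₁ (a (i+1)) - δ * g₁ (a i)) := by
      apply Finset.sum_le_sum
      intro i hi
      rw [Finset.mem_range] at hi
      exact mul_le_mul_of_nonneg_left (hP i (by omega)) hc₁.le
    have hB : ∑ i ∈ Finset.range (2*n-1), c₁ * (δ * g₁ (a (i+1)) - δ * g₁ (a i))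
        = c₁ * (δ * g₁ (a (2*n-1)) - δ * g₁ (a 0)) := by
      rw [← Finset.mul_sum, htel]
    have hC : c₁ * ((∫ x in a (2*n-1)..a (2*n), g₁ x) - δ * g₁ (a (2*n-1)))
        ≤ c₁ * (2 * Real.sqrt δ) :=
      mul_le_mul_of_nonneg_left hlastbound hc₁.le
    have hD : δ * g₁ (a (2*n-1)) - δ * g₁ (a 0) ≤ Real.sqrt δ := by
      have h4 := mul_nonneg hδ0.le hg₁a0
      linarith
    calc ∑ i ∈ Finset.range (2*n-1), c₁ * ((∫ x in a i..a (i+1), g₁ x) - δ * g₁ (a i))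
          + c₁ * ((∫ x in a (2*n-1)..a (2*n), g₁ x) - δ * g₁ (a (2*n-1)))
        ≤ c₁ * (δ * g₁ (a (2*n-1)) - δ * g₁ (a 0)) + c₁ * (2 * Real.sqrt δ) :=
          add_le_add (hA.trans (le_of_eq hB)) hC
      _ ≤ c₁ * Real.sqrt δ + c₁ * (2 * Real.sqrt δ) :=
          add_le_add_left (mul_le_mul_of_nonneg_left hD hc₁.le) _
      _ = c₁ * (3 * Real.sqrt δ) := by ring
  have hsqrtδ : Real.sqrt δ = 1 / Real.sqrt n := by
    rw [hδdef, one_div, Real.sqrt_inv, one_div]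
  have hsqn : 0 < Real.sqrt n := Real.sqrt_pos.2 hnR
  have hkey : c₁ * (3 * Real.sqrt δ) + (2*(n:ℝ)) * (K * (δ * Real.sqrt δ))
      = (3*c₁ + 2*K) / Real.sqrt n := by
    rw [hsqrtδ, hδdef]
    field_simp
  refine (add_le_add hPsum hQsum).trans ?_
  rw [hkey]
  exact (div_le_div_iff_of_pos_right hsqn).2 (by linarith)
end

section
/- Let N ∈ ℕ and let F₂ : [-1, 1) → ℝ be a function that can be represented as F₂(x) = c₁(1-x)^{-1/2} + c₂(1-x)^{1/2} + F̃₂(x), where c₁ > 0, c₂ ∈ ℝ, and F̃₂ is continuously differentiable on [-1, 1]. Then there exist constants L₂* > c₁ and l₂ (depending on F₂ and N) such that for all n ≥ N, ∫_{-1}^{1} F₂(x) dx − Σ_{k = -n}^{n-1} (1/n) F₂(k/n) ≥ L₂*/n^{1/2} − l₂/n. -/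
open MeasureTheory Set intervalIntegral

lemma aux_sum_sqrt : ∀ m : ℕ, 2 ≤ m →
    ∑ j ∈ Finset.range m, (1:ℝ)/Real.sqrt (j+1) ≤ 2*Real.sqrt m - 11/10 := by
  intro m hm
  induction m, hm using Nat.le_induction with
  | base =>
    rw [Finset.sum_range_succ, Finset.sum_range_one]
    have h2 : Real.sqrt 2 * Real.sqrt 2 = 2 := Real.mul_self_sqrt (by norm_num)
    have h2' : (1.41:ℝ) ≤ Real.sqrt 2 := by nlinarith [Real.sqrt_nonneg 2]
    have h2p : (0:ℝ) < Real.sqrt 2 := by linarith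
    have : (1:ℝ)/Real.sqrt 2 ≤ 0.71 := by rw [div_le_iff₀ h2p]; nlinarith
    norm_num at this ⊢
    linarith
  | succ m hm ih =>
    rw [Finset.sum_range_succ]
    have key : (1:ℝ)/Real.sqrt (m+1) ≤ 2*Real.sqrt (m+1) - 2*Real.sqrt m := by
      have ha : Real.sqrt m * Real.sqrt m = m := Real.mul_self_sqrt (by positivity)
      have hb : Real.sqrt (m+1) * Real.sqrt (m+1) = (m:ℝ)+1 := by
        rw [Real.mul_self_sqrt (by positivity)]
      have hb1 : (1:ℝ) ≤ Real.sqrt (m+1) := by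
        nlinarith [Real.sqrt_nonneg ((m:ℝ)+1)]
      have hab : Real.sqrt m ≤ Real.sqrt (m+1) := Real.sqrt_le_sqrt (by linarith)
      rw [div_le_iff₀ (by linarith)]
      nlinarith [sq_nonneg (Real.sqrt (m+1) - Real.sqrt m), Real.sqrt_nonneg (m:ℝ)]
    push_cast
    push_cast at ih key
    linarith

lemma aux_int1 (a b : ℝ) :
    IntervalIntegrable (fun x : ℝ => (1-x) ^ (-(1:ℝ)/2)) volume a b := by
  have h := (intervalIntegrable_rpow' (a := 1-a) (b := 1-b)
    (show (-1:ℝ) < -(1)/2 by norm_num)).comp_sub_left 1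
  simpa using h

lemma aux_intval1 :
    ∫ x in (-1:ℝ)..1, (1-x) ^ (-(1:ℝ)/2) = 2 * Real.sqrt 2 := by
  rw [intervalIntegral.integral_comp_sub_left (fun u : ℝ => u ^ (-(1:ℝ)/2)) 1]
  norm_num
  have hr := @integral_rpow 0 2 (-(1/2)) (Or.inl (by norm_num))
  rw [hr]
  norm_num
  rw [Real.sqrt_eq_rpow]
  ring

lemma aux_reindex (n : ℕ) (g : ℤ → ℝ) :
    ∑ k ∈ Finset.Icc (-(n:ℤ)) ((n:ℤ)-1), g k = ∑ i ∈ Finset.range (2*n), g ((i:ℤ) - n) := by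
  apply Finset.sum_nbij' (i := fun k : ℤ => (k + n).toNat) (j := fun i : ℕ => (i : ℤ) - n)
  · intro k hk
    simp only [Finset.mem_Icc] at hk
    simp only [Finset.mem_range]
    omega
  · intro i hi
    simp only [Finset.mem_range] at hi
    simp only [Finset.mem_Icc]
    omega
  · intro k hk; simp only [Finset.mem_Icc] at hk; omega
  · intro i hi; simp only [Finset.mem_range] at hi; omega
  · intro k hk
    simp only [Finset.mem_Icc] at hk
    congr 1
    omega

/-- Proposition 2, lower bound, for z₀ = -1: if F₂(x) = c₁(1-x)^{-1/2} + c₂(1-x)^{1/2} + Ft(x)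
on [-1,1) with c₁ > 0 and Ft ∈ C¹[-1,1], then there are L₂* > c₁ and l₂ such that
∫_{-1}^1 F₂ − Σ_{k=-n}^{n-1} (1/n) F₂(k/n) ≥ L₂*/√n − l₂/n for all n ≥ N. -/
theorem riemann_error_inv_sqrt_lower_neg_one
    (N : ℕ) (hN : 0 < N) (F₂ Ft : ℝ → ℝ) (c₁ c₂ : ℝ) (hc₁ : 0 < c₁)
    (hFt : ContDiffOn ℝ 1 Ft (Set.Icc (-1 : ℝ) 1))
    (hrep : ∀ x ∈ Set.Ico (-1 : ℝ) 1,
      F₂ x = c₁ * (1 - x) ^ (-(1 : ℝ)/2) + c₂ * (1 - x) ^ ((1 : ℝ)/2) + Ft x) :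
    ∃ L₂' > c₁, ∃ l₂ : ℝ, ∀ n : ℕ, N ≤ n →
      L₂' / Real.sqrt n - l₂ / (n : ℝ) ≤
        (∫ x in (-1 : ℝ)..1, F₂ x) -
          ∑ k ∈ Finset.Icc (-(n : ℤ)) ((n : ℤ) - 1), (1/(n : ℝ)) * F₂ ((k : ℝ)/(n : ℝ)) := by
  classical
  -- Lipschitz-type bound for Ft on [-1,1]
  have hIcc : UniqueDiffOn ℝ (Set.Icc (-1:ℝ) 1) := uniqueDiffOn_Icc (by norm_num)
  have hdiff : DifferentiableOn ℝ Ft (Set.Icc (-1:ℝ) 1) := hFt.differentiableOn one_ne_zero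
  obtain ⟨C, hC⟩ := isCompact_Icc.exists_bound_of_continuousOn
      (hFt.continuousOn_derivWithin hIcc le_rfl)
  have hC0 : 0 ≤ C := le_trans (norm_nonneg _) (hC 0 (by norm_num))
  have hLip : ∀ x ∈ Set.Icc (-1:ℝ) 1, ∀ y ∈ Set.Icc (-1:ℝ) 1, |Ft y - Ft x| ≤ C * |y - x| := by
    intro x hx y hy
    simpa [Real.norm_eq_abs] using
      (convex_Icc (-1:ℝ) 1).norm_image_sub_le_of_norm_derivWithin_le hdiff hC hx hy
  refine ⟨11/10 * c₁, by linarith, Real.sqrt 2 * |c₂| + 2 * C, ?_⟩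
  intro n hn
  have hn0 : 0 < n := lt_of_lt_of_le hN hn
  have hnr : (0:ℝ) < n := by exact_mod_cast hn0
  have hsn : 0 < Real.sqrt n := Real.sqrt_pos.2 hnr
  set f₁ : ℝ → ℝ := fun x => (1-x) ^ (-(1:ℝ)/2) with hf₁def
  set h : ℝ → ℝ := fun x => c₂ * Real.sqrt (1-x) with hhdef
  have hf₂ : ∀ x : ℝ, c₂ * (1-x) ^ ((1:ℝ)/2) = h x := by
    intro x
    show c₂ * (1-x) ^ ((1:ℝ)/2) = c₂ * Real.sqrt (1-x)
    rw [Real.sqrt_eq_rpow]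
  set a : ℕ → ℝ := fun i => i/(n:ℝ) - 1 with hadef
  clear_value f₁ h a
  have ha0 : a 0 = -1 := by simp [hadef]
  have haN : a (2*n) = 1 := by
    simp only [hadef]; push_cast; field_simp; norm_num
  have hstep : ∀ i : ℕ, a (i+1) - a i = 1/(n:ℝ) := by
    intro i; simp only [hadef]; push_cast; field_simp; ring
  have hmono : ∀ i : ℕ, a i ≤ a (i+1) := by
    intro i
    simp only [hadef]
    gcongr
    push_cast
    linarith
  have hmem : ∀ i : ℕ, i ≤ 2*n → a i ∈ Set.Icc (-1:ℝ) 1 := by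
    intro i hi
    constructor
    · simp only [hadef]
      have : (0:ℝ) ≤ (i:ℝ)/(n:ℝ) := by positivity
      linarith
    · simp only [hadef]
      have hi' : (i:ℝ) ≤ 2*n := by exact_mod_cast hi
      rw [sub_le_iff_le_add, div_le_iff₀ hnr]
      linarith
  have hnode : ∀ i : ℕ, i < 2*n → a i ∈ Set.Ico (-1:ℝ) 1 := by
    intro i hi
    refine ⟨(hmem i hi.le).1, ?_⟩
    simp only [hadef]
    have hi' : (i:ℝ) < 2*n := by exact_mod_cast hi
    rw [sub_lt_iff_lt_add, div_lt_iff₀ hnr]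
    linarith
  -- rewrite the sum
  have hsum1 : ∑ k ∈ Finset.Icc (-(n:ℤ)) ((n:ℤ)-1), (1/(n:ℝ)) * F₂ ((k:ℝ)/(n:ℝ))
      = ∑ i ∈ Finset.range (2*n), (1/(n:ℝ)) * F₂ (a i) := by
    rw [aux_reindex n (fun k => (1/(n:ℝ)) * F₂ ((k:ℝ)/(n:ℝ)))]
    apply Finset.sum_congr rfl
    intro i _
    congr 1
    simp only [hadef]
    push_cast
    field_simp
  have hsum2 : ∑ i ∈ Finset.range (2*n), (1/(n:ℝ)) * F₂ (a i)
      = c₁ * (∑ i ∈ Finset.range (2*n), (1/(n:ℝ)) * f₁ (a i))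
        + (∑ i ∈ Finset.range (2*n), (1/(n:ℝ)) * h (a i))
        + (∑ i ∈ Finset.range (2*n), (1/(n:ℝ)) * Ft (a i)) := by
    rw [Finset.mul_sum, ← Finset.sum_add_distrib, ← Finset.sum_add_distrib]
    apply Finset.sum_congr rfl
    intro i hi
    rw [hrep (a i) (hnode i (Finset.mem_range.1 hi)), ← hf₂ (a i)]
    simp only [hf₁def]
    ring
  -- rewrite the integral
  have hint₁ : ∀ u v : ℝ, IntervalIntegrable f₁ volume u v := fun u v => hf₁def ▸ aux_int1 u v
  have hconth : Continuous h := by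
    rw [hhdef]
    exact continuous_const.mul
      (Real.continuous_sqrt.comp (continuous_const.sub continuous_id))
  have hcontFt : ContinuousOn Ft (Set.Icc (-1:ℝ) 1) := hFt.continuousOn
  have hintFt : ∀ u v : ℕ, u ≤ 2*n → v ≤ 2*n → IntervalIntegrable Ft volume (a u) (a v) := by
    intro u v hu hv
    apply (hcontFt.mono ?_).intervalIntegrable
    intro x hx
    rw [Set.uIcc_eq_union] at hx
    rcases hx with hx | hx
    · exact ⟨le_trans (hmem u hu).1 hx.1, le_trans hx.2 (hmem v hv).2⟩
    · exact ⟨le_trans (hmem v hv).1 hx.1, le_trans hx.2 (hmem u hu).2⟩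
  have hintFt' : IntervalIntegrable Ft volume (-1) 1 := by
    have := hintFt 0 (2*n) (by omega) le_rfl
    rwa [ha0, haN] at this
  have hIeq : ∫ x in (-1:ℝ)..1, F₂ x
      = c₁ * (∫ x in (-1:ℝ)..1, f₁ x) + (∫ x in (-1:ℝ)..1, h x) + ∫ x in (-1:ℝ)..1, Ft x := by
    have hae : ∀ᵐ x : ℝ, x ∈ Set.uIoc (-1:ℝ) 1 → F₂ x = c₁ * f₁ x + h x + Ft x := by
      have h1 : ∀ᵐ x : ℝ, x ≠ (1:ℝ) := by
        rw [MeasureTheory.ae_iff]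
        simp only [not_not]
        simpa using Real.volume_singleton (x := 1)
      filter_upwards [h1] with x hx hxm
      rw [Set.uIoc_of_le (by norm_num : (-1:ℝ) ≤ 1)] at hxm
      rw [hrep x ⟨le_of_lt hxm.1, lt_of_le_of_ne hxm.2 hx⟩, hf₂ x]
      simp only [hf₁def]
    rw [intervalIntegral.integral_congr_ae hae]
    rw [intervalIntegral.integral_add (((hint₁ (-1) 1).const_mul c₁).add
        (hconth.intervalIntegrable (-1) 1)) hintFt',
      intervalIntegral.integral_add ((hint₁ (-1) 1).const_mul c₁)
        (hconth.intervalIntegrable (-1) 1),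
      intervalIntegral.integral_const_mul]
  -- adjacent interval decomposition
  have hadj : ∀ f : ℝ → ℝ, (∀ i, i < 2*n → IntervalIntegrable f volume (a i) (a (i+1))) →
      ∑ i ∈ Finset.range (2*n), (∫ x in a i..a (i+1), f x) = ∫ x in (-1:ℝ)..1, f x := by
    intro f hf
    rw [← ha0, ← haN]
    exact intervalIntegral.sum_integral_adjacent_intervals hf
  -- E1 : singular part
  have hterm1 : ∀ i ∈ Finset.range (2*n), (1/(n:ℝ)) * f₁ (a i)
      = (1/Real.sqrt n) * ((1:ℝ)/Real.sqrt ((2*n - i : ℕ))) := by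
    intro i hi
    have hi' : i < 2*n := Finset.mem_range.1 hi
    have hm : (0:ℝ) < ((2*n - i : ℕ):ℝ) := by
      have : 0 < 2*n - i := by omega
      exact_mod_cast this
    have hbase : 1 - a i = ((2*n - i : ℕ):ℝ)/(n:ℝ) := by
      simp only [hadef]
      push_cast [Nat.cast_sub hi'.le]
      field_simp
      ring
    simp only [hf₁def]
    rw [hbase, show (-(1:ℝ)/2) = -(1/2) by norm_num,
      Real.rpow_neg (by positivity), ← Real.sqrt_eq_rpow,
      Real.sqrt_div hm.le]
    have hmul : Real.sqrt (n:ℝ) * Real.sqrt (n:ℝ) = (n:ℝ) := Real.mul_self_sqrt hnr.le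
    have hsm : 0 < Real.sqrt ((2*n - i : ℕ):ℝ) := Real.sqrt_pos.2 hm
    rw [← hmul]
    rw [inv_div]
    field_simp
    rw [Real.sqrt_sq hsn.le]
  have hsumE1 : ∑ i ∈ Finset.range (2*n), (1/(n:ℝ)) * f₁ (a i)
      ≤ 2*Real.sqrt 2 - (11/10)/Real.sqrt n := by
    rw [Finset.sum_congr rfl hterm1, ← Finset.mul_sum]
    have hre : ∑ i ∈ Finset.range (2*n), (1:ℝ)/Real.sqrt ((2*n - i : ℕ))
        = ∑ j ∈ Finset.range (2*n), (1:ℝ)/Real.sqrt (j+1) := by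
      rw [← Finset.sum_range_reflect (fun j => (1:ℝ)/Real.sqrt (j+1)) (2*n)]
      apply Finset.sum_congr rfl
      intro j hj
      have hj' : j < 2*n := Finset.mem_range.1 hj
      have he : 2*n - j = (2*n - 1 - j) + 1 := by omega
      rw [he]
      push_cast
      ring_nf
    rw [hre]
    have hb := aux_sum_sqrt (2*n) (by omega)
    have hs2 : Real.sqrt ((2*n : ℕ):ℝ) = Real.sqrt 2 * Real.sqrt n := by
      push_cast
      rw [Real.sqrt_mul (by norm_num)]
    rw [hs2] at hb
    have hmul : (1/Real.sqrt n) * (2*(Real.sqrt 2*Real.sqrt n) - 11/10)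
        = 2*Real.sqrt 2 - (11/10)/Real.sqrt n := by
      field_simp
    calc (1/Real.sqrt n) * ∑ j ∈ Finset.range (2*n), (1:ℝ)/Real.sqrt (j+1)
        ≤ (1/Real.sqrt n) * (2*(Real.sqrt 2*Real.sqrt n) - 11/10) := by
          apply mul_le_mul_of_nonneg_left _ (by positivity)
          exact hb
      _ = 2*Real.sqrt 2 - (11/10)/Real.sqrt n := hmul
  have hE1 : (11/10)/Real.sqrt n ≤ (∫ x in (-1:ℝ)..1, f₁ x)
      - ∑ i ∈ Finset.range (2*n), (1/(n:ℝ)) * f₁ (a i) := by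
    have : ∫ x in (-1:ℝ)..1, f₁ x = 2 * Real.sqrt 2 := by
      rw [hf₁def]; exact aux_intval1
    rw [this]
    linarith
  -- E2 : the c₂ √(1-x) part
  have hE2 : -((Real.sqrt 2 * |c₂|)/(n:ℝ)) ≤ (∫ x in (-1:ℝ)..1, h x)
      - ∑ i ∈ Finset.range (2*n), (1/(n:ℝ)) * h (a i) := by
    rw [← hadj h (fun i _ => hconth.intervalIntegrable _ _), ← Finset.sum_sub_distrib]
    have hval1 : h 1 = 0 := by simp [hhdef]
    have hvalm1 : h (-1) = c₂ * Real.sqrt 2 := by norm_num [hhdef]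
    rcases le_or_gt 0 c₂ with hc | hc
    · have hlow : ∀ i ∈ Finset.range (2*n), (1/(n:ℝ)) * (h (a (i+1)) - h (a i))
          ≤ (∫ x in a i..a (i+1), h x) - (1/(n:ℝ)) * h (a i) := by
        intro i hi
        have hint : (1/(n:ℝ)) * h (a (i+1)) ≤ ∫ x in a i..a (i+1), h x := by
          have hmn := intervalIntegral.integral_mono_on (f := fun _ => h (a (i+1)))
            (g := h) (μ := volume) (hmono i) (intervalIntegrable_const)
            (hconth.intervalIntegrable _ _) ?_
          · rwa [intervalIntegral.integral_const, smul_eq_mul, hstep i] at hmn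
          · intro x hx
            show h (a (i+1)) ≤ h x
            simp only [hhdef]
            apply mul_le_mul_of_nonneg_left _ hc
            apply Real.sqrt_le_sqrt
            linarith [hx.2]
        linarith
      have := Finset.sum_le_sum hlow
      rw [← Finset.mul_sum, Finset.sum_range_sub (fun i => h (a i)), ha0, haN,
        hval1, hvalm1] at this
      have habs : c₂ ≤ |c₂| := le_abs_self c₂
      have hs2 : 0 ≤ Real.sqrt 2 := Real.sqrt_nonneg 2
      calc -((Real.sqrt 2 * |c₂|)/(n:ℝ))
          ≤ (1/(n:ℝ)) * (0 - c₂ * Real.sqrt 2) := by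
            have key : c₂ * Real.sqrt 2 ≤ |c₂| * Real.sqrt 2 :=
              mul_le_mul_of_nonneg_right habs hs2
            have hninv : (0:ℝ) ≤ ((n:ℝ))⁻¹ := by positivity
            have h4 := mul_le_mul_of_nonneg_right key hninv
            have e1 : -(Real.sqrt 2 * |c₂| / (n:ℝ)) = -((|c₂| * Real.sqrt 2) * ((n:ℝ))⁻¹) := by
              ring
            have e2 : (1/(n:ℝ)) * (0 - c₂ * Real.sqrt 2) = -((c₂ * Real.sqrt 2) * ((n:ℝ))⁻¹) := by
              ring
            rw [e1, e2]
            linarith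
        _ ≤ _ := this
    · have hlow : ∀ i ∈ Finset.range (2*n), (0:ℝ)
          ≤ (∫ x in a i..a (i+1), h x) - (1/(n:ℝ)) * h (a i) := by
        intro i hi
        have hint : (1/(n:ℝ)) * h (a i) ≤ ∫ x in a i..a (i+1), h x := by
          have hmn := intervalIntegral.integral_mono_on (f := fun _ => h (a i))
            (g := h) (μ := volume) (hmono i) (intervalIntegrable_const)
            (hconth.intervalIntegrable _ _) ?_
          · rwa [intervalIntegral.integral_const, smul_eq_mul, hstep i] at hmn
          · intro x hx
            show h (a i) ≤ h x
            simp only [hhdef]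
            apply mul_le_mul_of_nonpos_left _ hc.le
            apply Real.sqrt_le_sqrt
            linarith [hx.1]
        linarith
      have := Finset.sum_le_sum hlow
      rw [Finset.sum_const, Finset.card_range, smul_zero] at this
      have : (0:ℝ) ≤ ∑ i ∈ Finset.range (2*n),
          ((∫ x in a i..a (i+1), h x) - (1/(n:ℝ)) * h (a i)) := this
      have hpos : 0 ≤ (Real.sqrt 2 * |c₂|)/(n:ℝ) := by positivity
      linarith
  -- E3 : the Ft part
  have hE3 : -((2*C)/(n:ℝ)) ≤ (∫ x in (-1:ℝ)..1, Ft x)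
      - ∑ i ∈ Finset.range (2*n), (1/(n:ℝ)) * Ft (a i) := by
    rw [← hadj Ft (fun i hi => hintFt i (i+1) (by omega) (by omega)),
      ← Finset.sum_sub_distrib]
    have hlow : ∀ i ∈ Finset.range (2*n), -(C/(n:ℝ)^2)
        ≤ (∫ x in a i..a (i+1), Ft x) - (1/(n:ℝ)) * Ft (a i) := by
      intro i hi
      have hi' : i < 2*n := Finset.mem_range.1 hi
      have hint : (1/(n:ℝ)) * (Ft (a i) - C/(n:ℝ)) ≤ ∫ x in a i..a (i+1), Ft x := by
        have hmn := intervalIntegral.integral_mono_on (f := fun _ => Ft (a i) - C/(n:ℝ))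
          (g := Ft) (μ := volume) (hmono i) (intervalIntegrable_const)
          (hintFt i (i+1) (by omega) (by omega)) ?_
        · rwa [intervalIntegral.integral_const, smul_eq_mul, hstep i] at hmn
        · intro x hx
          have hxm : x ∈ Set.Icc (-1:ℝ) 1 :=
            ⟨le_trans (hmem i hi'.le).1 hx.1, le_trans hx.2 (hmem (i+1) (by omega)).2⟩
          have h1 := hLip (a i) (hmem i hi'.le) x hxm
          have habs : |x - a i| ≤ 1/(n:ℝ) := by
            rw [abs_of_nonneg (by linarith [hx.1])]
            linarith [hx.2, hstep i]
          have h2 : C * |x - a i| ≤ C/(n:ℝ) := by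
            calc C * |x - a i| ≤ C * (1/(n:ℝ)) := mul_le_mul_of_nonneg_left habs hC0
              _ = C/(n:ℝ) := by ring
          have h3 := (abs_le.1 (h1.trans h2)).1
          linarith
      have hexp : (1/(n:ℝ)) * (Ft (a i) - C/(n:ℝ))
          = (1/(n:ℝ)) * Ft (a i) - C/(n:ℝ)^2 := by
        field_simp
      rw [hexp] at hint
      linarith
    have hsum := Finset.sum_le_sum hlow
    rw [Finset.sum_const, Finset.card_range, nsmul_eq_mul] at hsum
    have hcast : ((2*n : ℕ):ℝ) * (-(C/(n:ℝ)^2)) = -((2*C)/(n:ℝ)) := by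
      push_cast
      field_simp
    rw [hcast] at hsum
    exact hsum
  -- combine
  rw [hsum1, hsum2, hIeq]
  have hE1' : c₁ * ((11/10)/Real.sqrt n) ≤ c₁ * ((∫ x in (-1:ℝ)..1, f₁ x)
      - ∑ i ∈ Finset.range (2*n), (1/(n:ℝ)) * f₁ (a i)) :=
    mul_le_mul_of_nonneg_left hE1 hc₁.le
  have hb1 : 11/10*c₁/Real.sqrt n = c₁ * ((11/10)/Real.sqrt n) := by ring
  have hb2 : (Real.sqrt 2 * |c₂| + 2*C)/(n:ℝ)
      = (Real.sqrt 2 * |c₂|)/(n:ℝ) + (2*C)/(n:ℝ) := by ring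
  rw [hb1, hb2]
  linarith
end

section
/- Let N ∈ ℕ and let F₂ : [0, 1) → ℝ be a function that can be represented as F₂(x) = c₁(1-x)^{-1/2} + c₂(1-x)^{1/2} + F̃₂(x), where c₁ > 0, c₂ ∈ ℝ, and F̃₂ is continuously differentiable on [0, 1]. Then there exist constants L₂ > 0, L₂* > c₁ and l₂ (depending on F₂ and N) such that for all n ≥ N, L₂*/n^{1/2} − l₂/n ≤ ∫_{0}^{1} F₂(x) dx − Σ_{k = 0}^{n-1} (1/n) F₂(k/n) ≤ L₂/n^{1/2}. -/
open MeasureTheory Set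




/-- helper: sum of 1/√(j+1) -/
noncomputable def Taux (n : ℕ) : ℝ := ∑ j ∈ Finset.range n, 1 / Real.sqrt ((j : ℝ) + 1)

/-- helper: sum of √(j+1) -/
noncomputable def Uaux (n : ℕ) : ℝ := ∑ j ∈ Finset.range n, Real.sqrt ((j : ℝ) + 1)

lemma aux1 (j : ℕ) :
    2 * (Real.sqrt ((j : ℝ) + 2) - Real.sqrt ((j : ℝ) + 1)) ≤ 1 / Real.sqrt ((j : ℝ) + 1) := by
  have hb : 0 < Real.sqrt ((j : ℝ) + 1) := Real.sqrt_pos.2 (by positivity)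
  have hc : 0 < Real.sqrt ((j : ℝ) + 2) := Real.sqrt_pos.2 (by positivity)
  have hb2 : Real.sqrt ((j : ℝ) + 1) ^ 2 = (j : ℝ) + 1 := Real.sq_sqrt (by positivity)
  have hc2 : Real.sqrt ((j : ℝ) + 2) ^ 2 = (j : ℝ) + 2 := Real.sq_sqrt (by positivity)
  have hbc : Real.sqrt ((j : ℝ) + 1) ≤ Real.sqrt ((j : ℝ) + 2) :=
    Real.sqrt_le_sqrt (by linarith)
  rw [le_div_iff₀ hb]
  nlinarith [sq_nonneg (Real.sqrt ((j : ℝ) + 2) - Real.sqrt ((j : ℝ) + 1))]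

lemma aux2 (j : ℕ) :
    1 / Real.sqrt ((j : ℝ) + 1) ≤ 2 * (Real.sqrt ((j : ℝ) + 1) - Real.sqrt (j : ℝ)) := by
  have hb : 0 < Real.sqrt ((j : ℝ) + 1) := Real.sqrt_pos.2 (by positivity)
  have ha : 0 ≤ Real.sqrt (j : ℝ) := Real.sqrt_nonneg _
  have ha2 : Real.sqrt (j : ℝ) ^ 2 = (j : ℝ) := Real.sq_sqrt (by positivity)
  have hb2 : Real.sqrt ((j : ℝ) + 1) ^ 2 = (j : ℝ) + 1 := Real.sq_sqrt (by positivity)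
  have hab : Real.sqrt (j : ℝ) ≤ Real.sqrt ((j : ℝ) + 1) := Real.sqrt_le_sqrt (by linarith)
  rw [div_le_iff₀ hb]
  nlinarith [sq_nonneg (Real.sqrt ((j : ℝ) + 1) - Real.sqrt (j : ℝ))]

lemma aux3 (j : ℕ) :
    Real.sqrt ((j : ℝ) + 1) ≤
      (2/3) * (((j : ℝ) + 2) * Real.sqrt ((j : ℝ) + 2) - ((j : ℝ) + 1) * Real.sqrt ((j : ℝ) + 1)) := by
  have hb : 0 < Real.sqrt ((j : ℝ) + 1) := Real.sqrt_pos.2 (by positivity)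
  have hc : 0 < Real.sqrt ((j : ℝ) + 2) := Real.sqrt_pos.2 (by positivity)
  have hb2 : Real.sqrt ((j : ℝ) + 1) ^ 2 = (j : ℝ) + 1 := Real.sq_sqrt (by positivity)
  have hc2 : Real.sqrt ((j : ℝ) + 2) ^ 2 = (j : ℝ) + 2 := Real.sq_sqrt (by positivity)
  have hbc : Real.sqrt ((j : ℝ) + 1) ≤ Real.sqrt ((j : ℝ) + 2) :=
    Real.sqrt_le_sqrt (by linarith)
  nlinarith [mul_pos hb hc, sq_nonneg (Real.sqrt ((j : ℝ) + 2) - Real.sqrt ((j : ℝ) + 1)),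
    mul_nonneg (sub_nonneg.2 hbc) hb.le, mul_nonneg (sub_nonneg.2 hbc) hc.le,
    mul_nonneg (mul_nonneg (sub_nonneg.2 hbc) hb.le) hc.le]

lemma aux4 (j : ℕ) :
    (2/3) * (((j : ℝ) + 1) * Real.sqrt ((j : ℝ) + 1) - (j : ℝ) * Real.sqrt (j : ℝ)) ≤
      Real.sqrt ((j : ℝ) + 1) := by
  have hb : 0 < Real.sqrt ((j : ℝ) + 1) := Real.sqrt_pos.2 (by positivity)
  have ha : 0 ≤ Real.sqrt (j : ℝ) := Real.sqrt_nonneg _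
  have ha2 : Real.sqrt (j : ℝ) ^ 2 = (j : ℝ) := Real.sq_sqrt (by positivity)
  have hb2 : Real.sqrt ((j : ℝ) + 1) ^ 2 = (j : ℝ) + 1 := Real.sq_sqrt (by positivity)
  have hab : Real.sqrt (j : ℝ) ≤ Real.sqrt ((j : ℝ) + 1) := Real.sqrt_le_sqrt (by linarith)
  nlinarith [sq_nonneg (Real.sqrt ((j : ℝ) + 1) - Real.sqrt (j : ℝ)),
    mul_nonneg (sub_nonneg.2 hab) ha, mul_nonneg (sub_nonneg.2 hab) hb.le,
    mul_nonneg (mul_nonneg (sub_nonneg.2 hab) ha) hb.le]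

lemma Taux_ge (n : ℕ) : 2 * Real.sqrt ((n : ℝ) + 1) - 2 ≤ Taux n := by
  induction n with
  | zero => simp [Taux]
  | succ n ih =>
      rw [Taux, Finset.sum_range_succ, ← Taux]
      have h := aux1 n
      push_cast
      rw [show ((n:ℝ)+1+1) = (n:ℝ)+2 from by ring]
      linarith

lemma Taux_le (n : ℕ) (hn : 2 ≤ n) :
    Taux n ≤ 2 * Real.sqrt (n : ℝ) - ((3/2) * Real.sqrt 2 - 1) := by
  induction n, hn using Nat.le_induction with
  | base =>
      have h2 : (0:ℝ) < Real.sqrt 2 := Real.sqrt_pos.2 (by norm_num)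
      have h22 : Real.sqrt 2 ^ 2 = 2 := Real.sq_sqrt (by norm_num)
      have hT : Taux 2 = 1 + 1 / Real.sqrt 2 := by
        norm_num [Taux, Finset.sum_range_succ]
      rw [hT]
      rw [show ((2:ℕ):ℝ) = 2 from by norm_num]
      have h12 : 1 / Real.sqrt 2 = Real.sqrt 2 / 2 := by
        rw [eq_div_iff (by norm_num : (2:ℝ) ≠ 0), one_div, inv_mul_eq_div,
          div_eq_iff (ne_of_gt h2)]
        nlinarith
      rw [h12]
      linarith
  | succ n hn ih =>
      rw [Taux, Finset.sum_range_succ, ← Taux]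
      have h := aux2 n
      have hmono : Real.sqrt (n : ℝ) ≤ Real.sqrt ((n : ℝ) + 1) := Real.sqrt_le_sqrt (by linarith)
      push_cast
      push_cast at ih h
      linarith

lemma Uaux_ge (n : ℕ) : (2/3) * ((n : ℝ) * Real.sqrt (n : ℝ)) ≤ Uaux n := by
  induction n with
  | zero => simp [Uaux]
  | succ n ih =>
      rw [Uaux, Finset.sum_range_succ, ← Uaux]
      have h := aux4 n
      push_cast
      push_cast at ih h
      linarith

lemma Uaux_le (n : ℕ) :
    Uaux n ≤ (2/3) * (((n : ℝ) + 1) * Real.sqrt ((n : ℝ) + 1) - 1) := by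
  induction n with
  | zero => simp [Uaux]
  | succ n ih =>
      rw [Uaux, Finset.sum_range_succ, ← Uaux]
      have h := aux3 n
      push_cast
      rw [show ((n:ℝ)+1+1) = (n:ℝ)+2 from by ring]
      linarith

lemma aux5 (n : ℕ) (hn : 1 ≤ n) : Real.sqrt ((n : ℝ) + 1) ≤ 2 * Real.sqrt (n : ℝ) := by
  have hb : 0 < Real.sqrt (n : ℝ) := Real.sqrt_pos.2 (by exact_mod_cast hn)
  have ha2 : Real.sqrt (n : ℝ) ^ 2 = (n : ℝ) := Real.sq_sqrt (by positivity)
  have hb2 : Real.sqrt ((n : ℝ) + 1) ^ 2 = (n : ℝ) + 1 := Real.sq_sqrt (by positivity)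
  have h1 : (1:ℝ) ≤ Real.sqrt (n : ℝ) := by
    rw [show (1:ℝ) = Real.sqrt 1 by simp]
    exact Real.sqrt_le_sqrt (by exact_mod_cast hn)
  nlinarith [Real.sqrt_nonneg ((n : ℝ) + 1)]

lemma integral_one_sub_rpow (r : ℝ) (hr : -1 < r) :
    ∫ x in (0:ℝ)..1, (1 - x) ^ r = 1 / (r + 1) := by
  have h := intervalIntegral.integral_comp_sub_left (a := 0) (b := 1) (fun y : ℝ => y ^ r) 1
  rw [show (1:ℝ)-(1:ℝ) = 0 by norm_num, show (1:ℝ)-(0:ℝ) = 1 by norm_num] at h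
  rw [h, integral_rpow (Or.inl hr), Real.one_rpow,
    Real.zero_rpow (by intro hc; linarith : r + 1 ≠ 0)]
  ring

lemma intable_one_sub_rpow (r : ℝ) (hr : -1 < r) :
    IntervalIntegrable (fun x : ℝ => (1 - x) ^ r) volume 0 1 := by
  have h := (intervalIntegral.intervalIntegrable_rpow' (a := 0) (b := 1) hr).comp_sub_left 1
  norm_num at h
  exact h.symm

lemma E3_bound (Ft : ℝ → ℝ) (hc : ContinuousOn Ft (Set.Icc (0:ℝ) 1)) (K : ℝ)
    (hlip : ∀ x ∈ Set.Icc (0:ℝ) 1, ∀ y ∈ Set.Icc (0:ℝ) 1, |Ft y - Ft x| ≤ K * |y - x|)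
    (n : ℕ) (hn : 1 ≤ n) :
    |(∫ x in (0:ℝ)..1, Ft x) - ∑ k ∈ Finset.range n, (1/(n:ℝ)) * Ft ((k:ℝ)/(n:ℝ))| ≤ K / n := by
  have hn0 : (0:ℝ) < n := by exact_mod_cast hn
  set a : ℕ → ℝ := fun k => (k:ℝ)/(n:ℝ) with ha
  have hmem : ∀ k : ℕ, k ≤ n → a k ∈ Set.Icc (0:ℝ) 1 := by
    intro k hk
    constructor
    · positivity
    · rw [div_le_one hn0]; exact_mod_cast hk
  have hd : ∀ k : ℕ, a (k+1) - a k = 1/(n:ℝ) := by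
    intro k; simp only [ha]; push_cast; ring
  have hle : ∀ k : ℕ, a k ≤ a (k+1) := by
    intro k
    have h := hd k
    have h2 : (0:ℝ) < 1/(n:ℝ) := by positivity
    linarith
  have hsub : ∀ k : ℕ, k < n → Set.uIcc (a k) (a (k+1)) ⊆ Set.Icc (0:ℝ) 1 := by
    intro k hk
    rw [Set.uIcc_of_le (hle k)]
    exact Set.Icc_subset_Icc (hmem k hk.le).1 (hmem (k+1) hk).2
  have hint : ∀ k < n, IntervalIntegrable Ft volume (a k) (a (k+1)) := by
    intro k hk
    exact (hc.mono (hsub k hk)).intervalIntegrable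
  have htot : (∫ x in (0:ℝ)..1, Ft x) = ∑ k ∈ Finset.range n, ∫ x in a k..a (k+1), Ft x := by
    rw [intervalIntegral.sum_integral_adjacent_intervals hint]
    have h0 : a 0 = 0 := by simp [ha]
    have h1 : a n = 1 := by simp only [ha]; field_simp
    rw [h0, h1]
  have hterm : ∀ k < n,
      |(∫ x in a k..a (k+1), Ft x) - (1/(n:ℝ)) * Ft (a k)| ≤ K * (1/(n:ℝ)) * (1/(n:ℝ)) := by
    intro k hk
    have hconst : (1/(n:ℝ)) * Ft (a k) = ∫ x in a k..a (k+1), Ft (a k) := by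
      rw [intervalIntegral.integral_const, hd k, smul_eq_mul]
    rw [hconst, ← intervalIntegral.integral_sub (hint k hk) intervalIntegrable_const]
    have hbound : ∀ x ∈ Set.uIoc (a k) (a (k+1)), ‖Ft x - Ft (a k)‖ ≤ K * (1/(n:ℝ)) := by
      intro x hx
      rw [Set.uIoc_of_le (hle k)] at hx
      have hx1 : x ∈ Set.Icc (0:ℝ) 1 := by
        constructor
        · exact le_trans (hmem k hk.le).1 hx.1.le
        · exact le_trans hx.2 (hmem (k+1) hk).2
      have h1 := hlip (a k) (hmem k hk.le) x hx1
      have h2 : |x - a k| ≤ 1/(n:ℝ) := by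
        rw [abs_of_nonneg (by linarith [hx.1.le] : (0:ℝ) ≤ x - a k)]
        have := hd k
        linarith [hx.2]
      have hKnn : 0 ≤ K := by
        have := hlip 0 (by norm_num) 1 (by norm_num)
        have h10 : |(1:ℝ) - 0| = 1 := by norm_num
        nlinarith [abs_nonneg (Ft 1 - Ft 0)]
      calc ‖Ft x - Ft (a k)‖ = |Ft x - Ft (a k)| := rfl
        _ ≤ K * |x - a k| := h1
        _ ≤ K * (1/(n:ℝ)) := by gcongr
    have := intervalIntegral.norm_integral_le_of_norm_le_const hbound
    rw [hd k] at this
    calc |∫ x in a k..a (k+1), (Ft x - Ft (a k))| ≤ K * (1/(n:ℝ)) * |1/(n:ℝ)| := this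
      _ = K * (1/(n:ℝ)) * (1/(n:ℝ)) := by rw [abs_of_pos (by positivity)]
  calc |(∫ x in (0:ℝ)..1, Ft x) - ∑ k ∈ Finset.range n, (1/(n:ℝ)) * Ft ((k:ℝ)/(n:ℝ))|
      = |∑ k ∈ Finset.range n, ((∫ x in a k..a (k+1), Ft x) - (1/(n:ℝ)) * Ft (a k))| := by
        rw [htot, Finset.sum_sub_distrib]
    _ ≤ ∑ k ∈ Finset.range n, |(∫ x in a k..a (k+1), Ft x) - (1/(n:ℝ)) * Ft (a k)| :=
        Finset.abs_sum_le_sum_abs _ _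
    _ ≤ ∑ _k ∈ Finset.range n, K * (1/(n:ℝ)) * (1/(n:ℝ)) :=
        Finset.sum_le_sum (fun k hk => hterm k (Finset.mem_range.1 hk))
    _ = K / n := by
        rw [Finset.sum_const, Finset.card_range, nsmul_eq_mul]
        field_simp

lemma sum_reflect_pow (n : ℕ) (hn : 0 < n) (r : ℝ) :
    ∑ k ∈ Finset.range n, ((1:ℝ) - (k:ℝ)/(n:ℝ)) ^ r
      = ∑ j ∈ Finset.range n, (((j:ℝ)+1)/(n:ℝ)) ^ r := by
  rw [← Finset.sum_range_reflect (fun j => (((j:ℝ)+1)/(n:ℝ)) ^ r) n]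
  apply Finset.sum_congr rfl
  intro k hk
  have hk' : k < n := Finset.mem_range.1 hk
  have hn0 : (0:ℝ) < n := by exact_mod_cast hn
  have hcast : ((n - 1 - k : ℕ) : ℝ) = (n:ℝ) - 1 - (k:ℝ) := by
    have h1 : n - 1 - k = n - (1 + k) := by omega
    rw [h1, Nat.cast_sub (by omega)]
    push_cast
    ring
  rw [hcast]
  congr 1
  field_simp
  ring

set_option maxHeartbeats 1000000 in
/-- Proposition 2 for z₀ = 0: if F₂(x) = c₁(1-x)^{-1/2} + c₂(1-x)^{1/2} + Ft(x)
on [0,1) with c₁ > 0 and Ft ∈ C¹[0,1], then there are L₂ > 0, L₂* > c₁ and l₂ such that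
L₂*/√n − l₂/n ≤ ∫_0^1 F₂ − Σ_{k=0}^{n-1} (1/n) F₂(k/n) ≤ L₂/√n for all n ≥ N. -/
theorem riemann_error_inv_sqrt_zero
    (N : ℕ) (hN : 0 < N) (F₂ Ft : ℝ → ℝ) (c₁ c₂ : ℝ) (hc₁ : 0 < c₁)
    (hFt : ContDiffOn ℝ 1 Ft (Set.Icc (0 : ℝ) 1))
    (hrep : ∀ x ∈ Set.Ico (0 : ℝ) 1,
      F₂ x = c₁ * (1 - x) ^ (-(1 : ℝ)/2) + c₂ * (1 - x) ^ ((1 : ℝ)/2) + Ft x) :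
    ∃ L₂ > (0 : ℝ), ∃ L₂' > c₁, ∃ l₂ : ℝ, ∀ n : ℕ, N ≤ n →
      L₂' / Real.sqrt n - l₂ / (n : ℝ) ≤
        (∫ x in (0 : ℝ)..1, F₂ x) -
          ∑ k ∈ Finset.range n, (1/(n : ℝ)) * F₂ ((k : ℝ)/(n : ℝ)) ∧
      (∫ x in (0 : ℝ)..1, F₂ x) -
          ∑ k ∈ Finset.range n, (1/(n : ℝ)) * F₂ ((k : ℝ)/(n : ℝ))
        ≤ L₂ / Real.sqrt n := by
  have h01 : (0:ℝ) ≤ 1 := zero_le_one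
  have hFt_cont : ContinuousOn Ft (Set.Icc (0:ℝ) 1) := hFt.continuousOn
  have hIccU : UniqueDiffOn ℝ (Set.Icc (0:ℝ) 1) := uniqueDiffOn_Icc one_pos
  have hderiv_cont : ContinuousOn (derivWithin Ft (Set.Icc (0:ℝ) 1)) (Set.Icc 0 1) :=
    hFt.continuousOn_derivWithin hIccU le_rfl
  obtain ⟨K, hKb⟩ := isCompact_Icc.exists_bound_of_continuousOn hderiv_cont
  have hK0 : 0 ≤ K := le_trans (norm_nonneg _) (hKb 0 (by norm_num))
  have hlip : ∀ x ∈ Set.Icc (0:ℝ) 1, ∀ y ∈ Set.Icc (0:ℝ) 1, |Ft y - Ft x| ≤ K * |y - x| := by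
    intro x hx y hy
    have h := Convex.norm_image_sub_le_of_norm_derivWithin_le
      (hFt.differentiableOn one_ne_zero) hKb (convex_Icc 0 1) hx hy
    simpa [Real.norm_eq_abs] using h
  have h2pos : (0:ℝ) < Real.sqrt 2 := Real.sqrt_pos.2 (by norm_num)
  have h2sq : Real.sqrt 2 ^ 2 = 2 := Real.sq_sqrt (by norm_num)
  have hcgt : (1:ℝ) < (3/2) * Real.sqrt 2 - 1 := by nlinarith
  set c : ℝ := (3/2) * Real.sqrt 2 - 1 with hc
  have hcpos : 0 < c := by linarith
  set J : ℝ := ∫ x in (0:ℝ)..1, Ft x with hJ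
  have hFt_int : IntervalIntegrable Ft volume 0 1 := by
    apply ContinuousOn.intervalIntegrable
    rwa [Set.uIcc_of_le h01]
  have hr1 : (-1:ℝ) < -(1:ℝ)/2 := by norm_num
  have hr2 : (-1:ℝ) < (1:ℝ)/2 := by norm_num
  have hae : ∀ᵐ x : ℝ, x ∈ Set.uIoc (0:ℝ) 1 →
      F₂ x = c₁ * (1-x)^(-(1:ℝ)/2) + c₂ * (1-x)^((1:ℝ)/2) + Ft x := by
    have h1 : ∀ᵐ x : ℝ, x ∉ ({1} : Set ℝ) :=
      measure_eq_zero_iff_ae_notMem.mp Real.volume_singleton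
    filter_upwards [h1] with x hx hmem
    rw [Set.uIoc_of_le h01] at hmem
    exact hrep x ⟨hmem.1.le, lt_of_le_of_ne hmem.2 (by simpa using hx)⟩
  have hI : (∫ x in (0:ℝ)..1, F₂ x) = 2*c₁ + (2/3)*c₂ + J := by
    rw [intervalIntegral.integral_congr_ae hae]
    rw [intervalIntegral.integral_add
        (((intable_one_sub_rpow _ hr1).const_mul c₁).add
          ((intable_one_sub_rpow _ hr2).const_mul c₂)) hFt_int,
      intervalIntegral.integral_add ((intable_one_sub_rpow _ hr1).const_mul c₁)
        ((intable_one_sub_rpow _ hr2).const_mul c₂),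
      intervalIntegral.integral_const_mul, intervalIntegral.integral_const_mul,
      integral_one_sub_rpow _ hr1, integral_one_sub_rpow _ hr2]
    norm_num
    ring
  refine ⟨2*c₁ + 2*|c₂| + K + 1, by positivity, c₁ * c, by nlinarith, 2*|c₂| + K + c₁ * c, ?_⟩
  intro n hn
  have hn1 : 1 ≤ n := le_trans hN hn
  have hn0 : (0:ℝ) < n := by exact_mod_cast hn1
  have hnne : (n:ℝ) ≠ 0 := ne_of_gt hn0
  set s : ℝ := Real.sqrt n with hs
  have hspos : 0 < s := Real.sqrt_pos.2 hn0
  have hsne : s ≠ 0 := ne_of_gt hspos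
  have hssq : s^2 = (n:ℝ) := Real.sq_sqrt hn0.le
  have hs1 : (1:ℝ) ≤ s := by
    rw [hs, show (1:ℝ) = Real.sqrt 1 by simp]
    exact Real.sqrt_le_sqrt (by exact_mod_cast hn1)
  have hsn : s ≤ (n:ℝ) := by nlinarith
  set R : ℝ := ∑ k ∈ Finset.range n, (1/(n:ℝ)) * Ft ((k:ℝ)/(n:ℝ)) with hR
  have hsum : ∑ k ∈ Finset.range n, (1/(n:ℝ)) * F₂ ((k:ℝ)/(n:ℝ))
      = c₁ * (Taux n / s) + c₂ * (Uaux n / ((n:ℝ) * s)) + R := by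
    have step1 : ∀ k ∈ Finset.range n,
        (1/(n:ℝ)) * F₂ ((k:ℝ)/(n:ℝ)) =
          (c₁/(n:ℝ)) * ((1:ℝ) - (k:ℝ)/(n:ℝ))^(-(1:ℝ)/2)
          + (c₂/(n:ℝ)) * ((1:ℝ) - (k:ℝ)/(n:ℝ))^((1:ℝ)/2)
          + (1/(n:ℝ)) * Ft ((k:ℝ)/(n:ℝ)) := by
      intro k hk
      have hk' : k < n := Finset.mem_range.1 hk
      rw [hrep ((k:ℝ)/(n:ℝ)) ⟨by positivity, by rw [div_lt_one hn0]; exact_mod_cast hk'⟩]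
      ring
    rw [Finset.sum_congr rfl step1, Finset.sum_add_distrib, Finset.sum_add_distrib]
    have e1 : ∑ k ∈ Finset.range n, (c₁/(n:ℝ)) * ((1:ℝ) - (k:ℝ)/(n:ℝ))^(-(1:ℝ)/2)
        = c₁ * (Taux n / s) := by
      rw [← Finset.mul_sum, sum_reflect_pow n (by omega) _]
      have hterm : ∀ j ∈ Finset.range n, (((j:ℝ)+1)/(n:ℝ))^(-(1:ℝ)/2)
          = (1 / Real.sqrt ((j:ℝ)+1)) * s := by
        intro j _
        have hx : (0:ℝ) ≤ ((j:ℝ)+1)/(n:ℝ) := by positivity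
        have hj : (0:ℝ) ≤ (j:ℝ)+1 := by positivity
        have hjpos : (0:ℝ) < Real.sqrt ((j:ℝ)+1) := Real.sqrt_pos.2 (by positivity)
        rw [show (-(1:ℝ)/2) = -((1:ℝ)/2) by ring, Real.rpow_neg hx, ← Real.sqrt_eq_rpow,
          Real.sqrt_div hj]
        rw [← hs]
        field_simp
      rw [Finset.sum_congr rfl hterm, ← Finset.sum_mul,
        show (∑ j ∈ Finset.range n, 1 / Real.sqrt ((j:ℝ)+1)) = Taux n from rfl]
      field_simp
      linear_combination Taux n * hssq
    have e2 : ∑ k ∈ Finset.range n, (c₂/(n:ℝ)) * ((1:ℝ) - (k:ℝ)/(n:ℝ))^((1:ℝ)/2)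
        = c₂ * (Uaux n / ((n:ℝ) * s)) := by
      rw [← Finset.mul_sum, sum_reflect_pow n (by omega) _]
      have hterm : ∀ j ∈ Finset.range n, (((j:ℝ)+1)/(n:ℝ))^((1:ℝ)/2)
          = Real.sqrt ((j:ℝ)+1) * (1/s) := by
        intro j _
        have hj : (0:ℝ) ≤ (j:ℝ)+1 := by positivity
        rw [← Real.sqrt_eq_rpow, Real.sqrt_div hj, ← hs]
        ring
      rw [Finset.sum_congr rfl hterm, ← Finset.sum_mul,
        show (∑ j ∈ Finset.range n, Real.sqrt ((j:ℝ)+1)) = Uaux n from rfl]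
      field_simp
    rw [e1, e2]
  have hD3 : |J - R| ≤ K / n := E3_bound Ft hFt_cont K hlip n hn1
  have hD2 : |2/3 - Uaux n / ((n:ℝ)*s)| ≤ 2/(n:ℝ) := by
    have hUb : Uaux n ≤ (2/3)*((n:ℝ)*s) + 2*s := by
      rw [hs]
      linarith [Uaux_le n, aux4 n, aux5 n hn1]
    have hUa : (2/3)*((n:ℝ)*s) ≤ Uaux n := by
      rw [hs]
      exact Uaux_ge n
    rw [abs_le]
    constructor
    · have h4 : Uaux n / ((n:ℝ)*s) ≤ ((2/3)*((n:ℝ)*s) + 2*s)/((n:ℝ)*s) := by gcongr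
      have heq : ((2/3)*((n:ℝ)*s) + 2*s)/((n:ℝ)*s) = 2/3 + 2/(n:ℝ) := by
        field_simp
      linarith
    · have h4 : ((2/3)*((n:ℝ)*s))/((n:ℝ)*s) ≤ Uaux n / ((n:ℝ)*s) := by gcongr
      have heq : ((2/3)*((n:ℝ)*s))/((n:ℝ)*s) = 2/3 := by
        field_simp
      have hpos : (0:ℝ) < 2/(n:ℝ) := by positivity
      linarith
  have hD1u : 2 - Taux n / s ≤ 2 / s := by
    have h1 : 2*s - 2 ≤ Taux n := by
      rw [hs]
      have h3 : Real.sqrt (n:ℝ) ≤ Real.sqrt ((n:ℝ)+1) := Real.sqrt_le_sqrt (by linarith)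
      linarith [Taux_ge n]
    have h4 : (2*s - 2)/s ≤ Taux n / s := by gcongr
    have heq : (2*s - 2)/s = 2 - 2/s := by field_simp
    linarith
  have habs2l : -( |c₂| * (2/(n:ℝ)) ) ≤ c₂*(2/3 - Uaux n/((n:ℝ)*s)) := by
    have h := neg_abs_le (c₂*(2/3 - Uaux n/((n:ℝ)*s)))
    have h2 : |c₂*(2/3 - Uaux n/((n:ℝ)*s))| ≤ |c₂| * (2/(n:ℝ)) := by
      rw [abs_mul]
      exact mul_le_mul_of_nonneg_left hD2 (abs_nonneg _)
    linarith
  have habs2u : c₂*(2/3 - Uaux n/((n:ℝ)*s)) ≤ |c₂| * (2/(n:ℝ)) := by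
    have h := le_abs_self (c₂*(2/3 - Uaux n/((n:ℝ)*s)))
    have h2 : |c₂*(2/3 - Uaux n/((n:ℝ)*s))| ≤ |c₂| * (2/(n:ℝ)) := by
      rw [abs_mul]
      exact mul_le_mul_of_nonneg_left hD2 (abs_nonneg _)
    linarith
  have habs3l : -(K/(n:ℝ)) ≤ J - R := by
    have h := neg_abs_le (J - R); linarith [hD3]
  have habs3u : J - R ≤ K/(n:ℝ) := le_trans (le_abs_self _) hD3
  clear_value J R s c
  have hEeq : (2*c₁ + (2/3)*c₂ + J) - (c₁*(Taux n/s) + c₂*(Uaux n/((n:ℝ)*s)) + R)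
      = c₁*(2 - Taux n/s) + c₂*(2/3 - Uaux n/((n:ℝ)*s)) + (J - R) := by ring
  constructor
  · -- lower bound
    rw [hI, hsum, hEeq]
    rcases eq_or_lt_of_le hn1 with h1 | h2
    · -- n = 1
      have hn1' : n = 1 := h1.symm
      have hnval : (n:ℝ) = 1 := by rw [hn1']; norm_num
      have hsval : s = 1 := by rw [hs, hnval]; exact Real.sqrt_one
      have hTval : Taux n = 1 := by rw [hn1']; simp [Taux]
      rw [hnval, hsval] at habs2l
      rw [hnval] at habs3l
      rw [hsval, hTval, hnval]
      norm_num at habs2l habs3l ⊢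
      linarith [mul_pos hc₁ hcpos, hc₁.le, hcpos.le]
    · -- n ≥ 2
      have hn2 : 2 ≤ n := h2
      have hD1l : c/s ≤ 2 - Taux n / s := by
        have h1 := Taux_le n hn2
        rw [← hs, ← hc] at h1
        have h4 : Taux n / s ≤ (2*s - c)/s := by gcongr
        have heq : (2*s - c)/s = 2 - c/s := by field_simp
        linarith
      have hmul : c₁ * (c/s) ≤ c₁ * (2 - Taux n/s) := mul_le_mul_of_nonneg_left hD1l hc₁.le
      have hccs : c₁ * (c/s) = (c₁*c)/s := by ring
      have hfrac : (2*|c₂| + K)/(n:ℝ) ≤ (2*|c₂| + K + c₁*c)/(n:ℝ) :=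
        (div_le_div_iff_of_pos_right hn0).mpr (by linarith [mul_pos hc₁ hcpos])
      have h5 : (2 * |c₂| + K)/(n:ℝ) = |c₂| * (2/(n:ℝ)) + K/(n:ℝ) := by ring
      linarith
  · -- upper bound
    rw [hI, hsum, hEeq]
    have hd1 : c₁*(2 - Taux n/s) ≤ c₁*(2/s) := mul_le_mul_of_nonneg_left hD1u hc₁.le
    have i1 : |c₂| * (2/(n:ℝ)) = (2 * |c₂|)/(n:ℝ) := by ring
    have i2 : (2 * |c₂|)/(n:ℝ) ≤ (2 * |c₂|)/s := by gcongr
    have i3 : K/(n:ℝ) ≤ K/s := by gcongr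
    have i4 : c₁*(2/s) = (2*c₁)/s := by ring
    have i5 : (2*c₁)/s + (2 * |c₂|)/s + K/s = (2*c₁+ 2 * |c₂| +K)/s := by ring
    have i6 : (2*c₁+ 2 * |c₂| +K)/s ≤ (2*c₁+ 2 * |c₂| +K+1)/s :=
      (div_le_div_iff_of_pos_right hspos).mpr (by linarith)
    linarith
end

section
/- Let N ∈ ℕ and let F₂ : [-1, 1) → ℝ be a function that can be represented as F₂(x) = c₁(1-x)^{-1/2} + c₂(1-x)^{1/2} + F̃₂(x), where c₁ > 0, c₂ ∈ ℝ, and F̃₂ is continuously differentiable on [-1, 1]. Then the sequence of left Riemann sums |Σ_{k = -n}^{n-1} (1/n) F₂(k/n)| is bounded uniformly over n ≥ N. -/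
open MeasureTheory Set

lemma sqrt_sum_aux (m : ℕ) :
    ∑ j ∈ Finset.range m, 1 / Real.sqrt ((j : ℝ) + 1) ≤ 2 * Real.sqrt m := by
  induction m with
  | zero => simp
  | succ m ih =>
    rw [Finset.sum_range_succ]
    have h1 : (0:ℝ) ≤ (m:ℝ) := by positivity
    have ha := Real.sq_sqrt h1
    have hb := Real.sq_sqrt (by positivity : (0:ℝ) ≤ (m:ℝ) + 1)
    have ha' := Real.sqrt_nonneg (m:ℝ)
    have hb' : 0 < Real.sqrt ((m:ℝ)+1) := Real.sqrt_pos.2 (by positivity)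
    have key : 1 / Real.sqrt ((m:ℝ) + 1) ≤ 2 * (Real.sqrt ((m:ℝ)+1) - Real.sqrt m) := by
      rw [div_le_iff₀ hb']
      nlinarith [sq_nonneg (Real.sqrt ((m:ℝ)+1) - Real.sqrt m)]
    push_cast
    linarith


/-- Corollary of Proposition 2: if F₂(x) = c₁(1-x)^{-1/2} + c₂(1-x)^{1/2} + Ft(x)
on [-1,1) with c₁ > 0 and Ft ∈ C¹[-1,1], then the left Riemann sums
|Σ_{k=-n}^{n-1} (1/n) F₂(k/n)| are bounded uniformly over n ≥ N. -/
theorem riemann_sums_inv_sqrt_bounded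
    (N : ℕ) (hN : 0 < N) (F₂ Ft : ℝ → ℝ) (c₁ c₂ : ℝ) (hc₁ : 0 < c₁)
    (hFt : ContDiffOn ℝ 1 Ft (Set.Icc (-1 : ℝ) 1))
    (hrep : ∀ x ∈ Set.Ico (-1 : ℝ) 1,
      F₂ x = c₁ * (1 - x) ^ (-(1 : ℝ)/2) + c₂ * (1 - x) ^ ((1 : ℝ)/2) + Ft x) :
    ∃ M : ℝ, ∀ n : ℕ, N ≤ n →
      |∑ k ∈ Finset.Icc (-(n : ℤ)) ((n : ℤ) - 1), (1/(n : ℝ)) * F₂ ((k : ℝ)/(n : ℝ))| ≤ M := by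
  obtain ⟨C, hC⟩ := isCompact_Icc.exists_bound_of_continuousOn hFt.continuousOn
  refine ⟨2 * Real.sqrt 2 * c₁ + 2 * (|c₂| * Real.sqrt 2 + C), ?_⟩
  intro n hn
  have hn1 : 1 ≤ n := hN.trans_le hn
  have hnR : (0:ℝ) < n := by exact_mod_cast hn1
  have hsn : 0 < Real.sqrt n := Real.sqrt_pos.2 hnR
  set D : ℝ := |c₂| * Real.sqrt 2 + C with hD
  -- per-term bound
  have hterm : ∀ k ∈ Finset.Icc (-(n : ℤ)) ((n : ℤ) - 1),
      |(1/(n : ℝ)) * F₂ ((k : ℝ)/(n : ℝ))| ≤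
        c₁ / (Real.sqrt n * Real.sqrt ((n:ℝ) - (k:ℝ))) + D / n := by
    intro k hk
    rw [Finset.mem_Icc] at hk
    obtain ⟨hk1, hk2⟩ := hk
    have hk1R : -(n:ℝ) ≤ (k:ℝ) := by exact_mod_cast hk1
    have hk2R : (k:ℝ) ≤ (n:ℝ) - 1 := by
      have : (k:ℝ) ≤ ((n:ℤ) - 1 : ℤ) := by exact_mod_cast hk2
      simpa using this
    set x : ℝ := (k:ℝ)/(n:ℝ) with hx
    have hxmem : x ∈ Set.Ico (-1 : ℝ) 1 := by
      constructor
      · rw [hx, le_div_iff₀ hnR]; nlinarith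
      · rw [hx, div_lt_one hnR]; linarith
    have h1x : (0:ℝ) < 1 - x := by linarith [hxmem.2]
    have ht : (0:ℝ) < (n:ℝ) - (k:ℝ) := by linarith
    have h1xeq : 1 - x = ((n:ℝ) - (k:ℝ)) / n := by
      rw [hx]; field_simp
    -- rpow computations
    have hr1 : (1 - x) ^ (-(1 : ℝ)/2) = Real.sqrt n / Real.sqrt ((n:ℝ) - (k:ℝ)) := by
      rw [h1xeq, show (-(1:ℝ)/2) = -(1/2) by ring, Real.rpow_neg (by positivity),
        ← Real.sqrt_eq_rpow, Real.sqrt_div ht.le, inv_div]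
    have hr2 : (1 - x) ^ ((1 : ℝ)/2) ≤ Real.sqrt 2 := by
      rw [← Real.sqrt_eq_rpow]
      apply Real.sqrt_le_sqrt
      linarith [hxmem.1]
    have hFtb : |Ft x| ≤ C := hC x ⟨hxmem.1, le_of_lt hxmem.2⟩
    have hF : |F₂ x| ≤ c₁ * (Real.sqrt n / Real.sqrt ((n:ℝ) - (k:ℝ))) + D := by
      rw [hrep x hxmem, hr1, hD]
      calc |c₁ * (Real.sqrt n / Real.sqrt ((n:ℝ) - (k:ℝ))) + c₂ * (1 - x) ^ ((1:ℝ)/2) + Ft x|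
          ≤ |c₁ * (Real.sqrt n / Real.sqrt ((n:ℝ) - (k:ℝ)))| + |c₂ * (1 - x) ^ ((1:ℝ)/2)| + |Ft x| := by
            exact (abs_add_le _ _).trans (by gcongr; exact abs_add_le _ _)
        _ ≤ c₁ * (Real.sqrt n / Real.sqrt ((n:ℝ) - (k:ℝ))) + (|c₂| * Real.sqrt 2 + C) := by
            rw [abs_mul, abs_of_pos hc₁, abs_of_nonneg (by positivity : (0:ℝ) ≤ Real.sqrt n / Real.sqrt ((n:ℝ) - (k:ℝ)))]
            have : |(1 - x) ^ ((1:ℝ)/2)| = (1 - x) ^ ((1:ℝ)/2) := abs_of_nonneg (Real.rpow_nonneg h1x.le _)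
            rw [abs_mul, this]
            have h4 : |c₂| * (1 - x) ^ ((1:ℝ)/2) ≤ |c₂| * Real.sqrt 2 := by
              gcongr
            linarith
        _ = _ := by ring
    rw [abs_mul, abs_of_pos (by positivity : (0:ℝ) < 1/(n:ℝ))]
    calc (1/(n:ℝ)) * |F₂ x| ≤ (1/(n:ℝ)) * (c₁ * (Real.sqrt n / Real.sqrt ((n:ℝ) - (k:ℝ))) + D) := by
          gcongr
      _ = c₁ * (Real.sqrt n / ((n:ℝ) * Real.sqrt ((n:ℝ) - (k:ℝ)))) + D / n := by ring
      _ = c₁ / (Real.sqrt n * Real.sqrt ((n:ℝ) - (k:ℝ))) + D / n := by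
          have hnn : Real.sqrt (n:ℝ) * Real.sqrt (n:ℝ) = (n:ℝ) := Real.mul_self_sqrt hnR.le
          have hst : 0 < Real.sqrt ((n:ℝ) - (k:ℝ)) := Real.sqrt_pos.2 ht
          congr 1
          field_simp
          linear_combination hnn
  -- reindex the sqrt sum
  have hre : ∑ k ∈ Finset.Icc (-(n:ℤ)) ((n:ℤ) - 1), 1/Real.sqrt ((n:ℝ) - (k:ℝ))
      = ∑ j ∈ Finset.range (2*n), 1/Real.sqrt ((j:ℝ) + 1) := by
    apply Finset.sum_bij' (fun (k : ℤ) (_ : k ∈ Finset.Icc (-(n:ℤ)) ((n:ℤ) - 1)) => ((n:ℤ) - 1 - k).toNat)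
      (fun (j : ℕ) (_ : j ∈ Finset.range (2*n)) => (n:ℤ) - 1 - (j:ℤ))
    · intro k hk
      rw [Finset.mem_Icc] at hk
      rw [Finset.mem_range]
      omega
    · intro j hj
      rw [Finset.mem_range] at hj
      rw [Finset.mem_Icc]
      omega
    · intro k hk
      rw [Finset.mem_Icc] at hk
      omega
    · intro j hj
      rw [Finset.mem_range] at hj
      omega
    · intro k hk
      rw [Finset.mem_Icc] at hk
      have h0 : (0:ℤ) ≤ (n:ℤ) - 1 - k := by omega
      have h1 : (((n:ℤ) - 1 - k).toNat : ℤ) = (n:ℤ) - 1 - k := Int.toNat_of_nonneg h0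
      have h2 : ((((n:ℤ) - 1 - k).toNat : ℕ) : ℝ) = (n:ℝ) - 1 - (k:ℝ) := by exact_mod_cast h1
      congr 2
      rw [h2]
      ring
  have hsum : ∑ k ∈ Finset.Icc (-(n:ℤ)) ((n:ℤ) - 1), 1/Real.sqrt ((n:ℝ) - (k:ℝ))
      ≤ 2 * (Real.sqrt 2 * Real.sqrt n) := by
    rw [hre]
    calc ∑ j ∈ Finset.range (2*n), 1/Real.sqrt ((j:ℝ) + 1)
        ≤ 2 * Real.sqrt ((2*n : ℕ) : ℝ) := sqrt_sum_aux (2*n)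
      _ = 2 * (Real.sqrt 2 * Real.sqrt n) := by
          push_cast
          rw [Real.sqrt_mul (by norm_num)]
  have hcard : ((Finset.Icc (-(n:ℤ)) ((n:ℤ) - 1)).card : ℝ) = 2 * n := by
    rw [Int.card_Icc]
    have : ((n:ℤ) - 1 + 1 - (-(n:ℤ))) = ((2*n : ℕ) : ℤ) := by push_cast; ring
    rw [this, Int.toNat_natCast]
    push_cast
    ring
  calc |∑ k ∈ Finset.Icc (-(n:ℤ)) ((n:ℤ) - 1), (1/(n : ℝ)) * F₂ ((k : ℝ)/(n : ℝ))|
      ≤ ∑ k ∈ Finset.Icc (-(n:ℤ)) ((n:ℤ) - 1), |(1/(n : ℝ)) * F₂ ((k : ℝ)/(n : ℝ))| :=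
        Finset.abs_sum_le_sum_abs _ _
    _ ≤ ∑ k ∈ Finset.Icc (-(n:ℤ)) ((n:ℤ) - 1),
          (c₁ / (Real.sqrt n * Real.sqrt ((n:ℝ) - (k:ℝ))) + D / n) := Finset.sum_le_sum hterm
    _ = c₁ / Real.sqrt n * ∑ k ∈ Finset.Icc (-(n:ℤ)) ((n:ℤ) - 1), 1/Real.sqrt ((n:ℝ) - (k:ℝ))
          + ((Finset.Icc (-(n:ℤ)) ((n:ℤ) - 1)).card : ℝ) * (D / n) := by
        rw [Finset.sum_add_distrib, Finset.mul_sum, Finset.sum_const, nsmul_eq_mul]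
        congr 1
        apply Finset.sum_congr rfl
        intro k _
        ring
    _ ≤ c₁ / Real.sqrt n * (2 * (Real.sqrt 2 * Real.sqrt n)) + (2 * (n:ℝ)) * (D / n) := by
        rw [hcard]
        gcongr
    _ = 2 * Real.sqrt 2 * c₁ + 2 * D := by
        field_simp
    _ ≤ 2 * Real.sqrt 2 * c₁ + 2 * (|c₂| * Real.sqrt 2 + C) := by rw [hD]
end

section
/- Let F₂ : [-1, 1) → ℝ be a function that can be represented as F₂(x) = c₁(1-x)^{-1/2} + c₂(1-x)^{1/2} + F̃₂(x), where c₁ > 0, c₂ ∈ ℝ, and F̃₂ is continuously differentiable on [-1, 1]. Let c̄₁ > c₁ and let c̲₁ ∈ ((2/(3√2−2))·c₁, c₁). Then there exists δ ∈ (0, 1) such that for all x ∈ [1−δ, 1): c̲₁(1−x)^{-1/2} ≤ F₂(x) ≤ c̄₁(1−x)^{-1/2} and (1/2)·c̲₁(1−x)^{-3/2} ≤ F₂′(x) ≤ (1/2)·c̄₁(1−x)^{-3/2}. -/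
open MeasureTheory Set

/-- Choice of δ in the proof of Proposition 2: if F₂(x) = c₁(1-x)^{-1/2} + c₂(1-x)^{1/2} + Ft(x)
on [-1,1) with c₁ > 0 and Ft ∈ C¹[-1,1], cmax > c₁ and cmin ∈ (2c₁/(3√2−2), c₁), then there is
δ ∈ (0,1) such that for x ∈ [1−δ, 1):
cmin(1−x)^{-1/2} ≤ F₂(x) ≤ cmax(1−x)^{-1/2} and
(1/2)cmin(1−x)^{-3/2} ≤ F₂′(x) ≤ (1/2)cmax(1−x)^{-3/2}. -/
theorem delta_choice_inv_sqrt
    (F₂ F₂' Ft : ℝ → ℝ) (c₁ c₂ cmax cmin : ℝ) (hc₁ : 0 < c₁)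
    (hFt : ContDiffOn ℝ 1 Ft (Set.Icc (-1 : ℝ) 1))
    (hrep : ∀ x ∈ Set.Ico (-1 : ℝ) 1,
      F₂ x = c₁ * (1 - x) ^ (-(1 : ℝ)/2) + c₂ * (1 - x) ^ ((1 : ℝ)/2) + Ft x)
    (hderiv : ∀ x ∈ Set.Ico (-1 : ℝ) 1, HasDerivWithinAt F₂ (F₂' x) (Set.Ico (-1 : ℝ) 1) x)
    (hcmax : c₁ < cmax)
    (hcmin : cmin ∈ Set.Ioo (2 / (3 * Real.sqrt 2 - 2) * c₁) c₁) :
    ∃ δ ∈ Set.Ioo (0 : ℝ) 1, ∀ x ∈ Set.Ico (1 - δ) (1 : ℝ),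
      cmin * (1 - x) ^ (-(1 : ℝ)/2) ≤ F₂ x ∧
      F₂ x ≤ cmax * (1 - x) ^ (-(1 : ℝ)/2) ∧
      (1/2) * cmin * (1 - x) ^ (-(3 : ℝ)/2) ≤ F₂' x ∧
      F₂' x ≤ (1/2) * cmax * (1 - x) ^ (-(3 : ℝ)/2) := by
  obtain ⟨_, hcmin2⟩ := hcmin
  -- bounds on Ft and its derivative
  obtain ⟨M₀, hM₀⟩ := isCompact_Icc.exists_bound_of_continuousOn hFt.continuousOn
  set Ft' : ℝ → ℝ := derivWithin Ft (Set.Icc (-1 : ℝ) 1) with hFt'def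
  have hFt'c : ContinuousOn Ft' (Set.Icc (-1 : ℝ) 1) :=
    hFt.continuousOn_derivWithin (uniqueDiffOn_Icc (by norm_num)) le_rfl
  obtain ⟨M₁, hM₁⟩ := isCompact_Icc.exists_bound_of_continuousOn hFt'c
  have hM₀0 : 0 ≤ M₀ := le_trans (abs_nonneg _) (hM₀ 0 (by norm_num))
  have hM₁0 : 0 ≤ M₁ := le_trans (abs_nonneg _) (hM₁ 0 (by norm_num))
  set a : ℝ := c₁ - cmin with ha
  set b : ℝ := cmax - c₁ with hb
  set e : ℝ := min a b with he
  have ha0 : 0 < a := by simp [ha]; linarith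
  have hb0 : 0 < b := by simp [hb]; linarith
  have he0 : 0 < e := lt_min ha0 hb0
  have hea : e ≤ a := min_le_left _ _
  have heb : e ≤ b := min_le_right _ _
  set K : ℝ := |c₂| + M₀ + 1 with hK
  set L : ℝ := |c₂|/2 + M₁ + 1 with hL
  have hK1 : 1 ≤ K := by simp [hK]; positivity
  have hL1 : 1 ≤ L := by simp [hL]; positivity
  have hK0 : 0 < K := by linarith
  have hL0 : 0 < L := by linarith
  refine ⟨min (1/2) (min ((e/K)^2) (e/(2*L))), ⟨by positivity, by
    have : min (1/2 : ℝ) (min ((e/K)^2) (e/(2*L))) ≤ 1/2 := min_le_left _ _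
    linarith⟩, ?_⟩
  intro x hx
  set δ : ℝ := min (1/2) (min ((e/K)^2) (e/(2*L))) with hδ
  have hδhalf : δ ≤ 1/2 := min_le_left _ _
  have hδ1 : δ ≤ (e/K)^2 := le_trans (min_le_right _ _) (min_le_left _ _)
  have hδ2 : δ ≤ e/(2*L) := le_trans (min_le_right _ _) (min_le_right _ _)
  obtain ⟨hx1, hx2⟩ := hx
  set t : ℝ := 1 - x with htdef
  have ht0 : 0 < t := by simp [htdef]; linarith
  have htδ : t ≤ δ := by simp [htdef]; linarith
  have hxm : -1 < x := by
    have : (0:ℝ) < 1 - δ := by linarith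
    linarith
  have hxIco : x ∈ Set.Ico (-1:ℝ) 1 := ⟨hxm.le, hx2⟩
  have hxIcc : x ∈ Set.Icc (-1:ℝ) 1 := ⟨hxm.le, hx2.le⟩
  -- sqrt facts
  have hs0 : 0 < Real.sqrt t := Real.sqrt_pos.mpr ht0
  have hs1 : Real.sqrt t ≤ 1 := by
    rw [show (1:ℝ) = Real.sqrt 1 by simp]
    exact Real.sqrt_le_sqrt (by linarith)
  have hsK : Real.sqrt t ≤ e/K := by
    have h1 : Real.sqrt t ≤ Real.sqrt ((e/K)^2) :=
      Real.sqrt_le_sqrt (le_trans htδ hδ1)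
    rwa [Real.sqrt_sq (by positivity)] at h1
  have h2Lt : 2*L*t ≤ e := by
    have := htδ.trans hδ2
    rw [le_div_iff₀ (by positivity)] at this
    linarith [this]
  -- rpow to sqrt conversions
  have e1 : t ^ ((1:ℝ)/2) = Real.sqrt t := (Real.sqrt_eq_rpow t).symm
  have e2 : t ^ (-(1:ℝ)/2) = (Real.sqrt t)⁻¹ := by
    rw [show (-(1:ℝ)/2) = -(1/2) by norm_num, Real.rpow_neg ht0.le, ← Real.sqrt_eq_rpow]
  have e3 : t ^ (-(3:ℝ)/2) = (t * Real.sqrt t)⁻¹ := by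
    rw [show (-(3:ℝ)/2) = -(3/2) by norm_num, Real.rpow_neg ht0.le]
    congr 1
    rw [show ((3:ℝ)/2) = 1 + 1/2 by norm_num, Real.rpow_add ht0, Real.rpow_one,
      ← Real.sqrt_eq_rpow]
  set u : ℝ := (Real.sqrt t)⁻¹ with hu
  set v : ℝ := (t * Real.sqrt t)⁻¹ with hv
  have hu1 : 1 ≤ u := by
    rw [hu, le_inv_comm₀ one_pos hs0]; simpa using hs1
  have hv0 : 0 < v := by positivity
  have huv : u = t * v := by
    rw [hu, hv, mul_inv]
    field_simp
  have hKu : K ≤ a * u := by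
    rw [hu, le_mul_inv_iff₀ hs0]
    calc K * Real.sqrt t ≤ K * (e/K) := by
          exact mul_le_mul_of_nonneg_left hsK hK0.le
      _ = e := by field_simp
      _ ≤ a := hea
  have hKub : K ≤ b * u := by
    rw [hu, le_mul_inv_iff₀ hs0]
    calc K * Real.sqrt t ≤ K * (e/K) := by
          exact mul_le_mul_of_nonneg_left hsK hK0.le
      _ = e := by field_simp
      _ ≤ b := heb
  have hM₀x : |Ft x| ≤ M₀ := by simpa using hM₀ x hxIcc
  have hM₁x : |Ft' x| ≤ M₁ := by simpa using hM₁ x hxIcc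
  have habs1 := abs_nonneg c₂
  have habs2 := neg_abs_le c₂
  have habs3 := le_abs_self c₂
  have hFx : F₂ x = c₁ * u + c₂ * Real.sqrt t + Ft x := by
    rw [hrep x hxIco, ← htdef, e1, e2]
  -- derivative computation
  have hmemN : Set.Ico (-1:ℝ) 1 ∈ nhds x := Ico_mem_nhds hxm hx2
  have hFtd : HasDerivAt Ft (Ft' x) x :=
    ((hFt.differentiableOn one_ne_zero x hxIcc).hasDerivWithinAt).hasDerivAt
      (Icc_mem_nhds hxm hx2)
  have hlin : HasDerivAt (fun y : ℝ => 1 - y) (-1) x := (hasDerivAt_id x).const_sub 1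
  have hp1 : HasDerivAt (fun y : ℝ => (1 - y) ^ (-(1:ℝ)/2))
      ((1/2) * t ^ (-(3:ℝ)/2)) x := by
    have h := (Real.hasDerivAt_rpow_const (p := -(1:ℝ)/2) (Or.inl ht0.ne')).comp x hlin
    refine h.congr_deriv ?_
    rw [show (-(1:ℝ)/2 - 1) = -(3:ℝ)/2 by norm_num]
    ring
  have hp2 : HasDerivAt (fun y : ℝ => (1 - y) ^ ((1:ℝ)/2))
      (-(1/2) * t ^ (-(1:ℝ)/2)) x := by
    have h := (Real.hasDerivAt_rpow_const (p := (1:ℝ)/2) (Or.inl ht0.ne')).comp x hlin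
    refine h.congr_deriv ?_
    rw [show ((1:ℝ)/2 - 1) = -(1:ℝ)/2 by norm_num]
    ring
  have hg : HasDerivAt (fun y => c₁ * (1 - y) ^ (-(1 : ℝ)/2) + c₂ * (1 - y) ^ ((1 : ℝ)/2) + Ft y)
      (c₁ * ((1/2) * t ^ (-(3:ℝ)/2)) + c₂ * (-(1/2) * t ^ (-(1:ℝ)/2)) + Ft' x) x :=
    ((hp1.const_mul c₁).add (hp2.const_mul c₂)).add hFtd
  have hF2d : HasDerivAt F₂ (F₂' x) x := (hderiv x hxIco).hasDerivAt hmemN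
  have hF2d' : HasDerivAt F₂
      (c₁ * ((1/2) * t ^ (-(3:ℝ)/2)) + c₂ * (-(1/2) * t ^ (-(1:ℝ)/2)) + Ft' x) x :=
    hg.congr_of_eventuallyEq (Filter.eventuallyEq_of_mem hmemN (fun y hy => hrep y hy))
  have hF2'val : F₂' x = c₁ * ((1/2) * v) + c₂ * (-(1/2) * u) + Ft' x := by
    rw [hF2d.unique hF2d', e2, e3]
  have hLuv : 2 * L * u ≤ a * v ∧ 2 * L * u ≤ b * v := by
    constructor <;>
    · rw [huv, show 2*L*(t*v) = (2*L*t)*v by ring]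
      exact mul_le_mul_of_nonneg_right (by linarith) hv0.le
  rw [e2, e3, hFx, hF2'val]
  clear hFt hrep hderiv hFt'c hM₀ hM₁ hg hF2d hF2d' hFtd hlin hp1 hp2 hmemN e1 e2 e3 hFx hF2'val
  clear_value u v t δ a b e K L Ft'
  have hFt'lb : -M₁ ≤ Ft' x := neg_le_of_abs_le hM₁x
  have hFt'ub : Ft' x ≤ M₁ := le_of_abs_le hM₁x
  have hFtlb : -M₀ ≤ Ft x := neg_le_of_abs_le hM₀x
  have hFtub : Ft x ≤ M₀ := le_of_abs_le hM₀x
  have hM₁u : M₁ ≤ M₁ * u := le_mul_of_one_le_right hM₁0 hu1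
  have hu0 : (0:ℝ) ≤ u := by positivity
  have hcu1 : c₂ * u ≤ |c₂| * u := mul_le_mul_of_nonneg_right habs3 hu0
  have hcu2 : -|c₂| * u ≤ c₂ * u := mul_le_mul_of_nonneg_right habs2 hu0
  have hcs1 : c₂ * Real.sqrt t ≤ |c₂| := by
    calc c₂ * Real.sqrt t ≤ |c₂| * Real.sqrt t := mul_le_mul_of_nonneg_right habs3 hs0.le
      _ ≤ |c₂| * 1 := mul_le_mul_of_nonneg_left hs1 habs1
      _ = |c₂| := mul_one _
  have hcs2 : -|c₂| ≤ c₂ * Real.sqrt t := by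
    calc -|c₂| = -|c₂| * 1 := (mul_one _).symm
      _ ≤ -|c₂| * Real.sqrt t := mul_le_mul_of_nonpos_left hs1 (neg_nonpos.mpr habs1)
      _ ≤ c₂ * Real.sqrt t := mul_le_mul_of_nonneg_right habs2 hs0.le
  have idA : a * u = c₁ * u - cmin * u := by rw [ha]; ring
  have idB : b * u = cmax * u - c₁ * u := by rw [hb]; ring
  have idA' : a * v = c₁ * v - cmin * v := by rw [ha]; ring
  have idB' : b * v = cmax * v - c₁ * v := by rw [hb]; ring
  have idK : K = |c₂| + M₀ + 1 := hK
  have idL : 2 * L * u = |c₂| * u + 2 * (M₁ * u) + 2 * u := by rw [hL]; ring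
  obtain ⟨hLuv1, hLuv2⟩ := hLuv
  refine ⟨?_, ?_, ?_, ?_⟩
  · linarith only [hKu, idA, idK, hcs2, hFtlb]
  · linarith only [hKub, idB, idK, hcs1, hFtub]
  · linarith only [hLuv1, idA', idL, hcu1, hFt'lb, hM₁u, hu1]
  · linarith only [hLuv2, idB', idL, hcu2, hFt'ub, hM₁u, hu1]
end
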